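/- arXiv:2110.08738 — 4 statements merged into one kernel-verified Lean document; each statement's English description precedes it below -/
import Mathlib

section
/- g(F_n) = n̄ for every integer n ≥ 0, and g(C_n) = n̄ ⊕ 1 for every integer n ≥ 1. -/
/-- A decoration of a graph `G`: a set of arrows drawn on edges of `G`,
at most one per edge. -/
def IsDecoration {V : Type*} (G : SimpleGraph V) (X : Finset (V × V)) : Prop :=
  (∀ p ∈ X, G.Adj p.1 p.2) ∧ (∀ p ∈ X, Prod.swap p ∉ X)

/-- `w` is a sink of the decoration `X`. -/
def IsSink {V : Type*} (G : SimpleGraph V) (X : Finset (V × V)) (w : V) : Prop :=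
  ∀ v, G.Adj v w → (v, w) ∈ X

/-- `v` is a source of the decoration `X`. -/
def IsSource {V : Type*} (G : SimpleGraph V) (X : Finset (V × V)) (v : V) : Prop :=
  ∀ w, G.Adj v w → (v, w) ∈ X

/-- A leaf is a vertex of degree one. -/
def IsLeaf {V : Type*} (G : SimpleGraph V) (v : V) : Prop :=
  ∃! w, G.Adj v w

/-- A state: a decoration with no sinks or sources at internal (non-leaf) vertices. -/
def IsState {V : Type*} (G : SimpleGraph V) (X : Finset (V × V)) : Prop :=
  IsDecoration G X ∧ ∀ v, ¬ IsLeaf G v → ¬ IsSink G X v ∧ ¬ IsSource G X v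

/-- `X'` is a follower of the state `X`: a state obtained from `X` by adding one arrow. -/
def Follower {V : Type*} [DecidableEq V] (G : SimpleGraph V)
    (X X' : Finset (V × V)) : Prop :=
  IsState G X ∧ IsState G X' ∧ ∃ p, p ∉ X ∧ X' = insert p X

/-- The Sprague–Grundy value of a state: the minimum excludant of the Grundy values
of its followers. -/
noncomputable def grundy {V : Type*} [Fintype V] [DecidableEq V] (G : SimpleGraph V)
    (X : Finset (V × V)) : ℕ :=
  sInf {n : ℕ | ∀ X' : Finset (V × V), Follower G X X' → grundy G X' ≠ n}
termination_by Fintype.card (V × V) - X.card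
decreasing_by
  rename_i X' hX'
  obtain ⟨-, -, p, hp, rfl⟩ := hX'
  have h1 : (insert p X).card = X.card + 1 := Finset.card_insert_of_notMem hp
  have h2 : (insert p X).card ≤ Fintype.card (V × V) := Finset.card_le_univ _
  omega

/-- The path graph `P_n` with vertex set `{0, 1, …, n-1}` and edges between
consecutive vertices. -/
def PathG (n : ℕ) : SimpleGraph (Fin n) :=
  SimpleGraph.fromRel (fun i j => i.val + 1 = j.val)

/-- The `n`-flow state `F_n` of the path graph with vertices `-1, 0, …, n, n+1`
(re-indexed here as `0, 1, …, n+2`): the two arrows `(-1,0)` and `(n,n+1)` point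
in the same direction along the path, leaving `n` unmarked edges between them. -/
def flowState (n : ℕ) : Finset (Fin (n + 3) × Fin (n + 3)) :=
  {(⟨0, by omega⟩, ⟨1, by omega⟩), (⟨n + 1, by omega⟩, ⟨n + 2, by omega⟩)}

/-- The `n`-crash state `C_n` of the path graph with vertices `-1, 0, …, n, n+1`
(re-indexed here as `0, 1, …, n+2`): the two arrows `(-1,0)` and `(n+1,n)` point
toward each other, leaving `n` unmarked edges between them. -/
def crashState (n : ℕ) : Finset (Fin (n + 3) × Fin (n + 3)) :=
  {(⟨0, by omega⟩, ⟨1, by omega⟩), (⟨n + 2, by omega⟩, ⟨n + 1, by omega⟩)}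

/-- The `n`-twig state `T_n` of the path graph with vertices `0, 1, …, n+1`:
a single arrow `(n, n+1)` on the last edge, pointing outward. -/
def twigState (n : ℕ) : Finset (Fin (n + 2) × Fin (n + 2)) :=
  {(⟨n, by omega⟩, ⟨n + 1, by omega⟩)}

namespace GrundyAux

open Finset

/-- The direction of the arrow on edge `i` (between vertices `i` and `i+1`). -/
def dir {n : ℕ} (X : Finset (Fin (n+3) × Fin (n+3))) (i : ℕ) : Option Bool :=
  if h : i < n + 2 then
    if (⟨i, by omega⟩, ⟨i+1, by omega⟩) ∈ X then some true
    else if (⟨i+1, by omega⟩, ⟨i, by omega⟩) ∈ X then some false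
    else none
  else none

lemma dir_eq {n : ℕ} (X : Finset (Fin (n+3) × Fin (n+3))) (i : ℕ) (hi : i < n+2) :
    dir X i =
      if (⟨i, by omega⟩, ⟨i+1, by omega⟩) ∈ X then some true
      else if (⟨i+1, by omega⟩, ⟨i, by omega⟩) ∈ X then some false
      else none := by
  unfold dir; rw [dif_pos hi]

lemma dir_eq_none_of_ge {n : ℕ} (X : Finset (Fin (n+3) × Fin (n+3))) (i : ℕ)
    (hi : ¬ i < n+2) : dir X i = none := by
  unfold dir; rw [dif_neg hi]

lemma dir_true {n : ℕ} {X : Finset (Fin (n+3) × Fin (n+3))} {i : ℕ} (hi : i < n+2)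
    (hm : (⟨i, by omega⟩, ⟨i+1, by omega⟩) ∈ X) : dir X i = some true := by
  rw [dir_eq X i hi, if_pos hm]

lemma dir_false {n : ℕ} {X : Finset (Fin (n+3) × Fin (n+3))} {i : ℕ} (hi : i < n+2)
    (hm1 : (⟨i, by omega⟩, ⟨i+1, by omega⟩) ∉ X)
    (hm2 : (⟨i+1, by omega⟩, ⟨i, by omega⟩) ∈ X) : dir X i = some false := by
  rw [dir_eq X i hi, if_neg hm1, if_pos hm2]

lemma dir_none {n : ℕ} {X : Finset (Fin (n+3) × (Fin (n+3)))} {i : ℕ} (hi : i < n+2)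
    (hm1 : (⟨i, by omega⟩, ⟨i+1, by omega⟩) ∉ X)
    (hm2 : (⟨i+1, by omega⟩, ⟨i, by omega⟩) ∉ X) : dir X i = none := by
  rw [dir_eq X i hi, if_neg hm1, if_neg hm2]

lemma dir_elim {n : ℕ} {X : Finset (Fin (n+3) × Fin (n+3))} {i : ℕ} {b : Bool}
    (h : dir X i = some b) :
    ∃ hi : i < n+2,
      ((⟨i, by omega⟩, ⟨i+1, by omega⟩) ∈ X ∧ b = true) ∨
      ((⟨i, by omega⟩, ⟨i+1, by omega⟩) ∉ X ∧
        (⟨i+1, by omega⟩, ⟨i, by omega⟩) ∈ X ∧ b = false) := by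
  unfold dir at h
  split at h
  · next hi =>
    refine ⟨hi, ?_⟩
    split at h
    · next hm => exact Or.inl ⟨hm, by simpa using h.symm⟩
    · next hm =>
      split at h
      · next hm2 => exact Or.inr ⟨hm, hm2, by simpa using h.symm⟩
      · exact absurd h (by simp)
  · exact absurd h (by simp)

lemma dir_none_elim {n : ℕ} {X : Finset (Fin (n+3) × Fin (n+3))} {i : ℕ}
    (h : dir X i = none) (hi : i < n+2) :
    (⟨i, by omega⟩, ⟨i+1, by omega⟩) ∉ X ∧ (⟨i+1, by omega⟩, ⟨i, by omega⟩) ∉ X := by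
  rw [dir_eq X i hi] at h
  by_cases hm1 : ((⟨i, by omega⟩ : Fin (n+3)), (⟨i+1, by omega⟩ : Fin (n+3))) ∈ X
  · rw [if_pos hm1] at h; simp at h
  · rw [if_neg hm1] at h
    by_cases hm2 : ((⟨i+1, by omega⟩ : Fin (n+3)), (⟨i, by omega⟩ : Fin (n+3))) ∈ X
    · rw [if_pos hm2] at h; simp at h
    · exact ⟨hm1, hm2⟩

lemma pathG_adj {N : ℕ} {a b : Fin N} :
    (PathG N).Adj a b ↔ (a.val + 1 = b.val ∨ b.val + 1 = a.val) := by
  rw [PathG, SimpleGraph.fromRel_adj]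
  constructor
  · rintro ⟨-, h⟩; exact h
  · intro h
    refine ⟨?_, h⟩
    rintro rfl
    rcases h with h | h <;> omega

lemma isLeaf_zero {n : ℕ} : IsLeaf (PathG (n+3)) ⟨0, by omega⟩ := by
  refine ⟨⟨1, by omega⟩, pathG_adj.mpr (Or.inl rfl), ?_⟩
  intro w hw
  rcases pathG_adj.mp hw with h | h
  · exact Fin.ext (by simp only [Fin.val_mk] at h ⊢; omega)
  · exact absurd h (by simp only [Fin.val_mk]; omega)

lemma isLeaf_last {n : ℕ} : IsLeaf (PathG (n+3)) ⟨n+2, by omega⟩ := by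
  refine ⟨⟨n+1, by omega⟩, pathG_adj.mpr (Or.inr rfl), ?_⟩
  intro w hw
  rcases pathG_adj.mp hw with h | h
  · exact absurd h (by have := w.isLt; simp only [Fin.val_mk]; omega)
  · exact Fin.ext (by simp only [Fin.val_mk] at h ⊢; omega)

lemma not_isLeaf {n : ℕ} {v : Fin (n+3)} (h1 : 0 < v.val) (h2 : v.val < n+2) :
    ¬ IsLeaf (PathG (n+3)) v := by
  rintro ⟨w, hw, hu⟩
  have ha : (⟨v.val - 1, by omega⟩ : Fin (n+3)) = w :=
    hu _ (pathG_adj.mpr (Or.inr (by simp only [Fin.val_mk]; omega)))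
  have hb : (⟨v.val + 1, by omega⟩ : Fin (n+3)) = w :=
    hu _ (pathG_adj.mpr (Or.inl rfl))
  have := ha.trans hb.symm
  have := congrArg Fin.val this
  simp only [Fin.val_mk] at this
  omega

/-- Local consistency of adjacent marked edges in a state. -/
lemma state_local {n : ℕ} {X : Finset (Fin (n+3) × Fin (n+3))}
    (hX : IsState (PathG (n+3)) X) {i : ℕ} (hi : i ≤ n) {a b : Bool}
    (h1 : dir X i = some a) (h2 : dir X (i+1) = some b) : a = b := by
  by_contra hne
  obtain ⟨hi1, hc1⟩ := dir_elim h1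
  obtain ⟨hi2, hc2⟩ := dir_elim h2
  have hv := hX.2 ⟨i+1, by omega⟩
    (not_isLeaf (by simp only [Fin.val_mk]; omega) (by simp only [Fin.val_mk]; omega))
  rcases hc1 with ⟨hm1, rfl⟩ | ⟨-, hm1, rfl⟩
  · -- a = true, so b = false : sink at i+1
    rcases hc2 with ⟨hm2, rfl⟩ | ⟨-, hm2, rfl⟩
    · exact hne rfl
    · apply hv.1
      intro w hw
      rcases pathG_adj.mp hw with h | h
      · have : w = (⟨i, by omega⟩ : Fin (n+3)) := Fin.ext (by simp only [Fin.val_mk] at h ⊢; omega)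
        rw [this]; exact hm1
      · have : w = (⟨i+1+1, by omega⟩ : Fin (n+3)) := Fin.ext (by simp only [Fin.val_mk] at h ⊢; omega)
        rw [this]; exact hm2
  · -- a = false, so b = true : source at i+1
    rcases hc2 with ⟨hm2, rfl⟩ | ⟨-, hm2, rfl⟩
    · apply hv.2
      intro w hw
      rcases pathG_adj.mp hw with h | h
      · have : w = (⟨i+1+1, by omega⟩ : Fin (n+3)) := Fin.ext (by simp only [Fin.val_mk] at h ⊢; omega)
        rw [this]; exact hm2
      · have : w = (⟨i, by omega⟩ : Fin (n+3)) := Fin.ext (by simp only [Fin.val_mk] at h ⊢; omega)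
        rw [this]; exact hm1
    · exact hne rfl

lemma state_of_local {n : ℕ} {X : Finset (Fin (n+3) × Fin (n+3))}
    (hdec : IsDecoration (PathG (n+3)) X)
    (hloc : ∀ i, i ≤ n → ∀ a b : Bool, dir X i = some a → dir X (i+1) = some b → a = b) :
    IsState (PathG (n+3)) X := by
  refine ⟨hdec, ?_⟩
  intro v hv
  by_cases h0 : v.val = 0
  · exact absurd (by rw [show v = (⟨0, by omega⟩ : Fin (n+3)) from Fin.ext h0]; exact isLeaf_zero) hv
  by_cases hL : v.val = n+2
  · exact absurd (by rw [show v = (⟨n+2, by omega⟩ : Fin (n+3)) from Fin.ext hL]; exact isLeaf_last) hv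
  have hv1 : 1 ≤ v.val := by omega
  have hv2 : v.val ≤ n+1 := by omega
  set i := v.val - 1 with hidef
  have hvi : v = (⟨i+1, by omega⟩ : Fin (n+3)) := Fin.ext (by simp only [Fin.val_mk]; omega)
  have hin : i ≤ n := by omega
  constructor
  · intro hsink
    have m1 : ((⟨i, by omega⟩ : Fin (n+3)), (⟨i+1, by omega⟩ : Fin (n+3))) ∈ X := by
      rw [hvi] at hsink
      exact hsink _ (pathG_adj.mpr (Or.inl rfl))
    have m2 : ((⟨i+1+1, by omega⟩ : Fin (n+3)), (⟨i+1, by omega⟩ : Fin (n+3))) ∈ X := by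
      rw [hvi] at hsink
      exact hsink _ (pathG_adj.mpr (Or.inr rfl))
    have d1 : dir X i = some true := dir_true (by omega) m1
    have d2 : dir X (i+1) = some false := by
      apply dir_false (by omega) ?_ m2
      intro hm
      exact hdec.2 _ m2 hm
    exact absurd (hloc i hin true false d1 d2) (by simp)
  · intro hsource
    have m1 : ((⟨i+1, by omega⟩ : Fin (n+3)), (⟨i, by omega⟩ : Fin (n+3))) ∈ X := by
      rw [hvi] at hsource
      exact hsource _ (pathG_adj.mpr (Or.inr rfl))
    have m2 : ((⟨i+1, by omega⟩ : Fin (n+3)), (⟨i+1+1, by omega⟩ : Fin (n+3))) ∈ X := by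
      rw [hvi] at hsource
      exact hsource _ (pathG_adj.mpr (Or.inl (by simp only [Fin.val_mk])))
    have d1 : dir X i = some false := by
      apply dir_false (by omega) ?_ m1
      intro hm
      exact hdec.2 _ hm m1
    have d2 : dir X (i+1) = some true := dir_true (by omega) m2
    exact absurd (hloc i hin false true d1 d2) (by simp)

lemma dir_insert_ne {n : ℕ} {X : Finset (Fin (n+3) × Fin (n+3))}
    {p : Fin (n+3) × Fin (n+3)} {j : ℕ}
    (h1 : ¬(p.1.val = j ∧ p.2.val = j+1)) (h2 : ¬(p.1.val = j+1 ∧ p.2.val = j)) :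
    dir (insert p X) j = dir X j := by
  by_cases hj : j < n+2
  · have e1 : (((⟨j, by omega⟩ : Fin (n+3)), (⟨j+1, by omega⟩ : Fin (n+3))) ∈ insert p X) =
        (((⟨j, by omega⟩ : Fin (n+3)), (⟨j+1, by omega⟩ : Fin (n+3))) ∈ X) := by
      apply propext
      rw [Finset.mem_insert]
      refine or_iff_right ?_
      intro e
      exact h1 ⟨by rw [← e], by rw [← e]⟩
    have e2 : (((⟨j+1, by omega⟩ : Fin (n+3)), (⟨j, by omega⟩ : Fin (n+3))) ∈ insert p X) =
        (((⟨j+1, by omega⟩ : Fin (n+3)), (⟨j, by omega⟩ : Fin (n+3))) ∈ X) := by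
      apply propext
      rw [Finset.mem_insert]
      refine or_iff_right ?_
      intro e
      exact h2 ⟨by rw [← e], by rw [← e]⟩
    rw [dir_eq _ _ hj, dir_eq _ _ hj]
    simp only [e1, e2]
  · rw [dir_eq_none_of_ge _ _ hj, dir_eq_none_of_ge _ _ hj]

end GrundyAux
namespace GrundyAux

open Finset

def umk {n : ℕ} (X : Finset (Fin (n+3) × Fin (n+3))) : ℕ :=
  ((range (n+2)).filter (fun i => dir X i = none)).card

lemma follower_spec {n : ℕ} {X X' : Finset (Fin (n+3) × Fin (n+3))}
    (h : Follower (PathG (n+3)) X X') :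
    IsState (PathG (n+3)) X' ∧
      ∃ i b, i < n+2 ∧ dir X i = none ∧ dir X' i = some b ∧
        ∀ j, j ≠ i → dir X' j = dir X j := by
  obtain ⟨hX, hX', p, hp, rfl⟩ := h
  refine ⟨hX', ?_⟩
  obtain ⟨a, c⟩ := p
  have hmem : (a, c) ∈ insert (a, c) X := mem_insert_self _ _
  have hadj : (PathG (n+3)).Adj a c := hX'.1.1 (a, c) hmem
  have hswap : (c, a) ∉ insert (a, c) X := hX'.1.2 (a, c) hmem
  rcases pathG_adj.mp hadj with hc | hc
  · -- arrow points right; edge i = a.val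
    refine ⟨a.val, true, by have := c.isLt; omega, ?_, ?_, ?_⟩
    · apply dir_none (by have := c.isLt; omega)
      · have e : ((⟨a.val, by omega⟩ : Fin (n+3)), (⟨a.val+1, by omega⟩ : Fin (n+3))) = (a, c) := by
          refine Prod.ext (Fin.ext rfl) (Fin.ext ?_)
          simp only [Fin.val_mk]; omega
        rw [e]; exact hp
      · have e : ((⟨a.val+1, by omega⟩ : Fin (n+3)), (⟨a.val, by omega⟩ : Fin (n+3))) = (c, a) := by
          refine Prod.ext (Fin.ext ?_) (Fin.ext rfl)
          simp only [Fin.val_mk]; omega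
        rw [e]
        intro hm
        exact hswap (mem_insert_of_mem hm)
    · apply dir_true (by have := c.isLt; omega)
      have e : ((⟨a.val, by omega⟩ : Fin (n+3)), (⟨a.val+1, by omega⟩ : Fin (n+3))) = (a, c) := by
        refine Prod.ext (Fin.ext rfl) (Fin.ext ?_)
        simp only [Fin.val_mk]; omega
      rw [e]; exact hmem
    · intro j hj
      apply dir_insert_ne
      · simp only []
        rintro ⟨h1, -⟩
        exact hj h1.symm
      · simp only []
        rintro ⟨h1, h2⟩
        omega
  · -- arrow points left; edge i = c.val
    refine ⟨c.val, false, by have := a.isLt; omega, ?_, ?_, ?_⟩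
    · apply dir_none (by have := a.isLt; omega)
      · have e : ((⟨c.val, by omega⟩ : Fin (n+3)), (⟨c.val+1, by omega⟩ : Fin (n+3))) = (c, a) := by
          refine Prod.ext (Fin.ext rfl) (Fin.ext ?_)
          simp only [Fin.val_mk]; omega
        rw [e]
        intro hm
        exact hswap (mem_insert_of_mem hm)
      · have e : ((⟨c.val+1, by omega⟩ : Fin (n+3)), (⟨c.val, by omega⟩ : Fin (n+3))) = (a, c) := by
          refine Prod.ext (Fin.ext ?_) (Fin.ext rfl)
          simp only [Fin.val_mk]; omega
        rw [e]; exact hp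
    · apply dir_false (by have := a.isLt; omega)
      · have e : ((⟨c.val, by omega⟩ : Fin (n+3)), (⟨c.val+1, by omega⟩ : Fin (n+3))) = (c, a) := by
          refine Prod.ext (Fin.ext rfl) (Fin.ext ?_)
          simp only [Fin.val_mk]; omega
        rw [e]; exact hswap
      · have e : ((⟨c.val+1, by omega⟩ : Fin (n+3)), (⟨c.val, by omega⟩ : Fin (n+3))) = (a, c) := by
          refine Prod.ext (Fin.ext ?_) (Fin.ext rfl)
          simp only [Fin.val_mk]; omega
        rw [e]; exact hmem
    · intro j hj
      apply dir_insert_ne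
      · simp only []
        rintro ⟨h1, h2⟩
        omega
      · simp only []
        rintro ⟨-, h2⟩
        exact hj h2.symm

lemma umk_spec {n : ℕ} {X X' : Finset (Fin (n+3) × Fin (n+3))} {i : ℕ} {b : Bool}
    (hi : i < n+2) (hnone : dir X i = none) (hb : dir X' i = some b)
    (hrest : ∀ j, j ≠ i → dir X' j = dir X j) :
    umk X' = umk X - 1 ∧ 1 ≤ umk X := by
  have hmem : i ∈ (range (n+2)).filter (fun j => dir X j = none) :=
    mem_filter.mpr ⟨mem_range.mpr hi, hnone⟩
  have hset : (range (n+2)).filter (fun j => dir X' j = none) =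
      ((range (n+2)).filter (fun j => dir X j = none)).erase i := by
    ext j
    simp only [mem_filter, mem_erase, mem_range]
    constructor
    · rintro ⟨hj, hd⟩
      have hne : j ≠ i := by rintro rfl; rw [hb] at hd; simp at hd
      refine ⟨hne, hj, ?_⟩
      rw [← hrest j hne]; exact hd
    · rintro ⟨hne, hj, hd⟩
      exact ⟨hj, (hrest j hne).trans hd⟩
  constructor
  · unfold umk; rw [hset, card_erase_of_mem hmem]
  · unfold umk
    exact card_pos.mpr ⟨i, hmem⟩

lemma insert_state {n : ℕ} {X : Finset (Fin (n+3) × Fin (n+3))}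
    (hX : IsState (PathG (n+3)) X) {i : ℕ} (hi : i < n+2) {p : Fin (n+3) × Fin (n+3)}
    {b : Bool}
    (hdirp : dir (insert p X) i = some b)
    (hdirne : ∀ j, j ≠ i → dir (insert p X) j = dir X j)
    (hadj : (PathG (n+3)).Adj p.1 p.2) (hpX : p ∉ X)
    (hswap : Prod.swap p ∉ insert p X)
    (hl : i = 0 ∨ ∀ a, dir X (i-1) = some a → a = b)
    (hr : i = n+1 ∨ ∀ a, dir X (i+1) = some a → a = b) :
    Follower (PathG (n+3)) X (insert p X) := by
  refine ⟨hX, ?_, p, hpX, rfl⟩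
  apply state_of_local
  · constructor
    · intro q hq
      rcases mem_insert.mp hq with rfl | hq'
      · exact hadj
      · exact hX.1.1 q hq'
    · intro q hq
      rcases mem_insert.mp hq with rfl | hq'
      · exact hswap
      · intro hmem
        rcases mem_insert.mp hmem with he | he
        · have : q = Prod.swap p := by rw [← he, Prod.swap_swap]
          subst this
          exact hswap (mem_insert_of_mem hq')
        · exact hX.1.2 q hq' he
  · intro j hj a cc d1 d2
    by_cases hji : j = i
    · subst hji
      have ha : a = b := by
        rw [hdirp] at d1
        exact (Option.some.inj d1).symm
      have hd2' : dir X (j+1) = some cc := by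
        rw [← hdirne (j+1) (by omega)]; exact d2
      rcases hr with hr' | hr'
      · omega
      · rw [ha, (hr' cc hd2')]
    · by_cases hji1 : j + 1 = i
      · have hc : cc = b := by
          rw [hji1, hdirp] at d2
          exact (Option.some.inj d2).symm
        have hd1' : dir X j = some a := by
          rw [← hdirne j hji]; exact d1
        rcases hl with hl' | hl'
        · omega
        · have : i - 1 = j := by omega
          rw [this] at hl'
          rw [hc, hl' a hd1']
      · have hd1' : dir X j = some a := by rw [← hdirne j hji]; exact d1
        have hd2' : dir X (j+1) = some cc := by rw [← hdirne (j+1) hji1]; exact d2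
        exact state_local hX hj hd1' hd2'

lemma exists_follower {n : ℕ} {X : Finset (Fin (n+3) × Fin (n+3))}
    (hX : IsState (PathG (n+3)) X) {i : ℕ} (hi : i < n+2) (hnone : dir X i = none)
    (b : Bool)
    (hl : i = 0 ∨ ∀ a, dir X (i-1) = some a → a = b)
    (hr : i = n+1 ∨ ∀ a, dir X (i+1) = some a → a = b) :
    ∃ X', Follower (PathG (n+3)) X X' := by
  obtain ⟨hm1, hm2⟩ := dir_none_elim hnone hi
  cases b with
  | true =>
    refine ⟨insert ((⟨i, by omega⟩ : Fin (n+3)), (⟨i+1, by omega⟩ : Fin (n+3))) X, ?_⟩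
    apply insert_state hX hi (b := true) ?_ ?_ ?_ hm1 ?_ hl hr
    · exact dir_true hi (mem_insert_self _ _)
    · intro j hj
      apply dir_insert_ne
      · simp only [Fin.val_mk]
        rintro ⟨h1, -⟩; exact hj h1.symm
      · simp only [Fin.val_mk]
        rintro ⟨h1, h2⟩; omega
    · exact pathG_adj.mpr (Or.inl rfl)
    · rw [Prod.swap_prod_mk]
      intro hmem
      rcases mem_insert.mp hmem with he | he
      · simp only [Prod.mk.injEq, Fin.mk.injEq] at he; omega
      · exact hm2 he
  | false =>
    refine ⟨insert ((⟨i+1, by omega⟩ : Fin (n+3)), (⟨i, by omega⟩ : Fin (n+3))) X, ?_⟩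
    apply insert_state hX hi (b := false) ?_ ?_ ?_ hm2 ?_ hl hr
    · apply dir_false hi
      · intro hmem
        rcases mem_insert.mp hmem with he | he
        · simp only [Prod.mk.injEq, Fin.mk.injEq] at he; omega
        · exact hm1 he
      · exact mem_insert_self _ _
    · intro j hj
      apply dir_insert_ne
      · simp only [Fin.val_mk]
        rintro ⟨h1, h2⟩; omega
      · simp only [Fin.val_mk]
        rintro ⟨-, h2⟩; exact hj h2.symm
    · exact pathG_adj.mpr (Or.inr rfl)
    · rw [Prod.swap_prod_mk]
      intro hmem
      rcases mem_insert.mp hmem with he | he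
      · simp only [Prod.mk.injEq, Fin.mk.injEq] at he; omega
      · exact hm1 he

end GrundyAux
namespace GrundyAux

open Finset

lemma chain {n : ℕ} {X : Finset (Fin (n+3) × Fin (n+3))} (hX : IsState (PathG (n+3)) X)
    (hblocked : ∀ i, 0 < i → i ≤ n → dir X i = none →
      ∃ a, dir X (i-1) = some a ∧ dir X (i+1) = some (!a))
    {bL : Bool} (hL : dir X (n+1) = some bL) :
    ∀ k j b, j + k = n+1 → dir X j = some b →
      (((Ico (j+1) (n+2)).filter (fun i => dir X i = none)).card) % 2 =
        (if b = bL then 0 else 1) := by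
  intro k
  induction k using Nat.strong_induction_on with
  | _ k IH =>
  intro j b hjk hj
  rcases Nat.eq_zero_or_pos k with rfl | hk
  · have hj' : j = n+1 := by omega
    subst hj'
    have hb : b = bL := Option.some.inj (hj.symm.trans hL)
    have he : Ico (n+1+1) (n+2) = (∅ : Finset ℕ) := Ico_eq_empty (by omega)
    rw [he, hb]
    simp
  · have hjn : j < n+1 := by omega
    cases hnext : dir X (j+1) with
    | some c =>
      have hbc : b = c := state_local hX (by omega) hj hnext
      have hset : (Ico (j+1) (n+2)).filter (fun i => dir X i = none) =
          (Ico (j+1+1) (n+2)).filter (fun i => dir X i = none) := by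
        ext x
        simp only [mem_filter, mem_Ico]
        constructor
        · rintro ⟨⟨hx1, hx2⟩, hxd⟩
          by_cases hx : x = j+1
          · subst hx; rw [hnext] at hxd; simp at hxd
          · exact ⟨⟨by omega, hx2⟩, hxd⟩
        · rintro ⟨⟨hx1, hx2⟩, hxd⟩
          exact ⟨⟨by omega, hx2⟩, hxd⟩
      rw [hset, hbc]
      exact IH (k-1) (by omega) (j+1) c (by omega) hnext
    | none =>
      have hj1n : j+1 ≤ n := by
        by_contra hcon
        have he : j+1 = n+1 := by omega
        rw [he, hL] at hnext
        simp at hnext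
      obtain ⟨a, ha1, ha2⟩ := hblocked (j+1) (by omega) hj1n hnext
      have hj11 : j + 1 - 1 = j := by omega
      rw [hj11] at ha1
      have hab : a = b := Option.some.inj (ha1.symm.trans hj)
      subst hab
      have hk2 : 2 ≤ k := by omega
      have hIH := IH (k-2) (by omega) (j+1+1) (!a) (by omega) ha2
      have hnm : j+1 ∉ (Ico (j+1+1+1) (n+2)).filter (fun i => dir X i = none) := by
        intro hmem
        have := (mem_filter.mp hmem).1
        rw [mem_Ico] at this
        omega
      have hset : (Ico (j+1) (n+2)).filter (fun i => dir X i = none) =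
          insert (j+1) ((Ico (j+1+1+1) (n+2)).filter (fun i => dir X i = none)) := by
        ext x
        simp only [mem_filter, mem_Ico, mem_insert]
        constructor
        · rintro ⟨⟨hx1, hx2⟩, hxd⟩
          by_cases hx : x = j+1
          · exact Or.inl hx
          · right
            refine ⟨⟨?_, hx2⟩, hxd⟩
            by_cases hx2' : x = j+1+1
            · subst hx2'; rw [ha2] at hxd; simp at hxd
            · omega
        · rintro (rfl | ⟨⟨hx1, hx2⟩, hxd⟩)
          · exact ⟨⟨by omega, by omega⟩, hnext⟩
          · exact ⟨⟨by omega, hx2⟩, hxd⟩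
      rw [hset, card_insert_of_notMem hnm]
      have h1 : ((!a) = bL) = ¬(a = bL) := by cases a <;> cases bL <;> simp
      simp only [h1] at hIH
      by_cases hab : a = bL
      · rw [if_pos hab]
        rw [if_neg (not_not_intro hab)] at hIH
        omega
      · rw [if_neg hab]
        rw [if_pos hab] at hIH
        omega

lemma stuck_parity {n : ℕ} {X : Finset (Fin (n+3) × Fin (n+3))}
    (hX : IsState (PathG (n+3)) X)
    (hno : ∀ X', ¬ Follower (PathG (n+3)) X X') {b0 bL : Bool}
    (h0 : dir X 0 = some b0) (hL : dir X (n+1) = some bL) :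
    umk X % 2 = if b0 = bL then 0 else 1 := by
  have hblocked : ∀ i, 0 < i → i ≤ n → dir X i = none →
      ∃ a, dir X (i-1) = some a ∧ dir X (i+1) = some (!a) := by
    intro i hi0 hin hnone
    cases hprev : dir X (i-1) with
    | none =>
      exfalso
      have hr : ∀ b : Bool, ¬(i = n+1 ∨ ∀ a, dir X (i+1) = some a → a = b) := by
        intro b hrb
        obtain ⟨X', hF⟩ := exists_follower hX (by omega) hnone b
          (Or.inr (fun a ha => by rw [hprev] at ha; cases ha)) hrb
        exact hno X' hF
      have h1 := hr true
      have h2 := hr false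
      push_neg at h1 h2
      obtain ⟨-, a1, ha1, hne1⟩ := h1
      obtain ⟨-, a2, ha2, hne2⟩ := h2
      have : a1 = a2 := Option.some.inj (ha1.symm.trans ha2)
      subst this
      cases a1
      · exact hne2 rfl
      · exact hne1 rfl
    | some a =>
      refine ⟨a, rfl, ?_⟩
      have hra : ¬(i = n+1 ∨ ∀ c, dir X (i+1) = some c → c = a) := by
        intro hrb
        obtain ⟨X', hF⟩ := exists_follower hX (by omega) hnone a
          (Or.inr (fun c hc => (Option.some.inj (hprev.symm.trans hc)).symm)) hrb
        exact hno X' hF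
      push_neg at hra
      obtain ⟨-, c, hc, hca⟩ := hra
      have : c = !a := by cases a <;> cases c <;> simp_all
      rw [this] at hc
      exact hc
  have hset : (range (n+2)).filter (fun i => dir X i = none) =
      (Ico (0+1) (n+2)).filter (fun i => dir X i = none) := by
    rw [range_eq_Ico]
    ext x
    simp only [mem_filter, mem_Ico]
    constructor
    · rintro ⟨⟨-, hx2⟩, hxd⟩
      by_cases hx : x = 0
      · subst hx; rw [h0] at hxd; simp at hxd
      · exact ⟨⟨by omega, hx2⟩, hxd⟩
    · rintro ⟨⟨-, hx2⟩, hxd⟩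
      exact ⟨⟨by omega, hx2⟩, hxd⟩
  unfold umk
  rw [hset]
  exact chain hX hblocked hL (n+1) 0 b0 (by omega) h0

lemma sInf_eq_one {A : Set ℕ} (h1 : 1 ∈ A) (h0 : 0 ∉ A) : sInf A = 1 := by
  refine le_antisymm (Nat.sInf_le h1) ?_
  rw [Nat.one_le_iff_ne_zero]
  intro h00
  rcases Nat.sInf_eq_zero.mp h00 with hmem | hemp
  · exact h0 hmem
  · rw [hemp] at h1
    exact h1

lemma main {n : ℕ} : ∀ U (X : Finset (Fin (n+3) × Fin (n+3))),
    IsState (PathG (n+3)) X → umk X = U → ∀ b0 bL : Bool,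
    dir X 0 = some b0 → dir X (n+1) = some bL →
    grundy (PathG (n+3)) X = (U + (if b0 = bL then 0 else 1)) % 2 := by
  intro U
  induction U using Nat.strong_induction_on with
  | _ U IH =>
  intro X hX hU b0 bL h0 hL
  set f : ℕ := if b0 = bL then 0 else 1 with hf
  have hf01 : f = 0 ∨ f = 1 := by rw [hf]; split <;> simp
  have claimA : ∀ X', Follower (PathG (n+3)) X X' →
      1 ≤ U ∧ grundy (PathG (n+3)) X' = (U - 1 + f) % 2 := by
    intro X' hF
    obtain ⟨hX', i, b, hi, hnone, hb, hrest⟩ := follower_spec hF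
    obtain ⟨hU', hU1⟩ := umk_spec hi hnone hb hrest
    have hi0 : i ≠ 0 := by rintro rfl; rw [h0] at hnone; simp at hnone
    have hiL : i ≠ n+1 := by rintro rfl; rw [hL] at hnone; simp at hnone
    have h0' : dir X' 0 = some b0 := by rw [hrest 0 (by omega)]; exact h0
    have hL' : dir X' (n+1) = some bL := by rw [hrest (n+1) (by omega)]; exact hL
    refine ⟨by omega, ?_⟩
    exact IH (U-1) (by omega) X' hX' (by omega) b0 bL h0' hL'
  rw [grundy]
  rcases Nat.mod_two_eq_zero_or_one (U + f) with hv | hv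
  · rw [hv]
    apply Nat.sInf_eq_zero.mpr
    left
    intro X' hF
    obtain ⟨hU1, hg⟩ := claimA X' hF
    rw [hg]
    rcases hf01 with hf0 | hf0 <;> omega
  · rw [hv]
    have hex : ∃ X', Follower (PathG (n+3)) X X' := by
      by_contra hno
      push_neg at hno
      have hstuck := stuck_parity hX hno h0 hL
      rw [hU, ← hf] at hstuck
      rcases hf01 with hf0 | hf0 <;> omega
    obtain ⟨X', hF⟩ := hex
    obtain ⟨hU1, hg⟩ := claimA X' hF
    apply sInf_eq_one
    · intro X'' hF''
      obtain ⟨-, hg''⟩ := claimA X'' hF''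
      rw [hg'']
      rcases hf01 with hf0 | hf0 <;> omega
    · intro hmem
      exact hmem X' hF (by rw [hg]; rcases hf01 with hf0 | hf0 <;> omega)

end GrundyAux
namespace GrundyAux

open Finset

lemma mem_flow {n : ℕ} {p : Fin (n+3) × Fin (n+3)} :
    p ∈ flowState n ↔ p = ((⟨0, by omega⟩ : Fin (n+3)), (⟨1, by omega⟩ : Fin (n+3))) ∨
      p = ((⟨n+1, by omega⟩ : Fin (n+3)), (⟨n+2, by omega⟩ : Fin (n+3))) := by
  unfold flowState
  rw [Finset.mem_insert, Finset.mem_singleton]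

lemma mem_crash {n : ℕ} {p : Fin (n+3) × Fin (n+3)} :
    p ∈ crashState n ↔ p = ((⟨0, by omega⟩ : Fin (n+3)), (⟨1, by omega⟩ : Fin (n+3))) ∨
      p = ((⟨n+2, by omega⟩ : Fin (n+3)), (⟨n+1, by omega⟩ : Fin (n+3))) := by
  unfold crashState
  rw [Finset.mem_insert, Finset.mem_singleton]

lemma dir_flow {n : ℕ} (i : ℕ) :
    dir (flowState n) i = if i = 0 ∨ i = n+1 then some true else none := by
  by_cases h0 : i = 0
  · subst h0
    rw [if_pos (Or.inl rfl)]
    apply dir_true (by omega)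
    apply mem_flow.mpr
    left
    exact Prod.ext (Fin.ext rfl) (Fin.ext rfl)
  · by_cases hLe : i = n+1
    · subst hLe
      rw [if_pos (Or.inr rfl)]
      apply dir_true (by omega)
      apply mem_flow.mpr
      right
      exact Prod.ext (Fin.ext rfl) (Fin.ext (by simp only [Fin.val_mk]))
    · rw [if_neg (by tauto)]
      by_cases hi : i < n+2
      · apply dir_none hi
        · intro hm
          rcases mem_flow.mp hm with he | he <;>
            simp only [Prod.mk.injEq, Fin.mk.injEq] at he <;> omega
        · intro hm
          rcases mem_flow.mp hm with he | he <;>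
            simp only [Prod.mk.injEq, Fin.mk.injEq] at he <;> omega
      · exact dir_eq_none_of_ge _ _ hi

lemma dir_crash {n : ℕ} (i : ℕ) :
    dir (crashState n) i =
      if i = 0 then some true else if i = n+1 then some false else none := by
  by_cases h0 : i = 0
  · subst h0
    rw [if_pos rfl]
    apply dir_true (by omega)
    apply mem_crash.mpr
    left
    exact Prod.ext (Fin.ext rfl) (Fin.ext rfl)
  · rw [if_neg h0]
    by_cases hLe : i = n+1
    · subst hLe
      rw [if_pos rfl]
      apply dir_false (by omega)
      · intro hm
        rcases mem_crash.mp hm with he | he <;>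
          simp only [Prod.mk.injEq, Fin.mk.injEq] at he <;> omega
      · apply mem_crash.mpr
        right
        exact Prod.ext (Fin.ext (by simp only [Fin.val_mk])) (Fin.ext rfl)
    · rw [if_neg hLe]
      by_cases hi : i < n+2
      · apply dir_none hi
        · intro hm
          rcases mem_crash.mp hm with he | he <;>
            simp only [Prod.mk.injEq, Fin.mk.injEq] at he <;> omega
        · intro hm
          rcases mem_crash.mp hm with he | he <;>
            simp only [Prod.mk.injEq, Fin.mk.injEq] at he <;> omega
      · exact dir_eq_none_of_ge _ _ hi

lemma flow_isState {n : ℕ} : IsState (PathG (n+3)) (flowState n) := by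
  apply state_of_local
  · constructor
    · intro p hp
      rcases mem_flow.mp hp with rfl | rfl
      · exact pathG_adj.mpr (Or.inl rfl)
      · exact pathG_adj.mpr (Or.inl (by simp only [Fin.val_mk]))
    · intro p hp
      rcases mem_flow.mp hp with rfl | rfl <;>
        · rw [Prod.swap_prod_mk]
          intro hm
          rcases mem_flow.mp hm with he | he <;>
            simp only [Prod.mk.injEq, Fin.mk.injEq] at he <;> omega
  · intro i hi a b h1 h2
    rw [dir_flow] at h1 h2
    split_ifs at h1 h2 <;> simp_all

lemma crash_isState {n : ℕ} (hn : 1 ≤ n) : IsState (PathG (n+3)) (crashState n) := by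
  apply state_of_local
  · constructor
    · intro p hp
      rcases mem_crash.mp hp with rfl | rfl
      · exact pathG_adj.mpr (Or.inl rfl)
      · exact pathG_adj.mpr (Or.inr (by simp only [Fin.val_mk]))
    · intro p hp
      rcases mem_crash.mp hp with rfl | rfl <;>
        · rw [Prod.swap_prod_mk]
          intro hm
          rcases mem_crash.mp hm with he | he <;>
            simp only [Prod.mk.injEq, Fin.mk.injEq] at he <;> omega
  · intro i hi a b h1 h2
    rw [dir_crash] at h1 h2
    split_ifs at h1 h2 <;> simp_all <;> omega

lemma umk_flow {n : ℕ} : umk (flowState n) = n := by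
  unfold umk
  have hset : (range (n+2)).filter (fun i => dir (flowState n) i = none) = Ico 1 (n+1) := by
    ext x
    simp only [mem_filter, mem_range, mem_Ico, dir_flow]
    constructor
    · rintro ⟨hx, hd⟩
      by_cases h : x = 0 ∨ x = n+1
      · rw [if_pos h] at hd; simp at hd
      · omega
    · intro hx
      refine ⟨by omega, ?_⟩
      rw [if_neg (by omega)]
  rw [hset, Nat.card_Ico]
  omega

lemma umk_crash {n : ℕ} : umk (crashState n) = n := by
  unfold umk
  have hset : (range (n+2)).filter (fun i => dir (crashState n) i = none) = Ico 1 (n+1) := by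
    ext x
    simp only [mem_filter, mem_range, mem_Ico, dir_crash]
    constructor
    · rintro ⟨hx, hd⟩
      by_cases h1 : x = 0
      · rw [if_pos h1] at hd; simp at hd
      · rw [if_neg h1] at hd
        by_cases h2 : x = n+1
        · rw [if_pos h2] at hd; simp at hd
        · omega
    · intro hx
      refine ⟨by omega, ?_⟩
      rw [if_neg (by omega), if_neg (by omega)]
  rw [hset, Nat.card_Ico]
  omega

end GrundyAux

/-- `g(F_n) = n̄` for `n ≥ 0`, and `g(C_n) = n̄ ⊕ 1` for `n ≥ 1`. -/
theorem grundy_flow_and_crash :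
    (∀ n : ℕ, grundy (PathG (n + 3)) (flowState n) = n % 2) ∧
    (∀ n : ℕ, 1 ≤ n → grundy (PathG (n + 3)) (crashState n) = (n % 2) ^^^ 1) := by
  constructor
  · intro n
    have h := GrundyAux.main n (flowState n) GrundyAux.flow_isState GrundyAux.umk_flow
      true true (by rw [GrundyAux.dir_flow]; simp) (by rw [GrundyAux.dir_flow]; simp)
    simpa using h
  · intro n hn
    have h := GrundyAux.main n (crashState n) (GrundyAux.crash_isState hn) GrundyAux.umk_crash
      true false (by rw [GrundyAux.dir_crash]; simp) (by rw [GrundyAux.dir_crash]; simp)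
    rw [h]
    rw [if_neg (by decide : ¬(true = false))]
    rcases Nat.mod_two_eq_zero_or_one n with he | he <;> rw [he]
    · have h1 : (0:ℕ) ^^^ 1 = 1 := rfl
      rw [h1]
      omega
    · have h1 : (1:ℕ) ^^^ 1 = 0 := rfl
      rw [h1]
      omega
end

section
/- g(T_n) = n for every integer n ≥ 0. -/
namespace TwigAux

/-- Abstract path state on `E` edges: set of (edge index, direction);
`true` means rightward (`q → q+1`). -/
def Ok (E : ℕ) (Y : Finset (ℕ × Bool)) : Prop :=
  (∀ p ∈ Y, p.1 < E) ∧
  (∀ q d d', (q, d) ∈ Y → (q, d') ∈ Y → d = d') ∧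
  (∀ q d d', (q, d) ∈ Y → (q + 1, d') ∈ Y → d = d')

def MoveA (E : ℕ) (Y Y' : Finset (ℕ × Bool)) : Prop :=
  Ok E Y ∧ Ok E Y' ∧ ∃ q d, (∀ d', (q, d') ∉ Y) ∧ Y' = insert (q, d) Y

lemma Ok.card_le {E : ℕ} {Y : Finset (ℕ × Bool)} (h : Ok E Y) : Y.card ≤ E := by
  have h1 : (Y.image Prod.fst).card = Y.card := by
    apply Finset.card_image_of_injOn
    intro p hp p' hp' hpp
    have := h.2.1 p.1 p.2 p'.2 (by simpa using hp) (by rw [hpp]; simpa using hp')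
    exact Prod.ext hpp this
  have h2 : Y.image Prod.fst ⊆ Finset.range E := by
    intro q hq
    obtain ⟨p, hp, rfl⟩ := Finset.mem_image.1 hq
    exact Finset.mem_range.2 (h.1 p hp)
  calc Y.card = (Y.image Prod.fst).card := h1.symm
    _ ≤ E := by simpa using Finset.card_le_card h2

noncomputable def gA (E : ℕ) (Y : Finset (ℕ × Bool)) : ℕ :=
  sInf {n : ℕ | ∀ Y', MoveA E Y Y' → gA E Y' ≠ n}
termination_by E + 1 - Y.card
decreasing_by
  rename_i h
  obtain ⟨h1, h2, q, d, hq, rfl⟩ := h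
  have h3 := h2.card_le
  have h4 : (insert (q, d) Y).card = Y.card + 1 := Finset.card_insert_of_notMem (hq d)
  omega

/-- The closed-form value of a path state. -/
noncomputable def Vv (E : ℕ) (Y : Finset (ℕ × Bool)) : ℕ :=
  if h : Y.Nonempty then
    (Y.image Prod.fst).min' (h.image _) ^^^
      (E - 1 - (Y.image Prod.fst).max' (h.image _)) ^^^
      (((Y.image Prod.fst).max' (h.image _) - (Y.image Prod.fst).min' (h.image _) +
        Y.card + 1 +
        (if (((Y.image Prod.fst).min' (h.image _), true) ∈ Y ↔
             ((Y.image Prod.fst).max' (h.image _), true) ∈ Y) then 0 else 1)) % 2)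
  else E % 2

lemma Vv_empty (E : ℕ) : Vv E ∅ = E % 2 := by simp [Vv]

lemma Vv_of_nonempty {E : ℕ} {Y : Finset (ℕ × Bool)} (h : Y.Nonempty) :
    Vv E Y = (Y.image Prod.fst).min' (h.image _) ^^^
      (E - 1 - (Y.image Prod.fst).max' (h.image _)) ^^^
      (((Y.image Prod.fst).max' (h.image _) - (Y.image Prod.fst).min' (h.image _) +
        Y.card + 1 +
        (if (((Y.image Prod.fst).min' (h.image _), true) ∈ Y ↔
             ((Y.image Prod.fst).max' (h.image _), true) ∈ Y) then 0 else 1)) % 2) := by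
  rw [Vv, dif_pos h]

end TwigAux
namespace TwigAux

lemma xor_one_cases (x : ℕ) : x ^^^ 1 = x + 1 ∨ (1 ≤ x ∧ x ^^^ 1 = x - 1) := by
  have h1 : (x ^^^ 1) / 2 = x / 2 := by
    rw [Nat.xor_div_two]; norm_num
  have h2 : (x ^^^ 1) % 2 = (x + 1) % 2 := Nat.xor_mod_two_eq
  omega

lemma xor_le_add_one (x : ℕ) : x ^^^ 1 ≤ x + 1 := by
  rcases xor_one_cases x with h | ⟨h1, h2⟩ <;> omega

lemma xor_bit_cases (x e : ℕ) (he : e ≤ 1) : x ^^^ e = x ∨ x ^^^ e = x + 1 ∨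
    (1 ≤ x ∧ x ^^^ e = x - 1) := by
  interval_cases e
  · simp
  · rcases xor_one_cases x with h | ⟨h1, h2⟩ <;> omega

/-- key nim-style lemma -/
lemma nim_key {a b e j : ℕ} (he : e ≤ 1) (hj : j < a ^^^ b ^^^ e)
    (hu : ¬ j ^^^ b ^^^ e < a) (hw : ¬ j ^^^ a ^^^ e < b) : e = 1 ∧ j = a ^^^ b := by
  have hj' : j < a ^^^ (b ^^^ e) := by rwa [← Nat.xor_assoc]
  rcases Nat.lt_xor_cases hj' with h | h
  · rw [← Nat.xor_assoc] at h
    exact absurd h hu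
  · -- h : j ^^^ a < b ^^^ e
    interval_cases e
    · simp only [Nat.xor_zero] at h hw
      exact absurd h hw
    · refine ⟨rfl, ?_⟩
      set y := j ^^^ a with hy
      have hw' : ¬ y ^^^ 1 < b := hw
      have hlink : y ^^^ 1 = b ↔ b ^^^ 1 = y := by
        constructor <;> intro hh <;> [skip; skip] <;>
          · rw [← hh]; rw [Nat.xor_assoc]; simp
      have hyb : y = b := by
        rcases xor_one_cases b with hb | ⟨hb1, hb2⟩ <;>
          rcases xor_one_cases y with hyy | ⟨hy1, hy2⟩ <;>
          · by_contra hne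
            have h1 : y < b ^^^ 1 := h
            have h2 : ¬ y ^^^ 1 < b := hw'
            have h3 : y ^^^ 1 = b → b ^^^ 1 = y := hlink.1
            omega
      have : j = y ^^^ a := by rw [hy, Nat.xor_assoc]; simp
      rw [this, hyb, Nat.xor_comm]

lemma xor_parity (x y : ℕ) : (x ^^^ y) % 2 = (x + y) % 2 := Nat.xor_mod_two_eq

lemma xor_swap_right (x y z : ℕ) : x ^^^ y ^^^ z = x ^^^ z ^^^ y := by
  rw [Nat.xor_assoc, Nat.xor_comm y z, ← Nat.xor_assoc]

lemma xor_cancel_b {q b e' a e : ℕ} (h : q ^^^ b ^^^ e' = a ^^^ b ^^^ e) :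
    q ^^^ e' = a ^^^ e := by
  rw [xor_swap_right q b e', xor_swap_right a b e] at h
  exact Nat.xor_left_inj.1 h

lemma xor_cancel_a {a w e' b e : ℕ} (h : a ^^^ w ^^^ e' = a ^^^ b ^^^ e) :
    w ^^^ e' = b ^^^ e := by
  have h1 : a ^^^ (w ^^^ e') = a ^^^ (b ^^^ e) := by
    rwa [← Nat.xor_assoc, ← Nat.xor_assoc]
  exact Nat.xor_right_injective h1

/-- from q ^^^ e' = a ^^^ e with bits e,e', a is within 1 of q -/
lemma xor_near {q a e e' : ℕ} (he : e ≤ 1) (he' : e' ≤ 1) (h : q ^^^ e' = a ^^^ e) :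
    a ≤ q + 1 ∧ q ≤ a + 1 := by
  have h2 : q ^^^ e' ^^^ e = a := by rw [h, Nat.xor_assoc]; simp
  have h3 : q ^^^ (e' ^^^ e) = a := by rwa [← Nat.xor_assoc]
  have h4 : e' ^^^ e ≤ 1 := by interval_cases e <;> interval_cases e' <;> simp
  rcases xor_bit_cases q _ h4 with h5 | h5 | ⟨h5, h6⟩ <;> omega

end TwigAux
namespace TwigAux

variable {E : ℕ} {Y : Finset (ℕ × Bool)}

lemma mem_S_iff {q : ℕ} : q ∈ Y.image Prod.fst ↔ ∃ d, (q, d) ∈ Y := by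
  constructor
  · intro h
    obtain ⟨p, hp, rfl⟩ := Finset.mem_image.1 h
    exact ⟨p.2, hp⟩
  · rintro ⟨d, hd⟩
    exact Finset.mem_image.2 ⟨(q, d), hd, rfl⟩

lemma not_mem_S_iff {q : ℕ} : q ∉ Y.image Prod.fst ↔ ∀ d, (q, d) ∉ Y := by
  simp only [mem_S_iff, not_exists]

lemma max_lt_E (hok : Ok E Y) (hne : (Y.image Prod.fst).Nonempty) :
    (Y.image Prod.fst).max' hne < E := by
  obtain ⟨d, hd⟩ := mem_S_iff.1 ((Y.image Prod.fst).max'_mem hne)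
  exact hok.1 _ hd

lemma mem_true_insert {q x : ℕ} {d : Bool} (hx : x ≠ q) :
    ((x, true) ∈ insert (q, d) Y) ↔ (x, true) ∈ Y := by
  rw [Finset.mem_insert]
  constructor
  · rintro (h | h)
    · exact absurd (congrArg Prod.fst h) hx
    · exact h
  · exact fun h => Or.inr h

lemma mem_true_insert_self {q : ℕ} {d : Bool} (hq : ∀ d', (q, d') ∉ Y) :
    ((q, true) ∈ insert (q, d) Y) ↔ d = true := by
  rw [Finset.mem_insert]
  constructor
  · rintro (h | h)
    · exact (congrArg Prod.snd h).symm
    · exact absurd h (hq true)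
  · rintro rfl; exact Or.inl rfl

section InsertVal

variable {q a p : ℕ} {d : Bool}

lemma min'_image_insert (hne : Y.Nonempty) (q : ℕ) (d : Bool) :
    ((insert (q, d) Y).image Prod.fst).min' ((Finset.insert_nonempty _ _).image _) =
      min ((Y.image Prod.fst).min' (hne.image _)) q := by
  have himg : (insert (q, d) Y).image Prod.fst = insert q (Y.image Prod.fst) :=
    Finset.image_insert _ _ _
  apply le_antisymm
  · apply le_min
    · apply Finset.min'_le
      rw [himg]
      exact Finset.mem_insert_of_mem (Finset.min'_mem _ _)
    · apply Finset.min'_le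
      rw [himg]
      exact Finset.mem_insert_self _ _
  · apply Finset.le_min'
    intro y hy
    rw [himg, Finset.mem_insert] at hy
    rcases hy with rfl | hy
    · exact min_le_right _ _
    · exact le_trans (min_le_left _ _) (Finset.min'_le _ _ hy)

lemma max'_image_insert (hne : Y.Nonempty) (q : ℕ) (d : Bool) :
    ((insert (q, d) Y).image Prod.fst).max' ((Finset.insert_nonempty _ _).image _) =
      max ((Y.image Prod.fst).max' (hne.image _)) q := by
  have himg : (insert (q, d) Y).image Prod.fst = insert q (Y.image Prod.fst) :=
    Finset.image_insert _ _ _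
  apply le_antisymm
  · apply Finset.max'_le
    intro y hy
    rw [himg, Finset.mem_insert] at hy
    rcases hy with rfl | hy
    · exact le_max_right _ _
    · exact le_trans (Finset.le_max' _ _ hy) (le_max_left _ _)
  · apply max_le
    · apply Finset.le_max'
      rw [himg]
      exact Finset.mem_insert_of_mem (Finset.max'_mem _ _)
    · apply Finset.le_max'
      rw [himg]
      exact Finset.mem_insert_self _ _

lemma Vv_insert_left (hne : Y.Nonempty)
    (ha : (Y.image Prod.fst).min' (hne.image _) = a)
    (hp : (Y.image Prod.fst).max' (hne.image _) = p)
    (hq : q < a) :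
    Vv E (insert (q, d) Y) = q ^^^ (E - 1 - p) ^^^
      ((p - q + Y.card + 2 + (if (d = true ↔ (p, true) ∈ Y) then 0 else 1)) % 2) := by
  have hSne := hne.image Prod.fst
  have hqS : q ∉ Y.image Prod.fst := fun h => absurd (ha ▸ Finset.min'_le _ _ h) (by omega)
  have hap : a ≤ p := by
    rw [← ha, ← hp]; exact Finset.min'_le _ _ (Finset.max'_mem _ _)
  have hY' : (insert (q, d) Y).Nonempty := Finset.insert_nonempty _ _
  rw [Vv_of_nonempty hY', min'_image_insert hne, max'_image_insert hne, ha, hp]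
  have hcard : (insert (q, d) Y).card = Y.card + 1 :=
    Finset.card_insert_of_notMem (fun h => hqS (mem_S_iff.2 ⟨d, h⟩))
  rw [hcard, min_eq_right (by omega : q ≤ a),
    max_eq_left (by omega : q ≤ p)]
  have hm1 : ((q, true) ∈ insert (q, d) Y) ↔ d = true :=
    mem_true_insert_self (fun d' h => hqS (mem_S_iff.2 ⟨d', h⟩))
  have hm2 : ((p, true) ∈ insert (q, d) Y) ↔ (p, true) ∈ Y :=
    mem_true_insert (by omega)
  simp only [hm1, hm2]
  first
    | rfl
    | (congr 1 <;> (split_ifs <;> omega))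

lemma Vv_insert_right (hne : Y.Nonempty)
    (ha : (Y.image Prod.fst).min' (hne.image _) = a)
    (hp : (Y.image Prod.fst).max' (hne.image _) = p)
    (hq : p < q) :
    Vv E (insert (q, d) Y) = a ^^^ (E - 1 - q) ^^^
      ((q - a + Y.card + 2 + (if ((a, true) ∈ Y ↔ d = true) then 0 else 1)) % 2) := by
  have hSne := hne.image Prod.fst
  have hqS : q ∉ Y.image Prod.fst := fun h => absurd (hp ▸ Finset.le_max' _ _ h) (by omega)
  have hap : a ≤ p := by
    rw [← ha, ← hp]; exact Finset.min'_le _ _ (Finset.max'_mem _ _)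
  have hY' : (insert (q, d) Y).Nonempty := Finset.insert_nonempty _ _
  rw [Vv_of_nonempty hY', min'_image_insert hne, max'_image_insert hne, ha, hp]
  have hcard : (insert (q, d) Y).card = Y.card + 1 :=
    Finset.card_insert_of_notMem (fun h => hqS (mem_S_iff.2 ⟨d, h⟩))
  rw [hcard, min_eq_left (by omega : a ≤ q),
    max_eq_right (by omega : p ≤ q)]
  have hm1 : ((a, true) ∈ insert (q, d) Y) ↔ (a, true) ∈ Y :=
    mem_true_insert (by omega)
  have hm2 : ((q, true) ∈ insert (q, d) Y) ↔ d = true :=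
    mem_true_insert_self (fun d' h => hqS (mem_S_iff.2 ⟨d', h⟩))
  simp only [hm1, hm2]
  first
    | rfl
    | (congr 1 <;> (split_ifs <;> omega))

lemma Vv_insert_mid (hne : Y.Nonempty)
    (ha : (Y.image Prod.fst).min' (hne.image _) = a)
    (hp : (Y.image Prod.fst).max' (hne.image _) = p)
    (hq1 : a < q) (hq2 : q < p) (hqS : q ∉ Y.image Prod.fst) :
    Vv E (insert (q, d) Y) = a ^^^ (E - 1 - p) ^^^
      ((p - a + Y.card + 2 + (if ((a, true) ∈ Y ↔ (p, true) ∈ Y) then 0 else 1)) % 2) := by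
  have hSne := hne.image Prod.fst
  have hY' : (insert (q, d) Y).Nonempty := Finset.insert_nonempty _ _
  rw [Vv_of_nonempty hY', min'_image_insert hne, max'_image_insert hne, ha, hp]
  have hcard : (insert (q, d) Y).card = Y.card + 1 :=
    Finset.card_insert_of_notMem (fun h => hqS (mem_S_iff.2 ⟨d, h⟩))
  rw [hcard, min_eq_left (by omega : a ≤ q),
    max_eq_left (by omega : q ≤ p)]
  have hm1 : ((a, true) ∈ insert (q, d) Y) ↔ (a, true) ∈ Y :=
    mem_true_insert (by omega)
  have hm2 : ((p, true) ∈ insert (q, d) Y) ↔ (p, true) ∈ Y :=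
    mem_true_insert (by omega)
  simp only [hm1, hm2]
  first
    | rfl
    | (congr 1 <;> (split_ifs <;> omega))

end InsertVal

end TwigAux
namespace TwigAux

lemma Vv_singleton (E q : ℕ) (d : Bool) : Vv E {(q, d)} = q ^^^ (E - 1 - q) := by
  have hne : ({(q, d)} : Finset (ℕ × Bool)).Nonempty := Finset.singleton_nonempty _
  rw [Vv_of_nonempty hne]
  have himg : ({(q, d)} : Finset (ℕ × Bool)).image Prod.fst = {q} := rfl
  simp only [himg, Finset.min'_singleton, Finset.max'_singleton, Finset.card_singleton]
  simp

lemma mod2_le (x : ℕ) : x % 2 ≤ 1 := by omega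

lemma moveA_Vv_ne {E : ℕ} {Y Y' : Finset (ℕ × Bool)} (h : MoveA E Y Y') :
    Vv E Y' ≠ Vv E Y := by
  obtain ⟨hok, hok', q, d, hslot, rfl⟩ := h
  have hqE : q < E := hok'.1 (q, d) (Finset.mem_insert_self _ _)
  by_cases hne : Y.Nonempty
  · have hSne := hne.image Prod.fst
    obtain ⟨a, ha⟩ : ∃ a, (Y.image Prod.fst).min' (hne.image _) = a := ⟨_, rfl⟩
    obtain ⟨p, hp⟩ : ∃ p, (Y.image Prod.fst).max' (hne.image _) = p := ⟨_, rfl⟩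
    have hqS : q ∉ Y.image Prod.fst := not_mem_S_iff.2 hslot
    have haS : a ∈ Y.image Prod.fst := ha ▸ Finset.min'_mem _ _
    have hpS : p ∈ Y.image Prod.fst := hp ▸ Finset.max'_mem _ _
    have hap : a ≤ p := ha ▸ hp ▸ Finset.min'_le _ _ (hp ▸ hpS)
    have hpE : p < E := hp ▸ max_lt_E hok hSne
    obtain ⟨da, hda⟩ := mem_S_iff.1 haS
    obtain ⟨dp, hdp⟩ := mem_S_iff.1 hpS
    have hdaT : ((a, true) ∈ Y) ↔ da = true :=
      ⟨fun hh => (hok.2.1 a true da hh hda).symm, fun hh => hh ▸ hda⟩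
    have hdpT : ((p, true) ∈ Y) ↔ dp = true :=
      ⟨fun hh => (hok.2.1 p true dp hh hdp).symm, fun hh => hh ▸ hdp⟩
    have hqa : q ≠ a := fun hh => hqS (hh ▸ haS)
    have hqp : q ≠ p := fun hh => hqS (hh ▸ hpS)
    rcases lt_trichotomy q a with hqlt | hh | hqgt
    · -- left insertion
      rw [Vv_insert_left hne ha hp hqlt, Vv_of_nonempty hne, ha, hp]
      rcases eq_or_lt_of_le (by omega : q + 1 ≤ a) with hq1 | hq2
      · -- q = a - 1 : direction forced
        have hd : d = da := hok'.2.2 q d da (Finset.mem_insert_self _ _)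
          (by rw [hq1]; exact Finset.mem_insert_of_mem hda)
        have hcond : ((d = true) ↔ (p, true) ∈ Y) ↔ (((a, true) ∈ Y) ↔ (p, true) ∈ Y) := by
          rw [hd, hdaT]
        rw [if_congr hcond rfl rfl]
        have hmod : (p - q + Y.card + 2 +
            (if ((a, true) ∈ Y) ↔ (p, true) ∈ Y then 0 else 1)) % 2 =
            (p - a + Y.card + 1 + (if ((a, true) ∈ Y) ↔ (p, true) ∈ Y then 0 else 1)) % 2 := by
          omega
        rw [hmod]
        intro heq
        have h1 := xor_cancel_b heq
        have h2 := Nat.xor_left_inj.1 h1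
        omega
      · -- q ≤ a - 2
        intro heq
        have h1 := xor_cancel_b heq
        have h2 := xor_near (mod2_le _) (mod2_le _) h1
        omega
    · exact absurd hh hqa
    · rcases lt_trichotomy q p with hqlt | hh | hqgt2
      · -- middle insertion
        rw [Vv_insert_mid hne ha hp hqgt hqlt hqS, Vv_of_nonempty hne, ha, hp]
        intro heq
        have h1 := xor_cancel_a heq
        have h2 := Nat.xor_right_inj.1 h1
        omega
      · exact absurd hh hqp
      · -- right insertion
        rw [Vv_insert_right hne ha hp hqgt2, Vv_of_nonempty hne, ha, hp]
        rcases eq_or_lt_of_le (by omega : p + 1 ≤ q) with hq1 | hq2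
        · -- q = p + 1 : direction forced
          have hd : dp = d := hok'.2.2 p dp d (Finset.mem_insert_of_mem hdp)
            (by rw [hq1]; exact Finset.mem_insert_self _ _)
          have hcond : (((a, true) ∈ Y) ↔ d = true) ↔ (((a, true) ∈ Y) ↔ (p, true) ∈ Y) := by
            rw [← hd, hdpT]
          rw [if_congr hcond rfl rfl]
          have hmod : (q - a + Y.card + 2 +
              (if ((a, true) ∈ Y) ↔ (p, true) ∈ Y then 0 else 1)) % 2 =
              (p - a + Y.card + 1 + (if ((a, true) ∈ Y) ↔ (p, true) ∈ Y then 0 else 1)) % 2 := by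
            omega
          rw [hmod]
          intro heq
          have h1 := xor_cancel_a heq
          have h2 := Nat.xor_left_inj.1 h1
          omega
        · -- q ≥ p + 2
          intro heq
          have h1 := xor_cancel_a heq
          have h2 := xor_near (mod2_le _) (mod2_le _) h1
          omega
  · -- Y empty
    rw [Finset.not_nonempty_iff_eq_empty] at hne
    subst hne
    show Vv E {(q, d)} ≠ Vv E ∅
    rw [Vv_singleton, Vv_empty]
    have h1 : (q ^^^ (E - 1 - q)) % 2 = (q + (E - 1 - q)) % 2 := Nat.xor_mod_two_eq
    omega

end TwigAux
namespace TwigAux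

variable {E : ℕ} {Y : Finset (ℕ × Bool)}

lemma Ok.subset {Y₂ : Finset (ℕ × Bool)} (hsub : Y₂ ⊆ Y) (hok : Ok E Y) : Ok E Y₂ :=
  ⟨fun p hp => hok.1 p (hsub hp),
   fun q d d' h1 h2 => hok.2.1 q d d' (hsub h1) (hsub h2),
   fun q d d' h1 h2 => hok.2.2 q d d' (hsub h1) (hsub h2)⟩

lemma ok_insert {q : ℕ} {d : Bool} (hok : Ok E Y) (hqE : q < E)
    (hslot : ∀ d', (q, d') ∉ Y)
    (hL : ∀ d', 1 ≤ q → (q - 1, d') ∈ Y → d' = d)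
    (hR : ∀ d', (q + 1, d') ∈ Y → d = d') :
    Ok E (insert (q, d) Y) := by
  refine ⟨?_, ?_, ?_⟩
  · intro p hp
    rcases Finset.mem_insert.1 hp with rfl | hp
    · exact hqE
    · exact hok.1 p hp
  · intro x d1 d2 h1 h2
    rcases Finset.mem_insert.1 h1 with h1 | h1 <;> rcases Finset.mem_insert.1 h2 with h2 | h2
    · have e1 := congrArg Prod.snd h1
      have e2 := congrArg Prod.snd h2
      simp at e1 e2
      rw [e1, e2]
    · have e1 := congrArg Prod.fst h1
      simp at e1
      exact absurd (e1 ▸ h2) (hslot d2)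
    · have e2 := congrArg Prod.fst h2
      simp at e2
      exact absurd (e2 ▸ h1) (hslot d1)
    · exact hok.2.1 x d1 d2 h1 h2
  · intro x d1 d2 h1 h2
    rcases Finset.mem_insert.1 h1 with h1 | h1 <;> rcases Finset.mem_insert.1 h2 with h2 | h2
    · have e1 := congrArg Prod.fst h1
      have e2 := congrArg Prod.fst h2
      simp at e1 e2
      omega
    · have e1 := congrArg Prod.fst h1
      have e1' := congrArg Prod.snd h1
      simp at e1 e1'
      rw [e1']
      exact hR d2 (by rw [← e1]; exact h2)
    · have e2 := congrArg Prod.fst h2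
      have e2' := congrArg Prod.snd h2
      simp at e2 e2'
      rw [e2']
      exact hL d1 (by omega) (by rw [show q - 1 = x by omega]; exact h1)
    · exact hok.2.2 x d1 d2 h1 h2

lemma bool_delta (da da₂ dp : Bool) (h2 : da ≠ da₂) :
    (if (da = true ↔ dp = true) then (0:ℕ) else 1) +
    (if (da₂ = true ↔ dp = true) then 0 else 1) = 1 := by
  cases da <;> cases da₂ <;> cases dp <;> simp_all

lemma no_mid_parity (E : ℕ) : ∀ k (Y : Finset (ℕ × Bool)) (hok : Ok E Y)
    (hne : Y.Nonempty) (a p : ℕ),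
    Y.card ≤ k →
    (Y.image Prod.fst).min' (hne.image _) = a →
    (Y.image Prod.fst).max' (hne.image _) = p →
    (∀ q d, a < q → q < p → (∀ d', (q, d') ∉ Y) → ¬ Ok E (insert (q, d) Y)) →
    (p - a + Y.card + 1 + (if ((a, true) ∈ Y ↔ (p, true) ∈ Y) then 0 else 1)) % 2 = 0 := by
  intro k
  induction k with
  | zero =>
    intro Y hok hne a p hcard
    have := Finset.card_pos.2 hne
    omega
  | succ k ih =>
    intro Y hok hne a p hcard ha hp hnomid
    have hSne := hne.image Prod.fst
    have haS : a ∈ Y.image Prod.fst := ha ▸ Finset.min'_mem _ _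
    have hpS : p ∈ Y.image Prod.fst := hp ▸ Finset.max'_mem _ _
    have hap : a ≤ p := ha ▸ Finset.min'_le _ _ hpS
    have hpE : p < E := hp ▸ max_lt_E hok hSne
    have hmin_le : ∀ x ∈ Y.image Prod.fst, a ≤ x := fun x hx => ha ▸ Finset.min'_le _ _ hx
    have hmax_ge : ∀ x ∈ Y.image Prod.fst, x ≤ p := fun x hx => hp ▸ Finset.le_max' _ _ hx
    obtain ⟨da, hda⟩ := mem_S_iff.1 haS
    obtain ⟨dp, hdp⟩ := mem_S_iff.1 hpS
    have hdaT : ((a, true) ∈ Y) ↔ da = true :=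
      ⟨fun hh => (hok.2.1 a true da hh hda).symm, fun hh => hh ▸ hda⟩
    have hdpT : ((p, true) ∈ Y) ↔ dp = true :=
      ⟨fun hh => (hok.2.1 p true dp hh hdp).symm, fun hh => hh ▸ hdp⟩
    rcases eq_or_lt_of_le hap with heq | hlt
    · -- a = p : Y is a singleton
      have hY : Y = {(a, da)} := by
        apply Finset.eq_singleton_iff_unique_mem.2
        refine ⟨hda, ?_⟩
        intro y hy
        have hy1 : y.1 ∈ Y.image Prod.fst := Finset.mem_image.2 ⟨y, hy, rfl⟩
        have h1 : y.1 = a := by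
          have := hmax_ge _ hy1
          have := hmin_le _ hy1
          omega
        have h2 : y.2 = da := by
          apply hok.2.1 a y.2 da _ hda
          rw [← h1]; exact hy
        rw [← h1, ← h2]
      rw [hY, ← heq]
      simp
    · -- a < p : erase the arrow at a and use the IH
      set Y₂ := Y.erase (a, da) with hY₂
      have hsub : Y₂ ⊆ Y := Finset.erase_subset _ _
      have hok₂ : Ok E Y₂ := Ok.subset hsub hok
      have hmem₂ : ∀ x d, (x, d) ∈ Y₂ ↔ ((x, d) ∈ Y ∧ x ≠ a) := by
        intro x d
        rw [Finset.mem_erase]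
        constructor
        · rintro ⟨hne', hmem⟩
          refine ⟨hmem, ?_⟩
          intro hxa
          apply hne'
          have hd : d = da := hok.2.1 a d da (hxa ▸ hmem) hda
          rw [hxa, hd]
        · rintro ⟨hmem, hxa⟩
          exact ⟨fun hh => hxa (congrArg Prod.fst hh), hmem⟩
      have hpY₂ : (p, dp) ∈ Y₂ := (hmem₂ p dp).2 ⟨hdp, by omega⟩
      have hne₂ : Y₂.Nonempty := ⟨_, hpY₂⟩
      have hS₂ : ∀ x, x ∈ Y₂.image Prod.fst ↔ (x ∈ Y.image Prod.fst ∧ x ≠ a) := by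
        intro x
        simp only [mem_S_iff]
        constructor
        · rintro ⟨dd, hdd⟩
          obtain ⟨h1, h2⟩ := (hmem₂ x dd).1 hdd
          exact ⟨⟨dd, h1⟩, h2⟩
        · rintro ⟨⟨dd, hdd⟩, hxa⟩
          exact ⟨dd, (hmem₂ x dd).2 ⟨hdd, hxa⟩⟩
      have hmax₂ : (Y₂.image Prod.fst).max' (hne₂.image _) = p := by
        apply le_antisymm
        · apply Finset.max'_le
          intro y hy
          exact hmax_ge y ((hS₂ y).1 hy).1
        · exact Finset.le_max' _ _ ((hS₂ p).2 ⟨hpS, by omega⟩)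
      obtain ⟨a₂, ha₂⟩ : ∃ a₂, (Y₂.image Prod.fst).min' (hne₂.image _) = a₂ := ⟨_, rfl⟩
      have ha₂S : a₂ ∈ Y₂.image Prod.fst := ha₂ ▸ Finset.min'_mem _ _
      have ha₂min : ∀ x ∈ Y₂.image Prod.fst, a₂ ≤ x := fun x hx =>
        ha₂ ▸ Finset.min'_le _ _ hx
      obtain ⟨ha₂Y, ha₂ne⟩ := (hS₂ a₂).1 ha₂S
      have haa₂ : a < a₂ := lt_of_le_of_ne (hmin_le _ ha₂Y) (Ne.symm ha₂ne)
      have ha₂p : a₂ ≤ p := hmax₂ ▸ Finset.le_max' _ _ ha₂S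
      have hgap : ∀ x, a < x → x < a₂ → x ∉ Y.image Prod.fst := by
        intro x hx1 hx2 hxS
        have := ha₂min x ((hS₂ x).2 ⟨hxS, by omega⟩)
        omega
      obtain ⟨da₂, hda₂⟩ := mem_S_iff.1 ha₂Y
      have hda₂T : ((a₂, true) ∈ Y) ↔ da₂ = true :=
        ⟨fun hh => (hok.2.1 a₂ true da₂ hh hda₂).symm, fun hh => hh ▸ hda₂⟩
      -- gap analysis
      have hcase : (a₂ = a + 1 ∧ da = da₂) ∨ (a₂ = a + 2 ∧ da ≠ da₂) := by
        rcases (by omega : a₂ = a + 1 ∨ a₂ = a + 2 ∨ a + 3 ≤ a₂) with h1 | h1 | h1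
        · left
          exact ⟨h1, hok.2.2 a da da₂ hda (by
            have h := hda₂; rw [h1] at h; exact h)⟩
        · right
          refine ⟨h1, ?_⟩
          intro hdd
          apply hnomid (a + 1) da (by omega) (by omega)
          · intro d' hd'
            exact hgap (a + 1) (by omega) (by omega) (mem_S_iff.2 ⟨d', hd'⟩)
          · apply ok_insert hok (by omega) ?_ ?_ ?_
            · intro d' hd'
              exact hgap (a + 1) (by omega) (by omega) (mem_S_iff.2 ⟨d', hd'⟩)
            · intro d' h1' h2'
              rw [show a + 1 - 1 = a by omega] at h2'
              exact hok.2.1 a d' da h2' hda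
            · intro d' h2'
              have h3 : (a₂, d') ∈ Y := by
                rw [show a₂ = a + 1 + 1 by omega]; exact h2'
              have h4 : d' = da₂ := hok.2.1 a₂ d' da₂ h3 hda₂
              rw [h4]; exact hdd
        · exfalso
          apply hnomid (a + 1) da (by omega) (by omega)
          · intro d' hd'
            exact hgap (a + 1) (by omega) (by omega) (mem_S_iff.2 ⟨d', hd'⟩)
          · apply ok_insert hok (by omega) ?_ ?_ ?_
            · intro d' hd'
              exact hgap (a + 1) (by omega) (by omega) (mem_S_iff.2 ⟨d', hd'⟩)
            · intro d' h1' h2'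
              rw [show a + 1 - 1 = a by omega] at h2'
              exact hok.2.1 a d' da h2' hda
            · intro d' h2'
              exfalso
              exact hgap (a + 2) (by omega) (by omega) (mem_S_iff.2 ⟨d', h2'⟩)
      -- no-mid transfers to Y₂
      have hnomid₂ : ∀ q d, a₂ < q → q < p → (∀ d', (q, d') ∉ Y₂) →
          ¬ Ok E (insert (q, d) Y₂) := by
        intro q d hq1 hq2 hslot₂ hok₂'
        have hslot : ∀ d', (q, d') ∉ Y := by
          intro d' hd'
          exact hslot₂ d' ((hmem₂ q d').2 ⟨hd', by omega⟩)
        apply hnomid q d (by omega) hq2 hslot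
        have hYeq : insert (q, d) Y = insert (a, da) (insert (q, d) Y₂) := by
          rw [Finset.insert_comm, Finset.insert_erase hda]
        rw [hYeq]
        apply ok_insert hok₂' (by omega) ?_ ?_ ?_
        · intro d' hd'
          rcases Finset.mem_insert.1 hd' with hh | hh
          · have := congrArg Prod.fst hh
            simp at this
            omega
          · exact ((hmem₂ a d').1 hh).2 rfl
        · intro d' h1' h2'
          exfalso
          rcases Finset.mem_insert.1 h2' with hh | hh
          · have := congrArg Prod.fst hh
            simp at this
            omega
          · have := hmin_le (a - 1) (mem_S_iff.2 ⟨d', hsub hh⟩)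
            omega
        · intro d' h2'
          rcases Finset.mem_insert.1 h2' with hh | hh
          · exfalso
            have := congrArg Prod.fst hh
            simp at this
            omega
          · exact hok.2.2 a da d' hda (hsub hh)
      -- apply IH
      have hcard₂ : Y₂.card = Y.card - 1 := by
        rw [hY₂, Finset.card_erase_of_mem hda]
      have hparity₂ := ih Y₂ hok₂ hne₂ a₂ p (by omega) ha₂ hmax₂ hnomid₂
      -- translate memberships in Y₂ back to Y
      have hma₂ : ((a₂, true) ∈ Y₂) ↔ (a₂, true) ∈ Y := by
        rw [hmem₂]
        constructor
        · exact fun h => h.1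
        · exact fun h => ⟨h, by omega⟩
      have hmp : ((p, true) ∈ Y₂) ↔ (p, true) ∈ Y := by
        rw [hmem₂]
        constructor
        · exact fun h => h.1
        · exact fun h => ⟨h, by omega⟩
      simp only [hma₂, hmp] at hparity₂
      -- final arithmetic
      have hdelta : (a₂ = a + 1 ∧
          (if ((a, true) ∈ Y ↔ (p, true) ∈ Y) then (0:ℕ) else 1) =
          (if ((a₂, true) ∈ Y ↔ (p, true) ∈ Y) then 0 else 1)) ∨
          (a₂ = a + 2 ∧
          (if ((a, true) ∈ Y ↔ (p, true) ∈ Y) then (0:ℕ) else 1) +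
          (if ((a₂, true) ∈ Y ↔ (p, true) ∈ Y) then 0 else 1) = 1) := by
        rcases hcase with ⟨h1, h2⟩ | ⟨h1, h2⟩
        · left
          refine ⟨h1, ?_⟩
          apply if_congr _ rfl rfl
          rw [hdaT, hda₂T, h2]
        · right
          refine ⟨h1, ?_⟩
          simp only [hdaT, hda₂T, hdpT]
          exact bool_delta da da₂ dp h2
      have hc1 : 1 ≤ Y.card := Finset.card_pos.2 hne
      rcases hdelta with ⟨h1, h2⟩ | ⟨h1, h2⟩ <;> omega

end TwigAux
namespace TwigAux

lemma xor_unfold (j c e : ℕ) : (j ^^^ c ^^^ e) ^^^ c ^^^ e = j := by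
  rw [xor_swap_right (j ^^^ c ^^^ e), Nat.xor_xor_cancel_right, Nat.xor_xor_cancel_right]

lemma xor_unfold2 (j a e : ℕ) : a ^^^ (j ^^^ a ^^^ e) ^^^ e = j := by
  rw [← Nat.xor_assoc a (j ^^^ a) e, Nat.xor_xor_cancel_right, Nat.xor_comm j a,
    Nat.xor_xor_cancel_left]

lemma exists_move {E : ℕ} {Y : Finset (ℕ × Bool)} (hok : Ok E Y) {j : ℕ}
    (hj : j < Vv E Y) : ∃ Y', MoveA E Y Y' ∧ Vv E Y' = j := by
  by_cases hne : Y.Nonempty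
  · have hSne := hne.image Prod.fst
    obtain ⟨a, ha⟩ : ∃ a, (Y.image Prod.fst).min' (hne.image _) = a := ⟨_, rfl⟩
    obtain ⟨p, hp⟩ : ∃ p, (Y.image Prod.fst).max' (hne.image _) = p := ⟨_, rfl⟩
    have haS : a ∈ Y.image Prod.fst := ha ▸ Finset.min'_mem _ _
    have hpS : p ∈ Y.image Prod.fst := hp ▸ Finset.max'_mem _ _
    have hmin_le : ∀ x ∈ Y.image Prod.fst, a ≤ x := fun x hx => ha ▸ Finset.min'_le _ _ hx
    have hmax_ge : ∀ x ∈ Y.image Prod.fst, x ≤ p := fun x hx => hp ▸ Finset.le_max' _ _ hx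
    have hap : a ≤ p := hmin_le _ hpS
    have hpE : p < E := hp ▸ max_lt_E hok hSne
    obtain ⟨da, hda⟩ := mem_S_iff.1 haS
    obtain ⟨dp, hdp⟩ := mem_S_iff.1 hpS
    have hdaT : ((a, true) ∈ Y) ↔ da = true :=
      ⟨fun hh => (hok.2.1 a true da hh hda).symm, fun hh => hh ▸ hda⟩
    have hdpT : ((p, true) ∈ Y) ↔ dp = true :=
      ⟨fun hh => (hok.2.1 p true dp hh hdp).symm, fun hh => hh ▸ hdp⟩
    obtain ⟨eY, heY⟩ : ∃ eY, (p - a + Y.card + 1 +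
        (if ((a, true) ∈ Y ↔ (p, true) ∈ Y) then 0 else 1)) % 2 = eY := ⟨_, rfl⟩
    have heY1 : eY ≤ 1 := by omega
    rw [Vv_of_nonempty hne, ha, hp, heY] at hj
    -- hj : j < a ^^^ (E - 1 - p) ^^^ eY
    by_cases hu : j ^^^ (E - 1 - p) ^^^ eY < a
    · -- left move at q
      obtain ⟨q, hq⟩ : ∃ q, j ^^^ (E - 1 - p) ^^^ eY = q := ⟨_, rfl⟩
      rw [hq] at hu
      have hqS : q ∉ Y.image Prod.fst := fun hh => absurd (hmin_le q hh) (by omega)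
      have hslot : ∀ d', (q, d') ∉ Y := not_mem_S_iff.1 hqS
      rcases (by omega : q + 1 = a ∨ q + 2 ≤ a) with hq1 | hq2
      · -- q = a - 1, direction forced to da
        refine ⟨insert (q, da) Y, ⟨hok, ?_, q, da, hslot, rfl⟩, ?_⟩
        · apply ok_insert hok (by omega) hslot
          · intro d' h1 h2
            exfalso
            have := hmin_le (q - 1) (mem_S_iff.2 ⟨d', h2⟩)
            omega
          · intro d' h2
            rw [hq1] at h2
            exact (hok.2.1 a d' da h2 hda).symm
        · rw [Vv_insert_left hne ha hp (by omega)]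
          have hcong : ((da = true) ↔ (p, true) ∈ Y) ↔ (((a, true) ∈ Y) ↔ (p, true) ∈ Y) := by
            rw [hdaT]
          rw [if_congr hcong rfl rfl]
          have hmod : (p - q + Y.card + 2 +
              (if ((a, true) ∈ Y) ↔ (p, true) ∈ Y then 0 else 1)) % 2 = eY := by
            omega
          rw [hmod, ← hq, xor_unfold]
      · -- q ≤ a - 2, direction free: choose to match parity
        have hfree : ∀ dd : Bool, Ok E (insert (q, dd) Y) := by
          intro dd
          apply ok_insert hok (by omega) hslot
          · intro d' h1 h2
            exfalso
            have := hmin_le (q - 1) (mem_S_iff.2 ⟨d', h2⟩)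
            omega
          · intro d' h2
            exfalso
            have := hmin_le (q + 1) (mem_S_iff.2 ⟨d', h2⟩)
            omega
        by_cases hpar : (p - q + Y.card + 2) % 2 = eY
        · refine ⟨insert (q, decide ((p, true) ∈ Y)) Y,
            ⟨hok, hfree _, q, _, hslot, rfl⟩, ?_⟩
          rw [Vv_insert_left hne ha hp (by omega)]
          have hcong : ((decide ((p, true) ∈ Y) = true) ↔ (p, true) ∈ Y) := by
            simp
          rw [if_pos hcong]
          have hmod : (p - q + Y.card + 2 + 0) % 2 = eY := by omega
          rw [hmod, ← hq, xor_unfold]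
        · refine ⟨insert (q, !decide ((p, true) ∈ Y)) Y,
            ⟨hok, hfree _, q, _, hslot, rfl⟩, ?_⟩
          rw [Vv_insert_left hne ha hp (by omega)]
          have hcong : ¬ ((!decide ((p, true) ∈ Y)) = true ↔ (p, true) ∈ Y) := by
            simp
          rw [if_neg hcong]
          have hmod : (p - q + Y.card + 2 + 1) % 2 = eY := by omega
          rw [hmod, ← hq, xor_unfold]
    · by_cases hw : j ^^^ a ^^^ eY < E - 1 - p
      · -- right move
        obtain ⟨w, hwq⟩ : ∃ w, j ^^^ a ^^^ eY = w := ⟨_, rfl⟩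
        rw [hwq] at hw
        obtain ⟨q, hqdef⟩ : ∃ q, E - 1 - w = q := ⟨_, rfl⟩
        have hqp : p < q := by omega
        have hqE : q < E := by omega
        have hwq2 : E - 1 - q = w := by omega
        have hqS : q ∉ Y.image Prod.fst := fun hh => absurd (hmax_ge q hh) (by omega)
        have hslot : ∀ d', (q, d') ∉ Y := not_mem_S_iff.1 hqS
        rcases (by omega : q = p + 1 ∨ p + 2 ≤ q) with hq1 | hq2
        · refine ⟨insert (q, dp) Y, ⟨hok, ?_, q, dp, hslot, rfl⟩, ?_⟩
          · apply ok_insert hok hqE hslot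
            · intro d' h1 h2
              rw [show q - 1 = p by omega] at h2
              exact hok.2.1 p d' dp h2 hdp
            · intro d' h2
              exfalso
              have := hmax_ge (q + 1) (mem_S_iff.2 ⟨d', h2⟩)
              omega
          · rw [Vv_insert_right hne ha hp hqp]
            have hcong : (((a, true) ∈ Y) ↔ (dp = true)) ↔
                (((a, true) ∈ Y) ↔ (p, true) ∈ Y) := by
              rw [hdpT]
            rw [if_congr hcong rfl rfl]
            have hmod : (q - a + Y.card + 2 +
                (if ((a, true) ∈ Y) ↔ (p, true) ∈ Y then 0 else 1)) % 2 = eY := by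
              omega
            rw [hmod, hwq2, ← hwq, xor_unfold2]
        · have hfree : ∀ dd : Bool, Ok E (insert (q, dd) Y) := by
            intro dd
            apply ok_insert hok hqE hslot
            · intro d' h1 h2
              exfalso
              have := hmax_ge (q - 1) (mem_S_iff.2 ⟨d', h2⟩)
              omega
            · intro d' h2
              exfalso
              have := hmax_ge (q + 1) (mem_S_iff.2 ⟨d', h2⟩)
              omega
          by_cases hpar : (q - a + Y.card + 2 +
              (if ((a, true) ∈ Y) ↔ True then 0 else 1)) % 2 = eY
          · refine ⟨insert (q, true) Y, ⟨hok, hfree _, q, _, hslot, rfl⟩, ?_⟩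
            rw [Vv_insert_right hne ha hp hqp]
            have hcong : (((a, true) ∈ Y) ↔ (true = true)) ↔ (((a, true) ∈ Y) ↔ True) := by
              simp
            rw [if_congr hcong rfl rfl]
            rw [hpar, hwq2, ← hwq, xor_unfold2]
          · refine ⟨insert (q, false) Y, ⟨hok, hfree _, q, _, hslot, rfl⟩, ?_⟩
            rw [Vv_insert_right hne ha hp hqp]
            have hcong : (((a, true) ∈ Y) ↔ (false = true)) ↔ (¬ ((a, true) ∈ Y ↔ True)) := by
              simp
            rw [if_congr hcong rfl rfl]
            have hmod : (q - a + Y.card + 2 +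
                (if ¬ ((a, true) ∈ Y ↔ True) then 0 else 1)) % 2 = eY := by
              by_cases hmem : (a, true) ∈ Y
              · simp only [if_neg (by simp [hmem] : ¬ ¬ ((a, true) ∈ Y ↔ True))]
                simp only [if_pos (by simp [hmem] : ((a, true) ∈ Y ↔ True))] at hpar
                omega
              · simp only [if_pos (by simp [hmem] : ¬ ((a, true) ∈ Y ↔ True))]
                simp only [if_neg (by simp [hmem] : ¬ ((a, true) ∈ Y ↔ True))] at hpar
                omega
            rw [hmod, hwq2, ← hwq, xor_unfold2]
      · -- middle move
        have hkey := nim_key heY1 hj hu hw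
        obtain ⟨he1, hjab⟩ := hkey
        have hex : ¬ (∀ q d, a < q → q < p → (∀ d', (q, d') ∉ Y) →
            ¬ Ok E (insert (q, d) Y)) := by
          intro hall
          have := no_mid_parity E Y.card Y hok hne a p le_rfl ha hp hall
          omega
        push_neg at hex
        obtain ⟨q, d, hq1, hq2, hslot, hok'⟩ := hex
        refine ⟨insert (q, d) Y, ⟨hok, hok', q, d, hslot, rfl⟩, ?_⟩
        rw [Vv_insert_mid hne ha hp hq1 hq2 (not_mem_S_iff.2 hslot)]
        have hmod : (p - a + Y.card + 2 +
            (if ((a, true) ∈ Y) ↔ (p, true) ∈ Y then 0 else 1)) % 2 = 0 := by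
          omega
        rw [hmod, hjab]
        simp
  · -- Y empty
    rw [Finset.not_nonempty_iff_eq_empty] at hne
    subst hne
    rw [Vv_empty] at hj
    have hE1 : E % 2 = 1 := by omega
    have hj0 : j = 0 := by omega
    refine ⟨{(E / 2, true)}, ⟨hok, ?_, E / 2, true, by simp, rfl⟩, ?_⟩
    · show Ok E (insert (E / 2, true) ∅)
      apply ok_insert hok (by omega) (by simp) (by simp) (by simp)
    · rw [Vv_singleton, hj0]
      rw [show E - 1 - E / 2 = E / 2 by omega]
      simp

end TwigAux
namespace TwigAux

theorem gA_eq_Vv_aux (E : ℕ) : ∀ k (Y : Finset (ℕ × Bool)), E + 1 - Y.card ≤ k →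
    Ok E Y → gA E Y = Vv E Y := by
  intro k
  induction k with
  | zero =>
    intro Y hk hok
    have := hok.card_le
    omega
  | succ k ih =>
    intro Y hk hok
    have hmv : ∀ Y', MoveA E Y Y' → gA E Y' = Vv E Y' := by
      intro Y' hm
      obtain ⟨h1, h2, q, d, hs, rfl⟩ := hm
      have hc1 := h2.card_le
      have hc2 : (insert (q, d) Y).card = Y.card + 1 := Finset.card_insert_of_notMem (hs d)
      exact ih _ (by omega) h2
    rw [gA]
    have hT : {n : ℕ | ∀ Y', MoveA E Y Y' → gA E Y' ≠ n} =
        {n : ℕ | ∀ Y', MoveA E Y Y' → Vv E Y' ≠ n} := by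
      ext n
      simp only [Set.mem_setOf_eq]
      constructor
      · intro h Y' hm
        rw [← hmv Y' hm]
        exact h Y' hm
      · intro h Y' hm
        rw [hmv Y' hm]
        exact h Y' hm
    rw [hT]
    have hVmem : Vv E Y ∈ {n : ℕ | ∀ Y', MoveA E Y Y' → Vv E Y' ≠ n} :=
      fun Y' hm => moveA_Vv_ne hm
    apply le_antisymm
    · exact Nat.sInf_le hVmem
    · by_contra hlt
      push_neg at hlt
      have hmem := Nat.sInf_mem (⟨Vv E Y, hVmem⟩ :
        Set.Nonempty {n : ℕ | ∀ Y', MoveA E Y Y' → Vv E Y' ≠ n})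
      obtain ⟨Y', hm, hv⟩ := exists_move hok hlt
      exact hmem Y' hm hv

theorem gA_eq_Vv {E : ℕ} {Y : Finset (ℕ × Bool)} (hok : Ok E Y) : gA E Y = Vv E Y :=
  gA_eq_Vv_aux E (E + 1 - Y.card) Y le_rfl hok

end TwigAux
namespace TwigAux

lemma pathG_adj {m : ℕ} {u v : Fin m} :
    (PathG m).Adj u v ↔ (u.val + 1 = v.val ∨ v.val + 1 = u.val) := by
  rw [PathG, SimpleGraph.fromRel_adj]
  constructor
  · rintro ⟨-, h⟩
    exact h
  · intro h
    refine ⟨?_, h⟩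
    intro hh
    rw [hh] at h
    omega

def toAbs {m : ℕ} (X : Finset (Fin m × Fin m)) : Finset (ℕ × Bool) :=
  X.image (fun p => if p.1.val < p.2.val then (p.1.val, true) else (p.2.val, false))

lemma toAbs_insert {m : ℕ} (X : Finset (Fin m × Fin m)) (p : Fin m × Fin m) :
    toAbs (insert p X) = insert
      (if p.1.val < p.2.val then (p.1.val, true) else (p.2.val, false)) (toAbs X) :=
  Finset.image_insert _ _ _

section WithAdj

variable {m : ℕ} {X : Finset (Fin m × Fin m)}
  (hE : ∀ p ∈ X, (PathG m).Adj p.1 p.2)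

include hE

lemma mem_toAbs_true {q : ℕ} (h1 : q < m) (h2 : q + 1 < m) :
    ((q, true) ∈ toAbs X) ↔ (⟨q, h1⟩, (⟨q + 1, h2⟩ : Fin m)) ∈ X := by
  constructor
  · intro h
    obtain ⟨p, hp, hfp⟩ := Finset.mem_image.1 h
    have hadj := pathG_adj.1 (hE p hp)
    by_cases hlt : p.1.val < p.2.val
    · rw [if_pos hlt] at hfp
      have e1 := congrArg Prod.fst hfp
      simp at e1
      have e2 : p.2.val = q + 1 := by omega
      have : p = (⟨q, h1⟩, (⟨q + 1, h2⟩ : Fin m)) := by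
        apply Prod.ext
        · exact Fin.ext e1
        · exact Fin.ext e2
      rw [← this]
      exact hp
    · rw [if_neg hlt] at hfp
      have := congrArg Prod.snd hfp
      simp at this
  · intro h
    apply Finset.mem_image.2
    refine ⟨_, h, ?_⟩
    rw [if_pos (by simp : ((⟨q, h1⟩ : Fin m) : Fin m).val < (⟨q + 1, h2⟩ : Fin m).val)]

lemma mem_toAbs_false {q : ℕ} (h1 : q < m) (h2 : q + 1 < m) :
    ((q, false) ∈ toAbs X) ↔ ((⟨q + 1, h2⟩ : Fin m), (⟨q, h1⟩ : Fin m)) ∈ X := by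
  constructor
  · intro h
    obtain ⟨p, hp, hfp⟩ := Finset.mem_image.1 h
    have hadj := pathG_adj.1 (hE p hp)
    by_cases hlt : p.1.val < p.2.val
    · rw [if_pos hlt] at hfp
      have := congrArg Prod.snd hfp
      simp at this
    · rw [if_neg hlt] at hfp
      have e1 := congrArg Prod.fst hfp
      simp at e1
      have e2 : p.1.val = q + 1 := by omega
      have : p = ((⟨q + 1, h2⟩ : Fin m), (⟨q, h1⟩ : Fin m)) := by
        apply Prod.ext
        · exact Fin.ext e2
        · exact Fin.ext e1
      rw [← this]
      exact hp
  · intro h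
    apply Finset.mem_image.2
    refine ⟨_, h, ?_⟩
    rw [if_neg (by simp : ¬ ((⟨q + 1, h2⟩ : Fin m) : Fin m).val < (⟨q, h1⟩ : Fin m).val)]

lemma toAbs_bound {q : ℕ} {d : Bool} (h : (q, d) ∈ toAbs X) : q + 1 < m := by
  obtain ⟨p, hp, hfp⟩ := Finset.mem_image.1 h
  have hadj := pathG_adj.1 (hE p hp)
  have h1 := p.1.isLt
  have h2 := p.2.isLt
  by_cases hlt : p.1.val < p.2.val
  · rw [if_pos hlt] at hfp
    have := congrArg Prod.fst hfp
    simp at this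
    omega
  · rw [if_neg hlt] at hfp
    have := congrArg Prod.fst hfp
    simp at this
    omega

end WithAdj

lemma isLeaf_iff {m : ℕ} (hm : 2 ≤ m) (v : Fin m) :
    IsLeaf (PathG m) v ↔ (v.val = 0 ∨ v.val = m - 1) := by
  constructor
  · intro h
    by_contra hcon
    push_neg at hcon
    obtain ⟨h0, h1⟩ := hcon
    have hv1 : 1 ≤ v.val := by omega
    have hv2 : v.val + 1 ≤ m - 1 := by
      have := v.isLt
      omega
    obtain ⟨w, hw, huniq⟩ := h
    have ha1 : (PathG m).Adj v ⟨v.val - 1, by omega⟩ := pathG_adj.2 (by simp; omega)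
    have ha2 : (PathG m).Adj v ⟨v.val + 1, by omega⟩ := pathG_adj.2 (by simp)
    have e1 := huniq _ ha1
    have e2 := huniq _ ha2
    rw [← e2] at e1
    have := congrArg Fin.val e1
    simp at this
    all_goals omega
  · intro h
    rcases h with h | h
    · refine ⟨⟨1, by omega⟩, pathG_adj.2 (by simp; omega), ?_⟩
      intro w hw
      rcases pathG_adj.1 hw with hh | hh
      · exact Fin.ext (by simp; omega)
      · omega
    · refine ⟨⟨m - 2, by omega⟩, pathG_adj.2 (by simp; omega), ?_⟩
      intro w hw
      rcases pathG_adj.1 hw with hh | hh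
      · omega
      · exact Fin.ext (by simp; omega)

end TwigAux
namespace TwigAux

lemma isState_iff {m : ℕ} (hm : 2 ≤ m) {X : Finset (Fin m × Fin m)}
    (hE : ∀ p ∈ X, (PathG m).Adj p.1 p.2) :
    IsState (PathG m) X ↔ Ok (m - 1) (toAbs X) := by
  constructor
  · rintro ⟨⟨hadj, hswap⟩, hns⟩
    refine ⟨?_, ?_, ?_⟩
    · intro pr hpr
      have := toAbs_bound hE (q := pr.1) (d := pr.2) (by rwa [Prod.mk.eta])
      omega
    · intro q d d' h1 h2
      have hb : q + 1 < m := toAbs_bound hE h1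
      cases d <;> cases d'
      · rfl
      · -- false, true
        have A1 := (mem_toAbs_false hE (by omega) hb).1 h1
        have A2 := (mem_toAbs_true hE (by omega) hb).1 h2
        exact absurd A1 (hswap _ A2)
      · -- true, false
        have A1 := (mem_toAbs_true hE (by omega) hb).1 h1
        have A2 := (mem_toAbs_false hE (by omega) hb).1 h2
        exact absurd A2 (hswap _ A1)
      · rfl
    · intro q d d' h1 h2
      have hb1 : q + 1 < m := toAbs_bound hE h1
      have hb2 : q + 2 < m := by
        have := toAbs_bound hE h2
        omega
      have hnl : ¬ IsLeaf (PathG m) (⟨q + 1, hb1⟩ : Fin m) := by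
        rw [isLeaf_iff hm]
        simp
        omega
      cases d <;> cases d'
      · rfl
      · -- false, true : source at q+1
        exfalso
        have A1 := (mem_toAbs_false hE (by omega) hb1).1 h1
        have A2 := (mem_toAbs_true hE (by omega) hb2).1 h2
        apply (hns _ hnl).2
        intro w hw
        rcases pathG_adj.1 hw with hh | hh
        · -- (q+1) + 1 = w : w = q+2
          have hwe : w = (⟨q + 1 + 1, hb2⟩ : Fin m) := Fin.ext (by simp at hh ⊢; omega)
          rw [hwe]
          exact A2
        · -- w + 1 = q+1 : w = q
          have hwe : w = (⟨q, by omega⟩ : Fin m) := Fin.ext (by simp at hh ⊢; omega)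
          rw [hwe]
          exact A1
      · -- true, false : sink at q+1
        exfalso
        have A1 := (mem_toAbs_true hE (by omega) hb1).1 h1
        have A2 := (mem_toAbs_false hE (by omega) hb2).1 h2
        apply (hns _ hnl).1
        intro u hu
        rcases pathG_adj.1 hu with hh | hh
        · -- u + 1 = q+1 : u = q
          have hue : u = (⟨q, by omega⟩ : Fin m) := Fin.ext (by simp at hh ⊢; omega)
          rw [hue]
          exact A1
        · -- (q+1)+1 = u : u = q+2
          have hue : u = (⟨q + 1 + 1, hb2⟩ : Fin m) := Fin.ext (by simp at hh ⊢; omega)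
          rw [hue]
          exact A2
      · rfl
  · intro hok
    refine ⟨⟨hE, ?_⟩, ?_⟩
    · intro p hp hsw
      rcases pathG_adj.1 (hE p hp) with hv | hv
      · have hb1 : p.1.val < m := p.1.isLt
        have hb2 : p.1.val + 1 < m := by rw [hv]; exact p.2.isLt
        have B1 : (p.1.val, true) ∈ toAbs X := by
          rw [mem_toAbs_true hE hb1 hb2]
          have : ((⟨p.1.val, hb1⟩ : Fin m), (⟨p.1.val + 1, hb2⟩ : Fin m)) = p := by
            apply Prod.ext
            · exact Fin.ext rfl
            · exact Fin.ext (by simp; omega)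
          rw [this]
          exact hp
        have B2 : (p.1.val, false) ∈ toAbs X := by
          rw [mem_toAbs_false hE hb1 hb2]
          have : ((⟨p.1.val + 1, hb2⟩ : Fin m), (⟨p.1.val, hb1⟩ : Fin m)) = Prod.swap p := by
            apply Prod.ext
            · exact Fin.ext (by simp [Prod.swap]; omega)
            · exact Fin.ext rfl
          rw [this]
          exact hsw
        exact absurd (hok.2.1 p.1.val true false B1 B2) (by simp)
      · have hb1 : p.2.val < m := p.2.isLt
        have hb2 : p.2.val + 1 < m := by rw [hv]; exact p.1.isLt
        have B1 : (p.2.val, false) ∈ toAbs X := by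
          rw [mem_toAbs_false hE hb1 hb2]
          have : ((⟨p.2.val + 1, hb2⟩ : Fin m), (⟨p.2.val, hb1⟩ : Fin m)) = p := by
            apply Prod.ext
            · exact Fin.ext (by simp; omega)
            · exact Fin.ext rfl
          rw [this]
          exact hp
        have B2 : (p.2.val, true) ∈ toAbs X := by
          rw [mem_toAbs_true hE hb1 hb2]
          have : ((⟨p.2.val, hb1⟩ : Fin m), (⟨p.2.val + 1, hb2⟩ : Fin m)) = Prod.swap p := by
            apply Prod.ext
            · exact Fin.ext rfl
            · exact Fin.ext (by simp [Prod.swap]; omega)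
          rw [this]
          exact hsw
        exact absurd (hok.2.1 p.2.val true false B2 B1) (by simp)
    · intro v hleaf
      rw [isLeaf_iff hm] at hleaf
      push_neg at hleaf
      obtain ⟨hv0, hv1⟩ := hleaf
      have hvlt := v.isLt
      have hb0 : 1 ≤ v.val := by omega
      have hb1 : v.val + 1 < m := by omega
      constructor
      · intro hsink
        have A1 : ((⟨v.val - 1, by omega⟩ : Fin m), v) ∈ X :=
          hsink _ (pathG_adj.2 (by simp; omega))
        have A2 : ((⟨v.val + 1, hb1⟩ : Fin m), v) ∈ X :=
          hsink _ (pathG_adj.2 (by simp <;> omega))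
        have B1 : (v.val - 1, true) ∈ toAbs X := by
          rw [mem_toAbs_true hE (by omega) (by omega)]
          have : ((⟨v.val - 1, by omega⟩ : Fin m), (⟨v.val - 1 + 1, by omega⟩ : Fin m)) =
              ((⟨v.val - 1, by omega⟩ : Fin m), v) := by
            apply Prod.ext
            · exact Fin.ext rfl
            · exact Fin.ext (by simp; omega)
          rw [this]
          exact A1
        have B2 : (v.val, false) ∈ toAbs X := by
          rw [mem_toAbs_false hE (by omega) hb1]
          have : ((⟨v.val + 1, hb1⟩ : Fin m), (⟨v.val, by omega⟩ : Fin m)) =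
              ((⟨v.val + 1, hb1⟩ : Fin m), v) := by
            apply Prod.ext
            · exact Fin.ext rfl
            · exact Fin.ext (by simp)
          rw [this]
          exact A2
        have B2' : (v.val - 1 + 1, false) ∈ toAbs X := by
          rw [show v.val - 1 + 1 = v.val by omega]
          exact B2
        exact absurd (hok.2.2 (v.val - 1) true false B1 B2') (by simp)
      · intro hsource
        have A1 : (v, (⟨v.val - 1, by omega⟩ : Fin m)) ∈ X :=
          hsource _ (pathG_adj.2 (by simp; omega))
        have A2 : (v, (⟨v.val + 1, hb1⟩ : Fin m)) ∈ X :=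
          hsource _ (pathG_adj.2 (by simp <;> omega))
        have B1 : (v.val - 1, false) ∈ toAbs X := by
          rw [mem_toAbs_false hE (by omega) (by omega)]
          have : ((⟨v.val - 1 + 1, by omega⟩ : Fin m), (⟨v.val - 1, by omega⟩ : Fin m)) =
              (v, (⟨v.val - 1, by omega⟩ : Fin m)) := by
            apply Prod.ext
            · exact Fin.ext (by simp; omega)
            · exact Fin.ext rfl
          rw [this]
          exact A1
        have B2 : (v.val, true) ∈ toAbs X := by
          rw [mem_toAbs_true hE (by omega) hb1]
          have : ((⟨v.val, by omega⟩ : Fin m), (⟨v.val + 1, hb1⟩ : Fin m)) =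
              (v, (⟨v.val + 1, hb1⟩ : Fin m)) := by
            apply Prod.ext
            · exact Fin.ext (by simp)
            · exact Fin.ext rfl
          rw [this]
          exact A2
        have B2' : (v.val - 1 + 1, true) ∈ toAbs X := by
          rw [show v.val - 1 + 1 = v.val by omega]
          exact B2
        exact absurd (hok.2.2 (v.val - 1) false true B1 B2') (by simp)

end TwigAux
namespace TwigAux

theorem grundy_eq_gA {m : ℕ} (hm : 2 ≤ m) : ∀ k (X : Finset (Fin m × Fin m)),
    Fintype.card (Fin m × Fin m) - X.card ≤ k → IsState (PathG m) X →
    grundy (PathG m) X = gA (m - 1) (toAbs X) := by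
  intro k
  induction k with
  | zero =>
    intro X hk hst
    exfalso
    have hle : X.card ≤ Fintype.card (Fin m × Fin m) := Finset.card_le_univ X
    have hcard : X.card = Fintype.card (Fin m × Fin m) := by omega
    have huniv : X = Finset.univ := Finset.eq_univ_of_card X hcard
    have hmem : ((⟨0, by omega⟩ : Fin m), (⟨0, by omega⟩ : Fin m)) ∈ X := by
      rw [huniv]; exact Finset.mem_univ _
    have := pathG_adj.1 (hst.1.1 _ hmem)
    simp at this
  | succ k ih =>
    intro X hk hst
    have hE := hst.1.1
    have hokX : Ok (m - 1) (toAbs X) := (isState_iff hm hE).1 hst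
    rw [grundy, gA]
    congr 1
    ext n
    simp only [Set.mem_setOf_eq]
    constructor
    · intro h Y' hmv
      obtain ⟨hok1, hok2, q, d, hslot, rfl⟩ := hmv
      have hq1 : q + 1 < m := by
        have := hok2.1 (q, d) (Finset.mem_insert_self _ _)
        omega
      have hq0 : q < m := by omega
      -- construct the concrete arrow p
      obtain ⟨p, hfp⟩ : ∃ p : Fin m × Fin m,
          (if p.1.val < p.2.val then (p.1.val, true) else (p.2.val, false)) = (q, d) ∧
          (PathG m).Adj p.1 p.2 := by
        cases d
        · refine ⟨((⟨q + 1, hq1⟩ : Fin m), (⟨q, hq0⟩ : Fin m)), ?_, ?_⟩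
          · rw [if_neg (by simp)]
          · exact pathG_adj.2 (by simp)
        · refine ⟨((⟨q, hq0⟩ : Fin m), (⟨q + 1, hq1⟩ : Fin m)), ?_, ?_⟩
          · rw [if_pos (by simp)]
          · exact pathG_adj.2 (by simp)
      obtain ⟨hfp1, hfp2⟩ := hfp
      have htX' : toAbs (insert p X) = insert (q, d) (toAbs X) := by
        rw [toAbs_insert, hfp1]
      have hpnot : p ∉ X := by
        intro hpin
        exact hslot d (Finset.mem_image.2 ⟨p, hpin, hfp1⟩)
      have hE' : ∀ pp ∈ insert p X, (PathG m).Adj pp.1 pp.2 := by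
        intro pp hpp
        rcases Finset.mem_insert.1 hpp with rfl | hpp
        · exact hfp2
        · exact hE pp hpp
      have hstX' : IsState (PathG m) (insert p X) := by
        rw [isState_iff hm hE', htX']
        exact hok2
      have hIH : grundy (PathG m) (insert p X) = gA (m - 1) (toAbs (insert p X)) := by
        apply ih
        · have h1 : (insert p X).card = X.card + 1 := Finset.card_insert_of_notMem hpnot
          have h2 : (insert p X).card ≤ Fintype.card (Fin m × Fin m) :=
            Finset.card_le_univ _
          omega
        · exact hstX'
      rw [← htX', ← hIH]
      exact h _ ⟨hst, hstX', p, hpnot, rfl⟩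
    · intro h X' hfol
      obtain ⟨-, hst', p, hpn, rfl⟩ := hfol
      have hE' := hst'.1.1
      have hpadj := hE' p (Finset.mem_insert_self _ _)
      have hok2 : Ok (m - 1) (toAbs (insert p X)) := (isState_iff hm hE').1 hst'
      have hIH : grundy (PathG m) (insert p X) = gA (m - 1) (toAbs (insert p X)) := by
        apply ih
        · have h1 : (insert p X).card = X.card + 1 := Finset.card_insert_of_notMem hpn
          have h2 : (insert p X).card ≤ Fintype.card (Fin m × Fin m) :=
            Finset.card_le_univ _
          omega
        · exact hst'
      rw [hIH]
      rcases pathG_adj.1 hpadj with hv | hv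
      · -- rightward arrow : q := p.1.val, d := true
        have hb1 : p.1.val < m := p.1.isLt
        have hb2 : p.1.val + 1 < m := by rw [hv]; exact p.2.isLt
        have hpe : ((⟨p.1.val, hb1⟩ : Fin m), (⟨p.1.val + 1, hb2⟩ : Fin m)) = p := by
          apply Prod.ext
          · exact Fin.ext rfl
          · exact Fin.ext (by simp; omega)
        have htX' : toAbs (insert p X) = insert (p.1.val, true) (toAbs X) := by
          rw [toAbs_insert, if_pos (by omega)]
        have hslot : ∀ d', (p.1.val, d') ∉ toAbs X := by
          intro d' hd'
          cases d'
          · have hmem := (mem_toAbs_false hE hb1 hb2).1 hd'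
            have hswp : ((⟨p.1.val + 1, hb2⟩ : Fin m), (⟨p.1.val, hb1⟩ : Fin m)) =
                Prod.swap p := congrArg Prod.swap hpe
            rw [hswp] at hmem
            exact hst'.1.2 p (Finset.mem_insert_self _ _)
              (Finset.mem_insert_of_mem hmem)
          · have hmem := (mem_toAbs_true hE hb1 hb2).1 hd'
            rw [hpe] at hmem
            exact hpn hmem
        exact h _ ⟨hokX, htX' ▸ hok2, p.1.val, true, hslot, htX'⟩
      · -- leftward arrow : q := p.2.val, d := false
        have hb1 : p.2.val < m := p.2.isLt
        have hb2 : p.2.val + 1 < m := by rw [hv]; exact p.1.isLt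
        have hpe : ((⟨p.2.val + 1, hb2⟩ : Fin m), (⟨p.2.val, hb1⟩ : Fin m)) = p := by
          apply Prod.ext
          · exact Fin.ext (by simp; omega)
          · exact Fin.ext rfl
        have htX' : toAbs (insert p X) = insert (p.2.val, false) (toAbs X) := by
          rw [toAbs_insert, if_neg (by omega)]
        have hslot : ∀ d', (p.2.val, d') ∉ toAbs X := by
          intro d' hd'
          cases d'
          · have hmem := (mem_toAbs_false hE hb1 hb2).1 hd'
            rw [hpe] at hmem
            exact hpn hmem
          · have hmem := (mem_toAbs_true hE hb1 hb2).1 hd'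
            have hswp : ((⟨p.2.val, hb1⟩ : Fin m), (⟨p.2.val + 1, hb2⟩ : Fin m)) =
                Prod.swap p := congrArg Prod.swap hpe
            rw [hswp] at hmem
            exact hst'.1.2 p (Finset.mem_insert_self _ _)
              (Finset.mem_insert_of_mem hmem)
        exact h _ ⟨hokX, htX' ▸ hok2, p.2.val, false, hslot, htX'⟩

end TwigAux
/-- `g(T_n) = n` for every `n ≥ 0`. -/
theorem grundy_twig (n : ℕ) : grundy (PathG (n + 2)) (twigState n) = n := by
  have hm : 2 ≤ n + 2 := by omega
  have hE : ∀ p ∈ twigState n, (PathG (n + 2)).Adj p.1 p.2 := by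
    intro p hp
    rw [twigState, Finset.mem_singleton] at hp
    subst hp
    exact TwigAux.pathG_adj.2 (by simp)
  have htoAbs : TwigAux.toAbs (twigState n) = {(n, true)} := by
    rw [twigState, TwigAux.toAbs, Finset.image_singleton, if_pos (by simp)]
  have hok : TwigAux.Ok (n + 2 - 1) ({(n, true)} : Finset (ℕ × Bool)) := by
    refine ⟨?_, ?_, ?_⟩
    · intro p hp
      rw [Finset.mem_singleton] at hp
      subst hp
      omega
    · intro q d d' h1 h2
      rw [Finset.mem_singleton] at h1 h2
      have e1 := congrArg Prod.snd h1
      have e2 := congrArg Prod.snd h2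
      simp at e1 e2
      rw [e1, e2]
    · intro q d d' h1 h2
      rw [Finset.mem_singleton] at h1 h2
      have e1 := congrArg Prod.fst h1
      have e2 := congrArg Prod.fst h2
      simp at e1 e2
      omega
  have hst : IsState (PathG (n + 2)) (twigState n) := by
    rw [TwigAux.isState_iff hm hE, htoAbs]
    exact hok
  rw [TwigAux.grundy_eq_gA hm _ (twigState n) le_rfl hst, htoAbs,
    TwigAux.gA_eq_Vv hok, TwigAux.Vv_singleton]
  rw [show n + 2 - 1 - 1 - n = 0 by omega]
  simp
end

section
/- g(R_n) = n̄ for every integer n ≥ 1. -/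
namespace RodAux

abbrev E := Option Bool

def Compat : E → E → Prop := fun x y => ∀ a b, x = some a → y = some b → a = b

lemma compat_none_left (y : E) : Compat none y := by intro a b h; simp at h

lemma compat_none_right (x : E) : Compat x none := by intro a b _ h; simp at h

lemma compat_some_some {d e : Bool} (h : d = e) : Compat (some d) (some e) := by
  intro a b ha hb; simp_all

lemma compat_some_elim {d e : Bool} (h : Compat (some d) (some e)) : d = e :=
  h d e rfl rfl

def bitv (d e : Bool) : ℕ := if d = e then 0 else 1

lemma bitv_le_one (d e : Bool) : bitv d e ≤ 1 := by unfold bitv; split <;> omega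

lemma bitv_self (d : Bool) : bitv d d = 0 := by simp [bitv]

def innerAux (d : Bool) : ℕ → List E → ℕ
  | ℓ, [] => ℓ
  | ℓ, none :: t => innerAux d (ℓ+1) t
  | ℓ, some e :: t => ((ℓ + bitv d e) % 2) ^^^ innerAux e 0 t

def phiAux : ℕ → List E → ℕ
  | ℓ, [] => ℓ % 2
  | ℓ, none :: t => phiAux (ℓ+1) t
  | ℓ, some e :: t => ℓ ^^^ innerAux e 0 t

def phi (l : List E) : ℕ := phiAux 0 l

lemma inner_rep (d : Bool) (ℓ k : ℕ) :
    innerAux d ℓ (List.replicate k none) = ℓ + k := by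
  induction k generalizing ℓ with
  | zero => simp [innerAux]
  | succ m ih => rw [List.replicate_succ]; show innerAux d (ℓ+1) _ = _; rw [ih]; omega

lemma inner_rep_cons (d : Bool) (ℓ k : ℕ) (f : Bool) (s : List E) :
    innerAux d ℓ (List.replicate k none ++ some f :: s)
      = ((ℓ + k + bitv d f) % 2) ^^^ innerAux f 0 s := by
  induction k generalizing ℓ with
  | zero => simp [innerAux]
  | succ m ih =>
      rw [List.replicate_succ]
      simp only [List.cons_append]
      show innerAux d (ℓ+1) (List.replicate m none ++ some f :: s) = _
      rw [ih]
      congr 2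
      omega

lemma phi_rep (ℓ k : ℕ) :
    phiAux ℓ (List.replicate k none) = (ℓ + k) % 2 := by
  induction k generalizing ℓ with
  | zero => simp [phiAux]
  | succ m ih => rw [List.replicate_succ]; show phiAux (ℓ+1) _ = _; rw [ih]; congr 1; omega

lemma phi_rep_cons (ℓ k : ℕ) (f : Bool) (s : List E) :
    phiAux ℓ (List.replicate k none ++ some f :: s) = (ℓ + k) ^^^ innerAux f 0 s := by
  induction k generalizing ℓ with
  | zero => simp [phiAux]
  | succ m ih =>
      rw [List.replicate_succ]
      simp only [List.cons_append]
      show phiAux (ℓ+1) (List.replicate m none ++ some f :: s) = _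
      rw [ih]
      have h2 : ℓ + 1 + m = ℓ + (m+1) := by omega
      rw [h2]

lemma inner_append (d : Bool) (ℓ : ℕ) (P : List E) (h : Bool) (s : List E) :
    innerAux d ℓ (P ++ some h :: s)
      = innerAux d ℓ (P ++ [some h]) ^^^ innerAux h 0 s := by
  induction P generalizing d ℓ with
  | nil => show _ ^^^ _ = (_ ^^^ innerAux h 0 []) ^^^ _; simp [innerAux]
  | cons x P ih =>
      cases x with
      | none => show innerAux d (ℓ+1) _ = innerAux d (ℓ+1) _ ^^^ _; exact ih d (ℓ+1)
      | some e =>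
          show _ ^^^ innerAux e 0 (P ++ some h :: s) = (_ ^^^ innerAux e 0 (P ++ [some h])) ^^^ _
          rw [ih e 0, Nat.xor_assoc]

lemma phi_append (ℓ : ℕ) (P : List E) (h : Bool) (s : List E) :
    phiAux ℓ (P ++ some h :: s) = phiAux ℓ (P ++ [some h]) ^^^ innerAux h 0 s := by
  induction P generalizing ℓ with
  | nil => show _ ^^^ _ = (_ ^^^ innerAux h 0 []) ^^^ _; simp [innerAux, phiAux]
  | cons x P ih =>
      cases x with
      | none => exact ih (ℓ+1)
      | some e =>
          show _ ^^^ innerAux e 0 (P ++ some h :: s) = (_ ^^^ innerAux e 0 (P ++ [some h])) ^^^ _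
          rw [inner_append e 0 P h s, Nat.xor_assoc]

lemma xor_le_one {a b : ℕ} (ha : a ≤ 1) (hb : b ≤ 1) : a ^^^ b ≤ 1 := by
  interval_cases a <;> interval_cases b <;> decide

lemma inner_closed_le (P : List E) (d : Bool) (ℓ : ℕ) (h : Bool) :
    innerAux d ℓ (P ++ [some h]) ≤ 1 := by
  induction P generalizing d ℓ with
  | nil =>
      show ((ℓ + bitv d h) % 2) ^^^ innerAux h 0 [] ≤ 1
      show ((ℓ + bitv d h) % 2) ^^^ 0 ≤ 1
      simp [Nat.mod_lt]; omega
  | cons x P ih =>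
      cases x with
      | none => exact ih d (ℓ+1)
      | some e =>
          show ((ℓ + bitv d e) % 2) ^^^ innerAux e 0 (P ++ [some h]) ≤ 1
          exact xor_le_one (by omega) (ih e 0)

lemma decompL (l : List E) :
    (∃ k, l = List.replicate k none) ∨
    (∃ k g t, l = List.replicate k none ++ some g :: t) := by
  induction l with
  | nil => exact Or.inl ⟨0, rfl⟩
  | cons x t ih =>
      cases x with
      | some g => exact Or.inr ⟨0, g, t, rfl⟩
      | none =>
          rcases ih with ⟨k, rfl⟩ | ⟨k, g, s, rfl⟩
          · exact Or.inl ⟨k+1, by rw [List.replicate_succ]⟩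
          · exact Or.inr ⟨k+1, g, s, by rw [List.replicate_succ]; simp⟩

lemma decompR (l : List E) :
    (∃ k, l = List.replicate k none) ∨
    (∃ s h b, l = s ++ some h :: List.replicate b none) := by
  induction l using List.reverseRecOn with
  | nil => exact Or.inl ⟨0, rfl⟩
  | append_singleton s x ih =>
      cases x with
      | some h => exact Or.inr ⟨s, h, 0, rfl⟩
      | none =>
          rcases ih with ⟨k, rfl⟩ | ⟨s', h, b, rfl⟩
          · exact Or.inl ⟨k+1, by rw [List.replicate_succ']⟩
          · refine Or.inr ⟨s', h, b+1, ?_⟩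
            rw [List.replicate_succ' (n := b)]
            simp

lemma rep_cons_eq (j : ℕ) (B : List E) :
    List.replicate j (none : E) ++ none :: B = List.replicate (j+1) none ++ B := by
  rw [List.replicate_succ' (n := j)]
  simp

end RodAux
namespace RodAux

lemma xor_one_even (a : ℕ) (h : a % 2 = 0) : a ^^^ 1 = a + 1 := by
  apply Nat.eq_of_testBit_eq
  intro i
  cases i with
  | zero => simp [Nat.testBit_zero, h, Nat.succ_mod_two_eq_one_iff, h]
  | succ j =>
    rw [Nat.testBit_xor]
    have h1 : Nat.testBit 1 (j+1) = false := by simp [Nat.testBit_succ]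
    have h2 : (a+1) / 2 = a / 2 := by omega
    rw [h1, Nat.testBit_succ, Nat.testBit_succ, h2]
    simp

lemma xor_one_odd (a : ℕ) (h : a % 2 = 1) : a ^^^ 1 = a - 1 := by
  have h0 : (a - 1) % 2 = 0 := by omega
  have h2 := xor_one_even (a-1) h0
  have h1 : a - 1 + 1 = a := by omega
  rw [h1] at h2
  conv_lhs => rw [← h2, xor_cancel_right]

lemma xor_le_of_le_one (a b : ℕ) (hb : b ≤ 1) : a ^^^ b ≤ a + 1 := by
  interval_cases b
  · simp
  · rcases Nat.mod_two_eq_zero_or_one a with h | h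
    · rw [xor_one_even a h]
    · rw [xor_one_odd a h]; omega

lemma xor_parity (a b : ℕ) : (a ^^^ b) % 2 = (a + b) % 2 := Nat.xor_mod_two_eq

lemma arith_EE (j k : ℕ) (e : Bool) : j ^^^ k ≠ (j + 1 + k) % 2 := by
  intro h
  have := congrArg (· % 2) h
  simp only [Nat.xor_mod_two_eq] at this
  omega

lemma arith_EA (j k : ℕ) (e f : Bool) (hk : k = 0 → e = f) :
    j + 1 + k ≠ j ^^^ ((k + bitv e f) % 2) := by
  by_cases hef : e = f
  · have hb : bitv e f = 0 := by simp [bitv, hef]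
    rw [hb]
    intro h
    have := congrArg (· % 2) h
    simp only [Nat.xor_mod_two_eq] at this
    omega
  · have hb : bitv e f = 1 := by simp [bitv, hef]
    have hk1 : 1 ≤ k := by
      rcases Nat.eq_zero_or_pos k with h0 | h0
      · exact absurd (hk h0) hef
      · exact h0
    rw [hb]
    have hle : j ^^^ ((k + 1) % 2) ≤ j + 1 := xor_le_of_le_one _ _ (by omega)
    omega

lemma arith_AE (r k : ℕ) (d e : Bool) (hr : r = 0 → e = d) :
    ((r + bitv d e) % 2) ^^^ k ≠ r + 1 + k := by
  by_cases hde : d = e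
  · have hb : bitv d e = 0 := by simp [bitv, hde]
    rw [hb]
    intro h
    have := congrArg (· % 2) h
    simp only [Nat.xor_mod_two_eq] at this
    omega
  · have hb : bitv d e = 1 := by simp [bitv, hde]
    have hr1 : 1 ≤ r := by
      rcases Nat.eq_zero_or_pos r with h0 | h0
      · exact absurd (hr h0).symm hde
      · exact h0
    rw [hb]
    have hle : ((r + 1) % 2) ^^^ k ≤ k + 1 := by
      rw [Nat.xor_comm]
      exact xor_le_of_le_one _ _ (by omega)
    omega

lemma bit_xor_bit (a b : ℕ) : (a % 2) ^^^ (b % 2) = (a + b) % 2 := by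
  rcases Nat.mod_two_eq_zero_or_one a with h | h <;>
    rcases Nat.mod_two_eq_zero_or_one b with h' | h' <;>
    rw [h, h'] <;> simp <;> omega

lemma bitv_triangle (d e f : Bool) : (bitv d e + bitv e f) % 2 = bitv d f % 2 := by
  cases d <;> cases e <;> cases f <;> simp [bitv]

lemma arith_AA (r k : ℕ) (d e f : Bool) :
    ((r + bitv d e) % 2) ^^^ ((k + bitv e f) % 2) ≠ (r + 1 + k + bitv d f) % 2 := by
  rw [bit_xor_bit]
  have h1 := bitv_triangle d e f
  intro h
  omega

lemma xor_split (a b p v : ℕ) (hp : p ≤ 1) (hv : v < a ^^^ (b ^^^ p)) :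
    (∃ w, w < a ∧ v = w ^^^ (b ^^^ p)) ∨
    (∃ w, w < b ∧ v = a ^^^ (w ^^^ p)) ∨
    (p = 1 ∧ v = a ^^^ b) := by
  rcases Nat.lt_xor_cases hv with h1 | h1
  · exact Or.inl ⟨v ^^^ (b ^^^ p), h1, by rw [xor_cancel_right]⟩
  · rcases Nat.lt_xor_cases h1 with h2 | h2
    · refine Or.inr (Or.inl ⟨v ^^^ a ^^^ p, h2, ?_⟩)
      rw [xor_cancel_right, Nat.xor_comm v a, ← Nat.xor_assoc, Nat.xor_self, Nat.zero_xor]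
    · have hp0 : p = 1 := by omega
      have h0 : v ^^^ a ^^^ b = 0 := by omega
      rw [xor_eq_zero_iff] at h0
      refine Or.inr (Or.inr ⟨hp0, ?_⟩)
      have : v ^^^ a ^^^ a = b ^^^ a := by rw [h0]
      rw [xor_cancel_right] at this
      rw [this, Nat.xor_comm]

end RodAux
namespace RodAux

open List

lemma chain'_rep (k : ℕ) : List.Chain' Compat (List.replicate k none) := by
  induction k with
  | zero => exact List.isChain_nil
  | succ m ih =>
      rw [List.replicate_succ]
      exact List.isChain_cons.2 ⟨fun y _ => compat_none_left y, ih⟩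

lemma chain'_rep_append (k : ℕ) {l : List E} (h : List.Chain' Compat l) :
    List.Chain' Compat (List.replicate k none ++ l) := by
  induction k with
  | zero => simpa
  | succ m ih =>
      rw [List.replicate_succ, List.cons_append]
      exact List.isChain_cons.2 ⟨fun y _ => compat_none_left y, ih⟩

lemma head?_rep_arrow (r : ℕ) (g : Bool) (t : List E) :
    (List.replicate r (none : E) ++ some g :: t).head? =
      some (if r = 0 then some g else none) := by
  cases r <;> simp [List.replicate_succ]

lemma chain'_arrow_rep (e : Bool) (p : ℕ) :
    List.Chain' Compat (some e :: List.replicate p none) := by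
  cases p with
  | zero => exact List.isChain_singleton _
  | succ m =>
      rw [List.replicate_succ]
      refine List.isChain_cons.2 ⟨fun y hy => ?_, ?_⟩
      · simp at hy; subst hy; exact compat_none_right _
      · rw [← List.replicate_succ]; exact chain'_rep (m+1)

lemma chain'_arrow_rep_arrow (e : Bool) (r : ℕ) (g : Bool) (t : List E)
    (h : List.Chain' Compat (some g :: t)) (hre : r = 0 → e = g) :
    List.Chain' Compat (some e :: (List.replicate r none ++ some g :: t)) := by
  refine List.isChain_cons.2 ⟨?_, chain'_rep_append r h⟩
  intro y hy
  rw [head?_rep_arrow] at hy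
  simp only [Option.mem_def, Option.some.injEq] at hy
  subst hy
  split_ifs with h0
  · exact compat_some_some (hre h0)
  · exact compat_none_right _

lemma chain'_mid {P Q : List E} {x y : E}
    (h : List.Chain' Compat (P ++ x :: y :: Q)) : Compat x y :=
  (List.isChain_cons_cons.1 (List.isChain_append.1 h).2.1).1

lemma chain'_suffix {P l : List E} (h : List.Chain' Compat (P ++ l)) :
    List.Chain' Compat l := (List.isChain_append.1 h).2.1

lemma chain'_replace_tail {P X Y : List E} {h : Bool}
    (hc : List.Chain' Compat (P ++ some h :: X))
    (hY : List.Chain' Compat (some h :: Y)) :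
    List.Chain' Compat (P ++ some h :: Y) := by
  obtain ⟨h1, _, h3⟩ := List.isChain_append.1 hc
  refine List.isChain_append.2 ⟨h1, hY, ?_⟩
  intro x hx y hy
  simp only [List.head?_cons, Option.mem_def, Option.some.injEq] at hy
  subst hy
  exact h3 x hx (some h) (by simp)

lemma phi_move_ne (A B : List E) (e : Bool)
    (hch : List.Chain' Compat (A ++ some e :: B)) :
    phi (A ++ some e :: B) ≠ phi (A ++ none :: B) := by
  rcases decompR A with ⟨j, rfl⟩ | ⟨A₀, d, r, rfl⟩ <;>
    rcases decompL B with ⟨k, rfl⟩ | ⟨k, f, C, rfl⟩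
  · -- EE
    have h1 : phi (List.replicate j none ++ some e :: List.replicate k none) = j ^^^ k := by
      unfold phi; rw [phi_rep_cons, inner_rep]; simp
    have h2 : phi (List.replicate j none ++ none :: List.replicate k none) = (j + 1 + k) % 2 := by
      unfold phi; rw [rep_cons_eq, ← List.replicate_add, phi_rep]; simp
    rw [h1, h2]; exact arith_EE j k e
  · -- EA
    have hk : k = 0 → e = f := by
      intro h0; subst h0
      simp only [List.replicate, List.nil_append] at hch
      exact compat_some_elim (chain'_mid hch)
    have h1 : phi (List.replicate j none ++ some e :: (List.replicate k none ++ some f :: C))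
        = (j ^^^ ((k + bitv e f) % 2)) ^^^ innerAux f 0 C := by
      unfold phi; rw [phi_rep_cons, inner_rep_cons]; simp [Nat.xor_assoc]
    have h2 : phi (List.replicate j none ++ none :: (List.replicate k none ++ some f :: C))
        = (j + 1 + k) ^^^ innerAux f 0 C := by
      unfold phi
      rw [rep_cons_eq, ← List.append_assoc, ← List.replicate_add, phi_rep_cons]
      simp
    rw [h1, h2]
    intro h
    exact arith_EA j k e f hk (Nat.xor_left_inj.1 h).symm
  · -- AE
    have hr : r = 0 → e = d := by
      intro h0; subst h0
      simp only [List.replicate, List.append_nil] at hch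
      have : List.Chain' Compat (A₀ ++ some d :: some e :: List.replicate k none) := by
        simpa using hch
      exact (compat_some_elim (chain'_mid this)).symm
    have hassoc : (A₀ ++ some d :: List.replicate r none) ++ some e :: List.replicate k none
        = A₀ ++ some d :: (List.replicate r none ++ some e :: List.replicate k none) := by simp
    have hassoc2 : (A₀ ++ some d :: List.replicate r none) ++ none :: List.replicate k none
        = A₀ ++ some d :: (List.replicate (r+1+k) none) := by
      rw [List.append_assoc, List.cons_append, rep_cons_eq, ← List.replicate_add]
    have h1 : phi ((A₀ ++ some d :: List.replicate r none) ++ some e :: List.replicate k none)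
        = phiAux 0 (A₀ ++ [some d]) ^^^ (((r + bitv d e) % 2) ^^^ k) := by
      unfold phi; rw [hassoc, phi_append, inner_rep_cons, inner_rep]; simp
    have h2 : phi ((A₀ ++ some d :: List.replicate r none) ++ none :: List.replicate k none)
        = phiAux 0 (A₀ ++ [some d]) ^^^ (r + 1 + k) := by
      unfold phi; rw [hassoc2, phi_append, inner_rep]; simp
    rw [h1, h2]
    intro h
    exact arith_AE r k d e hr (Nat.xor_right_inj.1 h)
  · -- AA
    have hassoc : (A₀ ++ some d :: List.replicate r none) ++ some e :: (List.replicate k none ++ some f :: C)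
        = A₀ ++ some d :: (List.replicate r none ++ some e :: (List.replicate k none ++ some f :: C)) := by
      simp
    have hassoc2 : (A₀ ++ some d :: List.replicate r none) ++ none :: (List.replicate k none ++ some f :: C)
        = A₀ ++ some d :: (List.replicate (r+1+k) none ++ some f :: C) := by
      rw [List.append_assoc, List.cons_append, rep_cons_eq, ← List.append_assoc,
        ← List.replicate_add]
    have h1 : phi ((A₀ ++ some d :: List.replicate r none) ++ some e :: (List.replicate k none ++ some f :: C))
        = phiAux 0 (A₀ ++ [some d]) ^^^
            ((((r + bitv d e) % 2) ^^^ ((k + bitv e f) % 2)) ^^^ innerAux f 0 C) := by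
      unfold phi
      rw [hassoc, phi_append, inner_rep_cons, inner_rep_cons]
      simp [Nat.xor_assoc]
    have h2 : phi ((A₀ ++ some d :: List.replicate r none) ++ none :: (List.replicate k none ++ some f :: C))
        = phiAux 0 (A₀ ++ [some d]) ^^^ (((r + 1 + k + bitv d f) % 2) ^^^ innerAux f 0 C) := by
      unfold phi
      rw [hassoc2, phi_append, inner_rep_cons]
      simp
    rw [h1, h2]
    intro h
    have h3 := Nat.xor_right_inj.1 h
    exact arith_AA r k d e f (Nat.xor_left_inj.1 h3)

end RodAux
namespace RodAux

lemma xor_left_comm (a b c : ℕ) : a ^^^ (b ^^^ c) = b ^^^ (a ^^^ c) := by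
  rw [← Nat.xor_assoc, Nat.xor_comm a b, Nat.xor_assoc]

lemma exists_bitv (g : Bool) (r : ℕ) : ∃ e, bitv e g = r % 2 ∧ bitv g e = r % 2 := by
  rcases Nat.mod_two_eq_zero_or_one r with h | h
  · exact ⟨g, by simp [bitv, h]⟩
  · exact ⟨!g, by cases g <;> simp [bitv, h]⟩

lemma inner_nil (h : Bool) : innerAux h 0 ([] : List E) = 0 := rfl

lemma inner_single (g h : Bool) (k : ℕ) :
    innerAux g 0 (List.replicate k none ++ [some h]) = (k + bitv g h) % 2 := by
  have : (List.replicate k (none : E) ++ [some h]) =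
      List.replicate k none ++ some h :: [] := rfl
  rw [this, inner_rep_cons]
  simp [inner_nil]

lemma find_flip : ∀ N (P : List E), P.length ≤ N → ∀ (g h : Bool) (T : List E),
    List.Chain' Compat (some g :: (P ++ some h :: T)) →
    innerAux g 0 (P ++ [some h]) = 1 →
    ∃ P₁ P₂ e, P = P₁ ++ none :: P₂ ∧
      List.Chain' Compat (some g :: ((P₁ ++ some e :: P₂) ++ some h :: T)) ∧
      innerAux g 0 ((P₁ ++ some e :: P₂) ++ [some h]) = 0 := by
  intro N
  induction N with
  | zero =>
      intro P hlen g h T hch hval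
      have hP : P = [] := List.eq_nil_of_length_eq_zero (by omega)
      subst hP
      have hgh : g = h := compat_some_elim (chain'_mid (P := []) hch)
      simp [innerAux, bitv, hgh] at hval
  | succ N ih =>
      intro P hlen g h T hch hval
      rcases decompL P with ⟨k, rfl⟩ | ⟨k, f, Q, rfl⟩
      · -- P = replicate k none
        rw [inner_single] at hval
        have hk0 : k ≠ 0 := by
          intro h0; subst h0
          have hgh : g = h := compat_some_elim (chain'_mid (P := []) (by simpa using hch))
          simp [bitv, hgh] at hval
        obtain ⟨m, rfl⟩ : ∃ m, k = m + 1 := ⟨k - 1, by omega⟩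
        have hsuf : List.Chain' Compat (some h :: T) := by
          have : List.Chain' Compat ((some g :: List.replicate (m+1) none) ++ some h :: T) := by
            simpa using hch
          exact chain'_suffix this
        have hre : m = 0 → g = h := by
          intro h0; subst h0
          have hb1 := bitv_le_one g h
          have : bitv g h = 0 := by omega
          simpa [bitv] using this
        refine ⟨[], List.replicate m none, g, by rw [List.replicate_succ]; rfl, ?_, ?_⟩
        · refine List.isChain_cons.2 ⟨?_, ?_⟩
          · intro y hy; simp at hy; subst hy; exact compat_some_some rfl
          · exact chain'_arrow_rep_arrow g m h T hsuf hre
        · have : ([] ++ some g :: List.replicate m none) ++ [some h]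
              = some g :: (List.replicate m none ++ [some h]) := by simp
          rw [this]
          show ((0 + bitv g g) % 2) ^^^ innerAux g 0 (List.replicate m none ++ [some h]) = 0
          rw [inner_single, bitv_self]
          have : (m + bitv g h) % 2 = 0 := by
            have hb1 := bitv_le_one g h
            omega
          rw [this]
          simp
      · -- P = replicate k none ++ some f :: Q
        have hass : (List.replicate k none ++ some f :: Q) ++ [some h]
            = List.replicate k none ++ some f :: (Q ++ [some h]) := by simp
        rw [hass, inner_rep_cons] at hval
        have hple : innerAux f 0 (Q ++ [some h]) ≤ 1 := inner_closed_le Q f 0 h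
        have hchf : List.Chain' Compat (some f :: (Q ++ some h :: T)) := by
          have : List.Chain' Compat ((some g :: List.replicate k none) ++
              some f :: (Q ++ some h :: T)) := by simpa using hch
          exact chain'_suffix this
        by_cases hp : innerAux f 0 (Q ++ [some h]) = 1
        · -- recurse
          have hβ : (0 + k + bitv g f) % 2 = 0 := by
            rw [hp] at hval
            have hb2 : (0 + k + bitv g f) % 2 ≤ 1 := by omega
            rcases Nat.le_one_iff_eq_zero_or_eq_one.1 hb2 with h0 | h0
            · exact h0
            · rw [h0] at hval; simp at hval
          have hlenQ : Q.length ≤ N := by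
            have := hlen
            simp [List.length_append] at this
            omega
          obtain ⟨Q₁, Q₂, e, hQeq, hQch, hQval⟩ := ih Q hlenQ f h T hchf hp
          refine ⟨List.replicate k none ++ some f :: Q₁, Q₂, e, ?_, ?_, ?_⟩
          · rw [hQeq]; simp
          · have goal_eq : ((List.replicate k none ++ some f :: Q₁) ++ some e :: Q₂) ++ some h :: T
                = List.replicate k none ++ some f :: (((Q₁ ++ some e :: Q₂) ++ some h :: T)) := by
              simp
            rw [goal_eq]
            have hch2 : List.Chain' Compat ((some g :: List.replicate k none) ++
                some f :: ((Q₁ ++ some e :: Q₂) ++ some h :: T)) := by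
              apply chain'_replace_tail (X := Q ++ some h :: T)
              · simpa using hch
              · exact hQch
            simpa using hch2
          · have goal_eq : ((List.replicate k none ++ some f :: Q₁) ++ some e :: Q₂) ++ [some h]
                = List.replicate k none ++ some f :: ((Q₁ ++ some e :: Q₂) ++ [some h]) := by
              simp
            rw [goal_eq, inner_rep_cons, hQval, hβ]
            simp
        · -- head gap move
          have hp0 : innerAux f 0 (Q ++ [some h]) = 0 := by omega
          have hβ : (0 + k + bitv g f) % 2 = 1 := by
            rw [hp0] at hval
            simpa using hval
          have hk0 : k ≠ 0 := by
            intro h0; subst h0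
            have hgf : g = f := compat_some_elim (chain'_mid (P := []) (by simpa using hch))
            simp [bitv, hgf] at hβ
          obtain ⟨m, rfl⟩ : ∃ m, k = m + 1 := ⟨k - 1, by omega⟩
          have hre : m = 0 → g = f := by
            intro h0; subst h0
            have hb1 := bitv_le_one g f
            have : bitv g f = 0 := by omega
            simpa [bitv] using this
          refine ⟨[], List.replicate m none ++ some f :: Q, g, ?_, ?_, ?_⟩
          · rw [List.replicate_succ]; rfl
          · have goal_eq : (([] : List E) ++ some g :: (List.replicate m none ++ some f :: Q)) ++ some h :: T
                = some g :: (List.replicate m none ++ some f :: (Q ++ some h :: T)) := by simp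
            rw [goal_eq]
            refine List.isChain_cons.2 ⟨?_, ?_⟩
            · intro y hy; simp at hy; subst hy; exact compat_some_some rfl
            · exact chain'_arrow_rep_arrow g m f _ hchf hre
          · have goal_eq : (([] : List E) ++ some g :: (List.replicate m none ++ some f :: Q)) ++ [some h]
                = some g :: (List.replicate m none ++ some f :: (Q ++ [some h])) := by simp
            rw [goal_eq]
            show ((0 + bitv g g) % 2) ^^^
              innerAux g 0 (List.replicate m none ++ some f :: (Q ++ [some h])) = 0
            rw [bitv_self, inner_rep_cons, hp0]
            have : (0 + m + bitv g f) % 2 = 0 := by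
              have hb1 := bitv_le_one g f
              omega
            rw [this]
            simp

lemma phi_move_exists (l : List E) (hch : List.Chain' Compat l) (v : ℕ) (hv : v < phi l) :
    ∃ A B e, l = A ++ none :: B ∧ List.Chain' Compat (A ++ some e :: B) ∧
      phi (A ++ some e :: B) = v := by
  rcases decompL l with ⟨m, rfl⟩ | ⟨a, g, t, rfl⟩
  · -- whole rod
    rw [phi, phi_rep] at hv
    have hm : m % 2 = 1 ∧ v = 0 := by omega
    obtain ⟨hm1, rfl⟩ := hm
    obtain ⟨q, hq⟩ : ∃ q, m = q + 1 + q := ⟨m / 2, by omega⟩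
    refine ⟨List.replicate q none, List.replicate q none, true, ?_, ?_, ?_⟩
    · rw [rep_cons_eq, ← List.replicate_add, hq]
    · exact chain'_rep_append q (chain'_arrow_rep true q)
    · rw [phi, phi_rep_cons, inner_rep]
      simp
  · -- l = replicate a none ++ some g :: t
    have hphi : phi (List.replicate a none ++ some g :: t) = a ^^^ innerAux g 0 t := by
      rw [phi, phi_rep_cons]; simp
    rw [hphi] at hv
    have hgt : List.Chain' Compat (some g :: t) := chain'_suffix hch
    rcases Nat.lt_xor_cases hv with hwa | hrest
    · -- move in leading run
      set w := v ^^^ innerAux g 0 t with hw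
      set r := a - 1 - w with hr
      obtain ⟨e, hbit, _⟩ := exists_bitv g r
      have hsplit : List.replicate a (none : E) = List.replicate w none ++ none :: List.replicate r none := by
        rw [rep_cons_eq, ← List.replicate_add]
        congr 1
        omega
      refine ⟨List.replicate w none, List.replicate r none ++ some g :: t, e, ?_, ?_, ?_⟩
      · rw [hsplit]; simp
      · exact chain'_rep_append w (chain'_arrow_rep_arrow e r g t hgt
          (fun h0 => by rw [h0] at hbit; simpa [bitv] using (by simpa using hbit : bitv e g = 0)))
      · rw [phi, phi_rep_cons, inner_rep_cons]
        have h0 : (0 + r + bitv e g) % 2 = 0 := by omega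
        rw [h0]
        simp [hw, xor_cancel_right]
    · -- hrest : v ^^^ a < innerAux g 0 t
      rcases decompR t with ⟨b, rfl⟩ | ⟨s, h, b, rfl⟩
      · -- t = replicate b none : single-arrow state
        rw [inner_rep] at hrest
        simp only [Nat.zero_add] at hrest
        set w := v ^^^ a with hw
        set r := b - 1 - w with hr
        obtain ⟨e, _, hbit⟩ := exists_bitv g r
        have hsplit : List.replicate b (none : E) = List.replicate r none ++ none :: List.replicate w none := by
          rw [rep_cons_eq, ← List.replicate_add]
          congr 1
          omega
      -- l = rep a ++ some g :: rep b
        refine ⟨List.replicate a none ++ some g :: List.replicate r none, List.replicate w none, e, ?_, ?_, ?_⟩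
        · rw [hsplit]; simp
        · have : List.Chain' Compat (List.replicate a none ++
              some g :: (List.replicate r none ++ some e :: List.replicate w none)) := by
            refine chain'_rep_append a (chain'_arrow_rep_arrow g r e _ (chain'_arrow_rep e w)
              (fun h0 => ?_))
            rw [h0] at hbit
            simpa [bitv] using (by simpa using hbit : bitv g e = 0)
          simpa using this
        · have heq : (List.replicate a none ++ some g :: List.replicate r none) ++ some e :: List.replicate w none
              = List.replicate a none ++ some g :: (List.replicate r none ++ some e :: List.replicate w none) := by
            simp
          rw [heq, phi, phi_rep_cons, inner_rep_cons, inner_rep]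
          have h0 : (0 + r + bitv g e) % 2 = 0 := by omega
          rw [h0]
          rw [hw]
          simp [Nat.xor_assoc, Nat.xor_comm, xor_left_comm]
      · -- t = s ++ some h :: replicate b none
        have hV : innerAux g 0 (s ++ some h :: List.replicate b none)
            = innerAux g 0 (s ++ [some h]) ^^^ b := by
          rw [inner_append, inner_rep]
          simp
        set p := innerAux g 0 (s ++ [some h]) with hpdef
        have hple : p ≤ 1 := inner_closed_le s g 0 h
        rw [hV] at hrest
        rcases Nat.lt_xor_cases hrest with hcase | hcase
        · -- p = 1 case : use find_flip
          have hp1 : p = 1 := by omega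
          have hva : v ^^^ a ^^^ b = 0 := by omega
          have hvab : v = a ^^^ b := by
            have h0 := xor_eq_zero_iff.1 hva
            have : v ^^^ a ^^^ a = b ^^^ a := by rw [h0]
            rw [xor_cancel_right] at this
            rw [this, Nat.xor_comm]
          have hchin : List.Chain' Compat (some g :: (s ++ some h :: List.replicate b none)) := hgt
          obtain ⟨P₁, P₂, e, hseq, hcnew, hvnew⟩ :=
            find_flip s.length s le_rfl g h (List.replicate b none) hchin hp1
          refine ⟨List.replicate a none ++ some g :: P₁, P₂ ++ some h :: List.replicate b none, e, ?_, ?_, ?_⟩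
          · rw [hseq]; simp
          · have heq : (List.replicate a none ++ some g :: P₁) ++ some e :: (P₂ ++ some h :: List.replicate b none)
                = List.replicate a none ++ (some g :: ((P₁ ++ some e :: P₂) ++ some h :: List.replicate b none)) := by
              simp
            rw [heq]
            exact chain'_rep_append a hcnew
          · have heq : (List.replicate a none ++ some g :: P₁) ++ some e :: (P₂ ++ some h :: List.replicate b none)
                = List.replicate a none ++ some g :: ((P₁ ++ some e :: P₂) ++ some h :: List.replicate b none) := by
              simp
            rw [heq, phi, phi_rep_cons]
            have : innerAux g 0 ((P₁ ++ some e :: P₂) ++ some h :: List.replicate b none)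
                = innerAux g 0 ((P₁ ++ some e :: P₂) ++ [some h]) ^^^ b := by
              rw [inner_append, inner_rep]
              simp
            rw [this, hvnew, hvab]
            simp
        · -- flip case : v ^^^ a ^^^ p < b  → move in trailing run of length b
          set w := v ^^^ a ^^^ p with hw
          set r := b - 1 - w with hr
          obtain ⟨e, _, hbit⟩ := exists_bitv h r
          have hsplit : List.replicate b (none : E) = List.replicate r none ++ none :: List.replicate w none := by
            rw [rep_cons_eq, ← List.replicate_add]
            congr 1
            omega
          refine ⟨List.replicate a none ++ some g :: (s ++ some h :: List.replicate r none),
            List.replicate w none, e, ?_, ?_, ?_⟩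
          · rw [hsplit]; simp
          · have hY : List.Chain' Compat (some h :: (List.replicate r none ++ some e :: List.replicate w none)) := by
              refine chain'_arrow_rep_arrow h r e _ (chain'_arrow_rep e w) (fun h0 => ?_)
              rw [h0] at hbit
              simpa [bitv] using (by simpa using hbit : bitv h e = 0)
            have hcs : List.Chain' Compat ((some g :: s) ++ some h :: List.replicate b none) := by
              simpa using hgt
            have := chain'_replace_tail hcs hY
            have heq : (List.replicate a none ++ some g :: (s ++ some h :: List.replicate r none)) ++ some e :: List.replicate w none
                = List.replicate a none ++ ((some g :: s) ++ some h :: (List.replicate r none ++ some e :: List.replicate w none)) := by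
              simp
            rw [heq]
            exact chain'_rep_append a this
          · have heq : (List.replicate a none ++ some g :: (s ++ some h :: List.replicate r none)) ++ some e :: List.replicate w none
                = List.replicate a none ++ some g :: (s ++ some h :: (List.replicate r none ++ some e :: List.replicate w none)) := by
              simp
            rw [heq, phi, phi_rep_cons, inner_append, inner_rep_cons, inner_rep]
            have h0 : (0 + r + bitv h e) % 2 = 0 := by omega
            rw [h0]
            simp only [Nat.zero_add, Nat.zero_xor, ← hpdef]
            rw [hw]
            simp [Nat.xor_assoc, Nat.xor_comm, xor_left_comm]

end RodAux

namespace RodAux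

def eX (n : ℕ) (X : Finset (Fin (n+1) × Fin (n+1))) (i : Fin n) : E :=
  if (i.castSucc, i.succ) ∈ X then some true
  else if (i.succ, i.castSucc) ∈ X then some false else none

def encode (n : ℕ) (X : Finset (Fin (n+1) × Fin (n+1))) : List E := List.ofFn (eX n X)

def arrowOf (n : ℕ) (i : Fin n) (e : Bool) : Fin (n+1) × Fin (n+1) :=
  if e then (i.castSucc, i.succ) else (i.succ, i.castSucc)

lemma pathG_adj {m : ℕ} {u v : Fin m} :
    (PathG m).Adj u v ↔ (u.val + 1 = v.val ∨ v.val + 1 = u.val) := by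
  simp only [PathG, SimpleGraph.fromRel_adj]
  constructor
  · rintro ⟨_, h⟩; exact h
  · intro h
    refine ⟨fun heq => by subst heq; omega, h⟩

lemma encode_length (n : ℕ) (X : Finset (Fin (n+1) × Fin (n+1))) :
    (encode n X).length = n := by simp [encode]

lemma encode_getElem (n : ℕ) (X : Finset (Fin (n+1) × Fin (n+1))) (j : ℕ)
    (hj : j < (encode n X).length) :
    (encode n X)[j] = eX n X ⟨j, by simpa [encode] using hj⟩ := by
  simp [encode]

variable {n : ℕ}

lemma val_of_isLeaf (hn : 1 ≤ n) {v : Fin (n+1)} (h : IsLeaf (PathG (n+1)) v) :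
    v.val = 0 ∨ v.val = n := by
  by_contra hcon
  push_neg at hcon
  have hv1 : 0 < v.val := Nat.pos_of_ne_zero hcon.1
  have hv2 : v.val < n := by have := v.isLt; omega
  obtain ⟨w, _, huniq⟩ := h
  have h1 : (PathG (n+1)).Adj v ⟨v.val - 1, by omega⟩ := by
    rw [pathG_adj]; right; simp; omega
  have h2 : (PathG (n+1)).Adj v ⟨v.val + 1, by omega⟩ := by
    rw [pathG_adj]; left; simp
  have e1 := huniq _ h1
  have e2 := huniq _ h2
  rw [← e2] at e1
  have e3 : (v.val - 1 : ℕ) = v.val + 1 := by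
    have := congrArg Fin.val e1
    simpa using this
  omega

lemma isLeaf_endpoint (hn : 1 ≤ n) {v : Fin (n+1)} (h : v.val = 0 ∨ v.val = n) :
    IsLeaf (PathG (n+1)) v := by
  rcases h with h | h
  · refine ⟨⟨1, by omega⟩, ?_, ?_⟩
    · exact pathG_adj.2 (Or.inl (by simp [h]))
    · intro w hw
      rw [pathG_adj] at hw
      apply Fin.ext; simp [h] at hw ⊢; omega
  · refine ⟨⟨n - 1, by omega⟩, ?_, ?_⟩
    · exact pathG_adj.2 (Or.inr (by simp [h]; omega))
    · intro w hw
      rw [pathG_adj] at hw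
      apply Fin.ext
      have := w.isLt
      simp [h] at hw ⊢; omega

lemma internal_of_not_isLeaf (hn : 1 ≤ n) {v : Fin (n+1)}
    (h : ¬ IsLeaf (PathG (n+1)) v) : 0 < v.val ∧ v.val < n := by
  have := v.isLt
  by_contra hcon
  exact h (isLeaf_endpoint hn (by omega))

lemma chain'_encode (hn : 1 ≤ n) (X : Finset (Fin (n+1) × Fin (n+1)))
    (hX : IsState (PathG (n+1)) X) : List.Chain' Compat (encode n X) := by
  apply List.isChain_iff_getElem.2
  intro i hi
  rw [encode_length] at hi
  intro a b ha hb
  by_contra hab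
  simp only [List.get_eq_getElem, encode_getElem] at ha hb
  have hia : i < n := by omega
  have hib : i + 1 < n := by omega
  -- extract memberships
  have hmem : ∀ (j : ℕ) (hj : j < n) (c : Bool), eX n X ⟨j, hj⟩ = some c →
      (if c then ((⟨j, by omega⟩ : Fin (n+1)), (⟨j+1, by omega⟩ : Fin (n+1)))
       else ((⟨j+1, by omega⟩ : Fin (n+1)), (⟨j, by omega⟩ : Fin (n+1)))) ∈ X := by
    intro j hj c hc
    unfold eX at hc
    split_ifs at hc with h1 h2
    · cases hc
      simpa [Fin.castSucc, Fin.succ, Fin.ext_iff] using h1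
    · cases hc
      simpa [Fin.castSucc, Fin.succ, Fin.ext_iff] using h2
  have hv : (0:ℕ) < i + 1 ∧ i + 1 < n := ⟨by omega, hib⟩
  set v : Fin (n+1) := ⟨i+1, by omega⟩ with hvdef
  have hnl : ¬ IsLeaf (PathG (n+1)) v := by
    intro hl
    rcases val_of_isLeaf hn hl with h0 | h0 <;> simp [hvdef] at h0 <;> omega
  have hnbr : ∀ u : Fin (n+1), (PathG (n+1)).Adj u v → u.val = i ∨ u.val = i + 2 := by
    intro u hu
    rw [pathG_adj] at hu
    simp [hvdef] at hu
    omega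
  cases a <;> cases b <;> try exact hab rfl
  · -- a = false, b = true : source at v
    have m1 := hmem i hia false ha
    have m2 := hmem (i+1) hib true hb
    simp only [if_neg Bool.false_ne_true, if_pos] at m1 m2
    refine (hX.2 v hnl).2 ?_
    intro w hw
    have hw' : w.val = i ∨ w.val = i + 2 := by
      apply hnbr
      exact ((PathG (n+1)).adj_symm hw)
    rcases hw' with h0 | h0
    · have : (v, w) = ((⟨i+1, by omega⟩ : Fin (n+1)), (⟨i, by omega⟩ : Fin (n+1))) := by
        rw [Prod.ext_iff]; constructor <;> apply Fin.ext <;> simp [hvdef, h0]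
      rw [this]; exact m1
    · have : (v, w) = ((⟨i+1, by omega⟩ : Fin (n+1)), (⟨i+1+1, by omega⟩ : Fin (n+1))) := by
        rw [Prod.ext_iff]; constructor <;> apply Fin.ext <;> simp [hvdef, h0] <;> omega
      rw [this]; exact m2
  · -- a = true, b = false : sink at v
    have m1 := hmem i hia true ha
    have m2 := hmem (i+1) hib false hb
    simp only [if_pos, if_neg Bool.false_ne_true] at m1 m2
    refine (hX.2 v hnl).1 ?_
    intro w hw
    have hw' : w.val = i ∨ w.val = i + 2 := hnbr w hw
    rcases hw' with h0 | h0
    · have : (w, v) = ((⟨i, by omega⟩ : Fin (n+1)), (⟨i+1, by omega⟩ : Fin (n+1))) := by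
        rw [Prod.ext_iff]; constructor <;> apply Fin.ext <;> simp [hvdef, h0]
      rw [this]; exact m1
    · have : (w, v) = ((⟨i+1+1, by omega⟩ : Fin (n+1)), (⟨i+1, by omega⟩ : Fin (n+1))) := by
        rw [Prod.ext_iff]; constructor <;> apply Fin.ext <;> simp [hvdef, h0] <;> omega
      rw [this]; exact m2

lemma isState_of_chain' (hn : 1 ≤ n) (X : Finset (Fin (n+1) × Fin (n+1)))
    (hdec : IsDecoration (PathG (n+1)) X)
    (hch : List.Chain' Compat (encode n X)) : IsState (PathG (n+1)) X := by
  refine ⟨hdec, fun v hv => ?_⟩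
  obtain ⟨hv1, hv2⟩ := internal_of_not_isLeaf hn hv
  have hkey := List.isChain_iff_getElem.1 hch (v.val - 1)
    (by rw [encode_length]; omega)
  simp only [List.get_eq_getElem, encode_getElem] at hkey
  have hidx1 : v.val - 1 < n := by omega
  have hidx2 : v.val - 1 + 1 < n := by omega
  have hvv : v.val - 1 + 1 = v.val := by omega
  constructor
  · intro hsink
    have m1 : ((⟨v.val - 1, by omega⟩ : Fin (n+1)), v) ∈ X := by
      apply hsink
      rw [pathG_adj]; left; simp; omega
    have m2 : ((⟨v.val + 1, by omega⟩ : Fin (n+1)), v) ∈ X := by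
      apply hsink
      rw [pathG_adj]; right; simp
    have e1 : eX n X ⟨v.val - 1, hidx1⟩ = some true := by
      unfold eX
      rw [if_pos]
      have : ((⟨v.val - 1, hidx1⟩ : Fin n).castSucc, (⟨v.val - 1, hidx1⟩ : Fin n).succ)
          = ((⟨v.val - 1, by omega⟩ : Fin (n+1)), v) := by
        rw [Prod.ext_iff]; constructor <;> apply Fin.ext <;> simp <;> omega
      rw [this]; exact m1
    have e2 : eX n X ⟨v.val - 1 + 1, hidx2⟩ = some false := by
      unfold eX
      have hpair : ((⟨v.val - 1 + 1, hidx2⟩ : Fin n).succ, (⟨v.val - 1 + 1, hidx2⟩ : Fin n).castSucc)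
          = ((⟨v.val + 1, by omega⟩ : Fin (n+1)), v) := by
        rw [Prod.ext_iff]; constructor <;> apply Fin.ext <;> simp <;> omega
      rw [if_neg, if_pos]
      · rw [hpair]; exact m2
      · intro hmm
        have := hdec.2 _ hmm
        rw [show Prod.swap ((⟨v.val - 1 + 1, hidx2⟩ : Fin n).castSucc, (⟨v.val - 1 + 1, hidx2⟩ : Fin n).succ)
            = ((⟨v.val - 1 + 1, hidx2⟩ : Fin n).succ, (⟨v.val - 1 + 1, hidx2⟩ : Fin n).castSucc) from rfl,
          hpair] at this
        exact this m2
    have := hkey true false (by rw [e1]) (by rw [e2])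
    exact Bool.noConfusion this
  · intro hsrc
    have m1 : (v, (⟨v.val - 1, by omega⟩ : Fin (n+1))) ∈ X := by
      apply hsrc
      rw [pathG_adj]; right; simp; omega
    have m2 : (v, (⟨v.val + 1, by omega⟩ : Fin (n+1))) ∈ X := by
      apply hsrc
      rw [pathG_adj]; left; simp
    have e1 : eX n X ⟨v.val - 1, hidx1⟩ = some false := by
      unfold eX
      have hpair : ((⟨v.val - 1, hidx1⟩ : Fin n).succ, (⟨v.val - 1, hidx1⟩ : Fin n).castSucc)
          = (v, (⟨v.val - 1, by omega⟩ : Fin (n+1))) := by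
        rw [Prod.ext_iff]; constructor <;> apply Fin.ext <;> simp <;> omega
      rw [if_neg, if_pos]
      · rw [hpair]; exact m1
      · intro hmm
        have := hdec.2 _ hmm
        rw [show Prod.swap ((⟨v.val - 1, hidx1⟩ : Fin n).castSucc, (⟨v.val - 1, hidx1⟩ : Fin n).succ)
            = ((⟨v.val - 1, hidx1⟩ : Fin n).succ, (⟨v.val - 1, hidx1⟩ : Fin n).castSucc) from rfl,
          hpair] at this
        exact this m1
    have e2 : eX n X ⟨v.val - 1 + 1, hidx2⟩ = some true := by
      unfold eX
      rw [if_pos]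
      have : ((⟨v.val - 1 + 1, hidx2⟩ : Fin n).castSucc, (⟨v.val - 1 + 1, hidx2⟩ : Fin n).succ)
          = (v, (⟨v.val + 1, by omega⟩ : Fin (n+1))) := by
        rw [Prod.ext_iff]; constructor <;> apply Fin.ext <;> simp <;> omega
      rw [this]; exact m2
    have := hkey false true (by rw [e1]) (by rw [e2])
    exact Bool.noConfusion this

end RodAux

namespace RodAux

variable {n : ℕ}

lemma eX_none_iff (X : Finset (Fin (n+1) × Fin (n+1))) (i : Fin n) :
    eX n X i = none ↔ (i.castSucc, i.succ) ∉ X ∧ (i.succ, i.castSucc) ∉ X := by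
  unfold eX
  split_ifs with h1 h2 <;> simp_all

lemma arrowOf_swap (i : Fin n) (e : Bool) :
    Prod.swap (arrowOf n i e) = arrowOf n i (!e) := by
  cases e <;> simp [arrowOf]

lemma arrowOf_swap_ne (i : Fin n) (e : Bool) :
    Prod.swap (arrowOf n i e) ≠ arrowOf n i e := by
  cases e <;> simp [arrowOf, Prod.ext_iff, Fin.ext_iff]

lemma adj_arrowOf (i : Fin n) (e : Bool) :
    (PathG (n+1)).Adj (arrowOf n i e).1 (arrowOf n i e).2 := by
  cases e <;> simp only [arrowOf, if_pos, if_neg Bool.false_ne_true, Bool.true_eq_false] <;>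
    rw [pathG_adj] <;> simp

lemma eX_insert_self (X : Finset (Fin (n+1) × Fin (n+1))) (i : Fin n) (e : Bool)
    (h1 : (i.castSucc, i.succ) ∉ X) (h2 : (i.succ, i.castSucc) ∉ X) :
    eX n (insert (arrowOf n i e) X) i = some e := by
  have hne : (i.castSucc : Fin (n+1)) ≠ i.succ := by
    simp [Fin.ext_iff]
  cases e
  · have hA : (i.castSucc, i.succ) ∉ insert (arrowOf n i false) X := by
      simp only [arrowOf, Bool.false_eq_true, if_neg, Finset.mem_insert, Prod.ext_iff]
      push_neg
      exact ⟨fun h _ => hne h, h1⟩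
    have hB : (i.succ, i.castSucc) ∈ insert (arrowOf n i false) X := by
      simp [arrowOf]
    unfold eX
    rw [if_neg hA, if_pos hB]
  · have hB : (i.castSucc, i.succ) ∈ insert (arrowOf n i true) X := by
      simp [arrowOf]
    unfold eX
    rw [if_pos hB]

lemma eX_insert_ne (X : Finset (Fin (n+1) × Fin (n+1))) (p : Fin (n+1) × Fin (n+1)) (j : Fin n)
    (hp1 : (j.castSucc, j.succ) ≠ p) (hp2 : (j.succ, j.castSucc) ≠ p) :
    eX n (insert p X) j = eX n X j := by
  unfold eX
  simp only [Finset.mem_insert, hp1, hp2, false_or]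

lemma encode_insert (X : Finset (Fin (n+1) × Fin (n+1))) (i : Fin n) (e : Bool)
    (hnone : eX n X i = none) :
    encode n (insert (arrowOf n i e) X) = (encode n X).set i.val (some e) := by
  obtain ⟨h1, h2⟩ := (eX_none_iff X i).1 hnone
  apply List.ext_getElem
  · simp [encode]
  · intro j hj hj'
    rw [encode_getElem, List.getElem_set]
    split_ifs with hij
    · convert eX_insert_self X i e h1 h2 using 2
      exact Fin.ext hij.symm
    · rw [encode_getElem]
      apply eX_insert_ne
      · cases e <;> simp [arrowOf, Prod.ext_iff, Fin.ext_iff] <;> omega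
      · cases e <;> simp [arrowOf, Prod.ext_iff, Fin.ext_iff] <;> omega

lemma set_form_to_append (l : List E) (i : ℕ) (hi : i < l.length)
    (hnone : l[i] = none) (x : E) :
    ∃ A B, l = A ++ none :: B ∧ l.set i x = A ++ x :: B := by
  refine ⟨l.take i, l.drop (i+1), ?_, ?_⟩
  · have h3 := List.take_append_drop i l
    have h4 : l.drop i = none :: l.drop (i+1) := by
      rw [List.drop_eq_getElem_cons hi, hnone]
    conv_lhs => rw [← h3]
    rw [h4]
  · exact List.set_eq_take_cons_drop x hi

lemma append_getElem_mid (A B : List E) (x : E) :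
    (A ++ x :: B)[A.length]'(by simp) = x := by
  induction A with
  | nil => rfl
  | cons a A ih => simpa using ih

lemma append_set_mid (A B : List E) (x y : E) :
    (A ++ x :: B).set A.length y = A ++ y :: B := by
  induction A with
  | nil => rfl
  | cons a A ih => simpa using ih

lemma follower_move (X X' : Finset (Fin (n+1) × Fin (n+1)))
    (hF : Follower (PathG (n+1)) X X') :
    ∃ A B e, encode n X = A ++ none :: B ∧ encode n X' = A ++ some e :: B := by
  obtain ⟨hX, hX', p, hpn, rfl⟩ := hF
  have hadj : (PathG (n+1)).Adj p.1 p.2 := hX'.1.1 p (Finset.mem_insert_self p X)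
  rw [pathG_adj] at hadj
  obtain ⟨i, e, rfl⟩ : ∃ (i : Fin n) (e : Bool), p = arrowOf n i e := by
    rcases hadj with h | h
    · have hi : p.1.val < n := by have := p.2.isLt; omega
      refine ⟨⟨p.1.val, hi⟩, true, ?_⟩
      simp only [arrowOf, if_pos]
      rw [Prod.ext_iff]
      constructor <;> apply Fin.ext <;> simp <;> omega
    · have hi : p.2.val < n := by have := p.1.isLt; omega
      refine ⟨⟨p.2.val, hi⟩, false, ?_⟩
      simp only [arrowOf, Bool.false_eq_true, if_neg]
      rw [Prod.ext_iff]
      constructor <;> apply Fin.ext <;> simp <;> omega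
  have hswap : Prod.swap (arrowOf n i e) ∉ X := by
    have hs := hX'.1.2 (arrowOf n i e) (Finset.mem_insert_self _ _)
    intro hc
    exact hs (Finset.mem_insert_of_mem hc)
  rw [arrowOf_swap] at hswap
  have hnone : eX n X i = none := by
    rw [eX_none_iff]
    cases e
    · constructor
      · simpa [arrowOf] using hswap
      · simpa [arrowOf] using hpn
    · constructor
      · simpa [arrowOf] using hpn
      · simpa [arrowOf] using hswap
  have henc := encode_insert X i e hnone
  have hlen : i.val < (encode n X).length := by rw [encode_length]; exact i.isLt
  have hgetnone : (encode n X)[i.val] = none := by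
    rw [encode_getElem]
    exact hnone
  obtain ⟨A, B, hl, hset⟩ := set_form_to_append _ i.val hlen hgetnone (some e)
  exact ⟨A, B, e, hl, by rw [henc, hset]⟩

lemma move_follower (hn : 1 ≤ n) (X : Finset (Fin (n+1) × Fin (n+1)))
    (hX : IsState (PathG (n+1)) X)
    (A B : List E) (e : Bool) (hl : encode n X = A ++ none :: B)
    (hch' : List.Chain' Compat (A ++ some e :: B)) :
    ∃ X', Follower (PathG (n+1)) X X' ∧ encode n X' = A ++ some e :: B := by
  have hlen : A.length < n := by
    have h0 := congrArg List.length hl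
    rw [encode_length] at h0
    simp at h0
    omega
  set i : Fin n := ⟨A.length, hlen⟩ with hidef
  have hgetnone : eX n X i = none := by
    have h0 : (encode n X)[A.length]'(by rw [encode_length]; exact hlen) = none := by
      simp only [hl]
      exact append_getElem_mid A B none
    simp only [encode, List.getElem_ofFn] at h0
    exact h0
  obtain ⟨h1, h2⟩ := (eX_none_iff X i).1 hgetnone
  have hpn : arrowOf n i e ∉ X := by
    cases e
    · simpa [arrowOf] using h2
    · simpa [arrowOf] using h1
  have hencX' : encode n (insert (arrowOf n i e) X) = A ++ some e :: B := by
    rw [encode_insert X i e hgetnone, hl]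
    exact append_set_mid A B none (some e)
  have hdec' : IsDecoration (PathG (n+1)) (insert (arrowOf n i e) X) := by
    constructor
    · intro q hq
      rcases Finset.mem_insert.1 hq with rfl | hq'
      · exact adj_arrowOf i e
      · exact hX.1.1 q hq'
    · intro q hq
      rcases Finset.mem_insert.1 hq with rfl | hq'
      · intro hc
        rcases Finset.mem_insert.1 hc with hc1 | hc2
        · exact arrowOf_swap_ne i e hc1
        · rw [arrowOf_swap] at hc2
          cases e
          · exact h1 (by simpa [arrowOf] using hc2)
          · exact h2 (by simpa [arrowOf] using hc2)
      · intro hc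
        rcases Finset.mem_insert.1 hc with hc1 | hc2
        · have hq2 : q = Prod.swap (arrowOf n i e) := by
            rw [← hc1, Prod.swap_swap]
          rw [arrowOf_swap] at hq2
          subst hq2
          cases e
          · exact h1 (by simpa [arrowOf] using hq')
          · exact h2 (by simpa [arrowOf] using hq')
        · exact hX.1.2 q hq' hc2
  have hX' : IsState (PathG (n+1)) (insert (arrowOf n i e) X) :=
    isState_of_chain' hn _ hdec' (by rw [hencX']; exact hch')
  exact ⟨_, ⟨hX, hX', arrowOf n i e, hpn, rfl⟩, hencX'⟩

lemma grundy_eq_phi (hn : 1 ≤ n) :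
    ∀ (k : ℕ) (X : Finset (Fin (n+1) × Fin (n+1))),
      Fintype.card (Fin (n+1) × Fin (n+1)) - X.card ≤ k →
      IsState (PathG (n+1)) X → grundy (PathG (n+1)) X = phi (encode n X) := by
  intro k
  induction k with
  | zero =>
      intro X hm hX
      exfalso
      have hcard : X.card ≤ Fintype.card (Fin (n+1) × Fin (n+1)) := Finset.card_le_univ X
      have hXu : X = Finset.univ := Finset.eq_univ_of_card X (by omega)
      subst hXu
      exact (PathG (n+1)).irrefl (hX.1.1 (0, 0) (Finset.mem_univ _))
  | succ k ih =>
      intro X hm hX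
      have hchX := chain'_encode hn X hX
      rw [grundy]
      have hmem : ∀ X', Follower (PathG (n+1)) X X' →
          grundy (PathG (n+1)) X' ≠ phi (encode n X) := by
        intro X' hF
        have hcard : X'.card = X.card + 1 := by
          obtain ⟨_, _, p, hpn, rfl⟩ := hF
          exact Finset.card_insert_of_notMem hpn
        have hg : grundy (PathG (n+1)) X' = phi (encode n X') :=
          ih X' (by have := Finset.card_le_univ X'; omega) hF.2.1
        obtain ⟨A, B, e, hl, hl'⟩ := follower_move X X' hF
        rw [hg, hl, hl']
        exact phi_move_ne A B e (by rw [← hl']; exact chain'_encode hn X' hF.2.1)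
      apply le_antisymm
      · exact Nat.sInf_le hmem
      · refine le_csInf ⟨_, hmem⟩ ?_
        intro m hm'
        by_contra hlt
        push_neg at hlt
        obtain ⟨A, B, e, hl, hch', hval⟩ := phi_move_exists (encode n X) hchX m hlt
        obtain ⟨X', hF, hencX'⟩ := move_follower hn X hX A B e hl hch'
        have hcard : X'.card = X.card + 1 := by
          obtain ⟨_, _, p, hpn, hins⟩ := hF
          rw [hins]
          exact Finset.card_insert_of_notMem hpn
        have hg : grundy (PathG (n+1)) X' = phi (encode n X') :=
          ih X' (by have := Finset.card_le_univ X'; omega) hF.2.1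
        exact hm' X' hF (by rw [hg, hencX', hval])

lemma encode_empty (n : ℕ) :
    encode n (∅ : Finset (Fin (n+1) × Fin (n+1))) = List.replicate n none := by
  unfold encode
  have h : eX n ∅ = fun _ => none := by
    funext i
    simp [eX]
  rw [h, List.ofFn_const]

lemma isState_empty (hn : 1 ≤ n) :
    IsState (PathG (n+1)) (∅ : Finset (Fin (n+1) × Fin (n+1))) := by
  refine ⟨⟨fun p hp => absurd hp (Finset.notMem_empty p),
    fun p hp => absurd hp (Finset.notMem_empty p)⟩, fun v hv => ?_⟩
  obtain ⟨hv1, hv2⟩ := internal_of_not_isLeaf hn hv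
  constructor
  · intro hs
    exact Finset.notMem_empty _
      (hs ⟨v.val - 1, by omega⟩ (pathG_adj.2 (Or.inl (by simp; omega))))
  · intro hs
    exact Finset.notMem_empty _
      (hs ⟨v.val - 1, by omega⟩ (pathG_adj.2 (Or.inr (by simp; omega))))

end RodAux

/-- `g(R_n) = n̄` for every `n ≥ 1`, where the `n`-rod `R_n` is the empty state of
the path graph with vertices `0, 1, …, n`. -/
theorem grundy_rod (n : ℕ) (hn : 1 ≤ n) :
    grundy (PathG (n + 1)) (∅ : Finset (Fin (n + 1) × Fin (n + 1))) = n % 2 := by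
  have h := RodAux.grundy_eq_phi hn (Fintype.card (Fin (n+1) × Fin (n+1))) ∅
    (by simp) (RodAux.isState_empty hn)
  rw [h, RodAux.encode_empty, RodAux.phi, RodAux.phi_rep]
  simp
end

section
/- For every integer n ≥ 0, the n-flow F_n and the (n+1)-crash C_{n+1} are both p(n)-moves states. -/
/-- A terminal state: a state with no followers. -/
def Terminal {V : Type*} [DecidableEq V] (G : SimpleGraph V)
    (X : Finset (V × V)) : Prop :=
  IsState G X ∧ ∀ X', ¬ Follower G X X'

/-- A `p(n)`-moves state: a state `X` such that every terminal descendent `X*` of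
`X` satisfies `|X* \ X| ≡ n (mod 2)`. -/
def PMovesState {V : Type*} [DecidableEq V] (G : SimpleGraph V)
    (X : Finset (V × V)) (n : ℕ) : Prop :=
  IsState G X ∧ ∀ X', Relation.TransGen (Follower G) X X' → Terminal G X' →
    (X' \ X).card % 2 = n % 2

namespace FlowCrashAux

lemma pathG_adj {m : ℕ} {a b : Fin m} :
    (PathG m).Adj a b ↔ (a.val + 1 = b.val ∨ b.val + 1 = a.val) := by
  unfold PathG
  rw [SimpleGraph.fromRel_adj]
  constructor
  · rintro ⟨-, h⟩; exact h
  · intro h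
    refine ⟨fun hab => ?_, h⟩
    subst hab; omega

/-- The direction of edge `i` (between vertices `i` and `i+1`). -/
def dirZ (m : ℕ) (X : Finset (Fin m × Fin m)) (i : ℕ) : ℤ :=
  if h : i + 1 < m then
    if (⟨i, Nat.lt_of_succ_lt h⟩, ⟨i + 1, h⟩) ∈ X then 1
    else if (⟨i + 1, h⟩, ⟨i, Nat.lt_of_succ_lt h⟩) ∈ X then -1 else 0
  else 0

lemma dirZ_eq_one_iff {m : ℕ} (X : Finset (Fin m × Fin m)) {i : ℕ} (h : i + 1 < m) :
    dirZ m X i = 1 ↔ (⟨i, Nat.lt_of_succ_lt h⟩, ⟨i + 1, h⟩) ∈ X := by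
  unfold dirZ
  rw [dif_pos h]
  split_ifs with h1 h2 <;> simp_all

lemma dirZ_eq_zero_iff {m : ℕ} (X : Finset (Fin m × Fin m)) {i : ℕ} (h : i + 1 < m) :
    dirZ m X i = 0 ↔
      ((⟨i, Nat.lt_of_succ_lt h⟩, ⟨i + 1, h⟩) ∉ X ∧
       (⟨i + 1, h⟩, ⟨i, Nat.lt_of_succ_lt h⟩) ∉ X) := by
  unfold dirZ
  rw [dif_pos h]
  split_ifs with h1 h2 <;> simp_all

lemma dirZ_eq_neg_one_iff {m : ℕ} {X : Finset (Fin m × Fin m)}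
    (hdec : IsDecoration (PathG m) X) {i : ℕ} (h : i + 1 < m) :
    dirZ m X i = -1 ↔ (⟨i + 1, h⟩, ⟨i, Nat.lt_of_succ_lt h⟩) ∈ X := by
  unfold dirZ
  rw [dif_pos h]
  split_ifs with h1 h2
  · have := hdec.2 _ h1
    simp only [Prod.swap] at this
    simp_all
  · simp_all
  · simp_all

lemma dirZ_mem_cases {m : ℕ} (X : Finset (Fin m × Fin m)) {i : ℕ} (h : i + 1 < m)
    (hne : dirZ m X i ≠ 0) :
    (⟨i, Nat.lt_of_succ_lt h⟩, ⟨i + 1, h⟩) ∈ X ∨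
    (⟨i + 1, h⟩, ⟨i, Nat.lt_of_succ_lt h⟩) ∈ X := by
  by_contra hc
  push_neg at hc
  exact hne ((dirZ_eq_zero_iff X h).mpr hc)

end FlowCrashAux
namespace FlowCrashAux

lemma isLeaf_extreme {m : ℕ} (hm : 2 ≤ m) (v : Fin m)
    (hv : v.val = 0 ∨ v.val + 1 = m) : IsLeaf (PathG m) v := by
  rcases hv with hv | hv
  · refine ⟨⟨1, by omega⟩, ?_, ?_⟩
    · show (PathG m).Adj v _
      rw [pathG_adj]; left; simp [hv]
    · intro w hw
      rw [pathG_adj] at hw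
      apply Fin.ext
      simp only []
      omega
  · refine ⟨⟨v.val - 1, by omega⟩, ?_, ?_⟩
    · show (PathG m).Adj v _
      rw [pathG_adj]; right; simp; omega
    · intro w hw
      rw [pathG_adj] at hw
      apply Fin.ext
      simp only []
      have := w.isLt
      omega

lemma internal_of_not_leaf {m : ℕ} (hm : 2 ≤ m) {v : Fin m}
    (hv : ¬ IsLeaf (PathG m) v) : 1 ≤ v.val ∧ v.val + 1 < m := by
  have := v.isLt
  by_contra hc
  exact hv (isLeaf_extreme hm v (by omega))

lemma not_leaf_internal {m : ℕ} {v : Fin m} (h1 : 1 ≤ v.val) (h2 : v.val + 1 < m) :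
    ¬ IsLeaf (PathG m) v := by
  rintro ⟨w, -, hw⟩
  have ha : (PathG m).Adj v ⟨v.val - 1, by omega⟩ := by rw [pathG_adj]; right; simp; omega
  have hb : (PathG m).Adj v ⟨v.val + 1, h2⟩ := by rw [pathG_adj]; left; simp
  have e1 := hw _ ha
  have e2 := hw _ hb
  rw [← e2] at e1
  rw [Fin.mk.injEq] at e1
  omega

lemma neighbor_cases {m : ℕ} {v u : Fin m} (h : (PathG m).Adj u v) :
    u.val + 1 = v.val ∨ u.val = v.val + 1 := by
  rw [pathG_adj] at h; omega

lemma card_eq {m : ℕ} {X : Finset (Fin m × Fin m)} (hdec : IsDecoration (PathG m) X) :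
    X.card = ((Finset.range (m - 1)).filter fun i => dirZ m X i ≠ 0).card := by
  apply Finset.card_bij (fun p _ => min p.1.val p.2.val)
  · intro p hp
    have hadj := hdec.1 p hp
    rw [pathG_adj] at hadj
    have h1 := p.1.isLt
    have h2 := p.2.isLt
    rcases hadj with hadj | hadj
    · have hmin : min p.1.val p.2.val = p.1.val := by omega
      rw [hmin, Finset.mem_filter, Finset.mem_range]
      refine ⟨by omega, ?_⟩
      have hp1 : p.1.val + 1 < m := by omega
      have : (⟨p.1.val, Nat.lt_of_succ_lt hp1⟩, ⟨p.1.val + 1, hp1⟩) ∈ X := by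
        have : p = (⟨p.1.val, Nat.lt_of_succ_lt hp1⟩, ⟨p.1.val + 1, hp1⟩) := by
          apply Prod.ext <;> apply Fin.ext <;> simp <;> omega
        rwa [← this]
      rw [← dirZ_eq_one_iff X hp1] at this
      omega
    · have hmin : min p.1.val p.2.val = p.2.val := by omega
      rw [hmin, Finset.mem_filter, Finset.mem_range]
      refine ⟨by omega, ?_⟩
      have hp1 : p.2.val + 1 < m := by omega
      have : (⟨p.2.val + 1, hp1⟩, ⟨p.2.val, Nat.lt_of_succ_lt hp1⟩) ∈ X := by
        have : p = (⟨p.2.val + 1, hp1⟩, ⟨p.2.val, Nat.lt_of_succ_lt hp1⟩) := by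
          apply Prod.ext <;> apply Fin.ext <;> simp <;> omega
        rwa [← this]
      rw [← dirZ_eq_neg_one_iff hdec hp1] at this
      omega
  · intro p hp q hq hpq
    have hadjp := hdec.1 p hp
    have hadjq := hdec.1 q hq
    rw [pathG_adj] at hadjp hadjq
    by_cases hsw : p.1.val = q.1.val ∧ p.2.val = q.2.val
    · apply Prod.ext <;> apply Fin.ext
      · exact hsw.1
      · exact hsw.2
    · exfalso
      apply hdec.2 p hp
      have hq' : Prod.swap p = q := by
        apply Prod.ext <;> apply Fin.ext <;> simp [Prod.swap] <;> omega
      rw [hq']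
      exact hq
  · intro i hi
    rw [Finset.mem_filter, Finset.mem_range] at hi
    obtain ⟨hilt, hine⟩ := hi
    have hi1 : i + 1 < m := by omega
    rcases dirZ_mem_cases X hi1 hine with hmem | hmem
    · refine ⟨_, hmem, ?_⟩
      simp only []
      omega
    · refine ⟨_, hmem, ?_⟩
      simp only []
      omega

end FlowCrashAux
namespace FlowCrashAux

lemma dirZ_trichotomy {m : ℕ} (X : Finset (Fin m × Fin m)) (i : ℕ) :
    dirZ m X i = 1 ∨ dirZ m X i = -1 ∨ dirZ m X i = 0 := by
  unfold dirZ
  split_ifs <;> simp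

/-- Adjacent marked edges of a state point in the same direction. -/
lemma state_adj_eq {m : ℕ} {X : Finset (Fin m × Fin m)} (hst : IsState (PathG m) X)
    {i : ℕ} (h : i + 2 < m) (h1 : dirZ m X i ≠ 0) (h2 : dirZ m X (i + 1) ≠ 0) :
    dirZ m X i = dirZ m X (i + 1) := by
  have hi1 : i + 1 < m := by omega
  have hi2 : i + 1 + 1 < m := by omega
  have hnl : ¬ IsLeaf (PathG m) (⟨i + 1, hi1⟩ : Fin m) :=
    not_leaf_internal (by simp) (by simp; omega)
  have hv := hst.2 _ hnl
  rcases dirZ_trichotomy X i with e1 | e1 | e1 <;>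
    rcases dirZ_trichotomy X (i + 1) with e2 | e2 | e2 <;>
      try (first | omega | (exact absurd e1 h1) | (exact absurd e2 h2))
  · -- dirZ i = 1, dirZ (i+1) = -1 : sink at i+1
    exfalso
    apply hv.1
    intro u hu
    have hmem1 := (dirZ_eq_one_iff X hi1).mp e1
    have hmem2 := (dirZ_eq_neg_one_iff hst.1 hi2).mp e2
    rcases neighbor_cases hu with hc | hc
    · simp only [] at hc
      have : u = (⟨i, by omega⟩ : Fin m) := Fin.ext (by simp; omega)
      rw [this]; exact hmem1
    · simp only [] at hc
      have : u = (⟨i + 1 + 1, hi2⟩ : Fin m) := Fin.ext (by simp; omega)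
      rw [this]; exact hmem2
  · -- dirZ i = -1, dirZ (i+1) = 1 : source at i+1
    exfalso
    apply hv.2
    intro w hw
    have hmem1 := (dirZ_eq_neg_one_iff hst.1 hi1).mp e1
    have hmem2 := (dirZ_eq_one_iff X hi2).mp e2
    rcases neighbor_cases hw.symm with hc | hc
    · simp only [] at hc
      have : w = (⟨i, by omega⟩ : Fin m) := Fin.ext (by simp; omega)
      rw [this]; exact hmem1
    · simp only [] at hc
      have : w = (⟨i + 1 + 1, hi2⟩ : Fin m) := Fin.ext (by simp; omega)
      rw [this]; exact hmem2

/-- If an arrow `(a,b)` cannot be added to a terminal state, then either the head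
would become a sink (witnessed by the other neighbor) or the tail a source. -/
lemma insert_bad {m : ℕ} (hm : 2 ≤ m) {X : Finset (Fin m × Fin m)}
    (hT : Terminal (PathG m) X) {a b : Fin m} (hab : (PathG m).Adj a b)
    (hp : (a, b) ∉ X) (hp' : (b, a) ∉ X) :
    (∃ c : Fin m, c ≠ a ∧ (PathG m).Adj c b ∧ (c, b) ∈ X) ∨
    (∃ c : Fin m, c ≠ b ∧ (PathG m).Adj a c ∧ (a, c) ∈ X) := by
  have hst := hT.1
  have hne : a ≠ b := hab.ne
  -- insert (a,b) X is a decoration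
  have hdec : IsDecoration (PathG m) (insert (a, b) X) := by
    constructor
    · intro q hq
      rcases Finset.mem_insert.mp hq with rfl | hq
      · exact hab
      · exact hst.1.1 q hq
    · intro q hq
      rcases Finset.mem_insert.mp hq with rfl | hq
      · intro hsw
        rcases Finset.mem_insert.mp hsw with hsw | hsw
        · exact hne (congrArg Prod.fst hsw).symm
        · exact hp' hsw
      · intro hsw
        rcases Finset.mem_insert.mp hsw with hsw | hsw
        · apply hp
          have : q = (b, a) := by rw [← Prod.swap_swap q, hsw]; rfl
          rw [this] at hq; exact absurd hq hp'
        · exact hst.1.2 q hq hsw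
  -- insert (a,b) X is not a state
  have hns : ¬ IsState (PathG m) (insert (a, b) X) := by
    intro hs
    exact hT.2 (insert (a, b) X) ⟨hst, hs, (a, b), hp, rfl⟩
  -- so there is a bad vertex
  have hbad : ∃ v, ¬ IsLeaf (PathG m) v ∧
      (IsSink (PathG m) (insert (a, b) X) v ∨ IsSource (PathG m) (insert (a, b) X) v) := by
    by_contra hc
    push_neg at hc
    apply hns
    refine ⟨hdec, fun v hv => ?_⟩
    have := hc v hv
    tauto
  obtain ⟨v, hvnl, hsink | hsource⟩ := hbad
  · -- sink case; v must be b
    have hvb : v = b := by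
      by_contra hvb
      apply (hst.2 v hvnl).1
      intro u hu
      rcases Finset.mem_insert.mp (hsink u hu) with he | he
      · rw [Prod.mk.injEq] at he
        exact absurd he.2 hvb
      · exact he
    have hvb' : b = v := hvb.symm
    subst hvb'
    obtain ⟨hb1, hb2⟩ := internal_of_not_leaf hm hvnl
    rw [pathG_adj] at hab
    -- pick the neighbor of b other than a
    rcases hab with hab | hab
    · -- a is the left neighbor; take c = b+1
      refine Or.inl ⟨⟨b.val + 1, hb2⟩, ?_, ?_, ?_⟩
      · intro hca; rw [Fin.ext_iff] at hca; simp at hca; omega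
      · rw [pathG_adj]; right; simp
      · have hadj : (PathG m).Adj (⟨b.val + 1, hb2⟩ : Fin m) b := by
          rw [pathG_adj]; right; simp
        rcases Finset.mem_insert.mp (hsink _ hadj) with he | he
        · exfalso
          have := congrArg Prod.fst he
          rw [Fin.ext_iff] at this; simp at this; omega
        · exact he
    · -- a is the right neighbor; take c = b-1
      refine Or.inl ⟨⟨b.val - 1, by omega⟩, ?_, ?_, ?_⟩
      · intro hca; rw [Fin.ext_iff] at hca; simp at hca; omega
      · rw [pathG_adj]; left; simp; omega
      · have hadj : (PathG m).Adj (⟨b.val - 1, by omega⟩ : Fin m) b := by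
          rw [pathG_adj]; left; simp; omega
        rcases Finset.mem_insert.mp (hsink _ hadj) with he | he
        · exfalso
          have := congrArg Prod.fst he
          rw [Fin.ext_iff] at this; simp at this; omega
        · exact he
  · -- source case; v must be a
    have hva : v = a := by
      by_contra hva
      apply (hst.2 v hvnl).2
      intro w hw
      rcases Finset.mem_insert.mp (hsource w hw) with he | he
      · rw [Prod.mk.injEq] at he
        exact absurd he.1 hva
      · exact he
    have hva' : a = v := hva.symm
    subst hva'
    obtain ⟨ha1, ha2⟩ := internal_of_not_leaf hm hvnl
    rw [pathG_adj] at hab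
    rcases hab with hab | hab
    · -- b is the right neighbor of a; take c = a-1
      refine Or.inr ⟨⟨a.val - 1, by omega⟩, ?_, ?_, ?_⟩
      · intro hca; rw [Fin.ext_iff] at hca; simp at hca; omega
      · rw [pathG_adj]; right; simp; omega
      · have hadj : (PathG m).Adj a (⟨a.val - 1, by omega⟩ : Fin m) := by
          rw [pathG_adj]; right; simp; omega
        rcases Finset.mem_insert.mp (hsource _ hadj) with he | he
        · exfalso
          have := congrArg Prod.snd he
          rw [Fin.ext_iff] at this; simp at this; omega
        · exact he
    · -- b is the left neighbor of a; take c = a+1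
      refine Or.inr ⟨⟨a.val + 1, ha2⟩, ?_, ?_, ?_⟩
      · intro hca; rw [Fin.ext_iff] at hca; simp at hca; omega
      · rw [pathG_adj]; left; simp
      · have hadj : (PathG m).Adj a (⟨a.val + 1, ha2⟩ : Fin m) := by
          rw [pathG_adj]; left; simp
        rcases Finset.mem_insert.mp (hsource _ hadj) with he | he
        · exfalso
          have := congrArg Prod.snd he
          rw [Fin.ext_iff] at this; simp at this; omega
        · exact he

end FlowCrashAux
namespace FlowCrashAux

/-- At a terminal state, an unmarked internal edge has oppositely-marked neighbors. -/
lemma terminal_flip {m : ℕ} {X : Finset (Fin m × Fin m)}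
    (hT : Terminal (PathG m) X) {i : ℕ} (h1 : 1 ≤ i) (h2 : i + 2 < m)
    (hz : dirZ m X i = 0) :
    dirZ m X (i - 1) = - dirZ m X (i + 1) ∧ dirZ m X (i + 1) ≠ 0 := by
  have hm : 2 ≤ m := by omega
  have hi1 : i + 1 < m := by omega
  have hi2 : i + 1 + 1 < m := by omega
  have hi0 : i - 1 + 1 < m := by omega
  obtain ⟨hnp, hnp'⟩ := (dirZ_eq_zero_iff X hi1).mp hz
  have hadj : (PathG m).Adj (⟨i, Nat.lt_of_succ_lt hi1⟩ : Fin m) ⟨i + 1, hi1⟩ := by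
    rw [pathG_adj]; left; simp
  -- inserting (i, i+1) fails
  have hA : dirZ m X (i + 1) = -1 ∨ dirZ m X (i - 1) = -1 := by
    rcases insert_bad hm hT hadj hnp hnp' with ⟨c, hc1, hc2, hc3⟩ | ⟨c, hc1, hc2, hc3⟩
    · left
      rcases neighbor_cases hc2 with hc | hc
      · exfalso; apply hc1; apply Fin.ext; simp only [Fin.val_mk] at hc ⊢; omega
      · have hce : c = (⟨i + 1 + 1, hi2⟩ : Fin m) := by
          apply Fin.ext; simp only [Fin.val_mk] at hc ⊢; omega
        rw [hce] at hc3
        exact (dirZ_eq_neg_one_iff hT.1.1 hi2).mpr hc3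
    · right
      rcases neighbor_cases hc2.symm with hc | hc
      · -- c is the left neighbor i-1
        have hce : c = (⟨i - 1, Nat.lt_of_succ_lt hi0⟩ : Fin m) := by
          apply Fin.ext; simp only [Fin.val_mk] at hc ⊢; omega
        rw [hce] at hc3
        have hmm : ((⟨i - 1 + 1, hi0⟩ : Fin m), (⟨i - 1, Nat.lt_of_succ_lt hi0⟩ : Fin m)) ∈ X := by
          have he : ((⟨i - 1 + 1, hi0⟩ : Fin m) : Fin m)
              = (⟨i, Nat.lt_of_succ_lt hi1⟩ : Fin m) := Fin.ext (by simp only [Fin.val_mk]; omega)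
          rw [he]; exact hc3
        exact (dirZ_eq_neg_one_iff hT.1.1 hi0).mpr hmm
      · exfalso; apply hc1; apply Fin.ext; simp only [Fin.val_mk] at hc ⊢; omega
  -- inserting (i+1, i) fails
  have hadj' : (PathG m).Adj (⟨i + 1, hi1⟩ : Fin m) ⟨i, Nat.lt_of_succ_lt hi1⟩ := by
    rw [pathG_adj]; right; simp
  have hB : dirZ m X (i - 1) = 1 ∨ dirZ m X (i + 1) = 1 := by
    rcases insert_bad hm hT hadj' hnp' hnp with ⟨c, hc1, hc2, hc3⟩ | ⟨c, hc1, hc2, hc3⟩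
    · left
      rcases neighbor_cases hc2 with hc | hc
      · have hce : c = (⟨i - 1, Nat.lt_of_succ_lt hi0⟩ : Fin m) := by
          apply Fin.ext; simp only [Fin.val_mk] at hc ⊢; omega
        rw [hce] at hc3
        have hmm : ((⟨i - 1, Nat.lt_of_succ_lt hi0⟩ : Fin m), (⟨i - 1 + 1, hi0⟩ : Fin m)) ∈ X := by
          have he : ((⟨i - 1 + 1, hi0⟩ : Fin m) : Fin m)
              = (⟨i, Nat.lt_of_succ_lt hi1⟩ : Fin m) := Fin.ext (by simp only [Fin.val_mk]; omega)
          rw [he]; exact hc3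
        exact (dirZ_eq_one_iff X hi0).mpr hmm
      · exfalso; apply hc1; apply Fin.ext; simp only [Fin.val_mk] at hc ⊢; omega
    · right
      rcases neighbor_cases hc2.symm with hc | hc
      · exfalso; apply hc1; apply Fin.ext; simp only [Fin.val_mk] at hc ⊢; omega
      · have hce : c = (⟨i + 1 + 1, hi2⟩ : Fin m) := by
          apply Fin.ext; simp only [Fin.val_mk] at hc ⊢; omega
        rw [hce] at hc3
        exact (dirZ_eq_one_iff X hi2).mpr hc3
  rcases dirZ_trichotomy X (i - 1) with e | e | e <;>
    rcases dirZ_trichotomy X (i + 1) with e' | e' | e' <;> omega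

/-- Number of unmarked edges among the first `i` edges. -/
def zcnt (m : ℕ) (X : Finset (Fin m × Fin m)) (i : ℕ) : ℕ :=
  ((Finset.range i).filter fun j => dirZ m X j = 0).card

lemma zcnt_succ (m : ℕ) (X : Finset (Fin m × Fin m)) (i : ℕ) :
    zcnt m X (i + 1) = zcnt m X i + if dirZ m X i = 0 then 1 else 0 := by
  unfold zcnt
  rw [Finset.range_add_one, Finset.filter_insert]
  split_ifs with h
  · rw [Finset.card_insert_of_notMem (by simp)]
  · simp

lemma dir_prop {m : ℕ} {X : Finset (Fin m × Fin m)} (hm : 2 ≤ m)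
    (hT : Terminal (PathG m) X) (h0 : dirZ m X 0 ≠ 0) :
    ∀ i, i + 1 < m → dirZ m X i ≠ 0 →
      dirZ m X i = dirZ m X 0 * (-1) ^ (zcnt m X i) := by
  intro i
  induction i using Nat.strong_induction_on with
  | _ i ih =>
    intro hlt hne
    match i with
    | 0 => simp [zcnt]
    | (k + 1) =>
      by_cases hk : dirZ m X k = 0
      · -- zero at k; flip
        have hk1 : 1 ≤ k := by
          rcases Nat.eq_zero_or_pos k with rfl | h
          · exact absurd hk h0
          · exact h
        obtain ⟨j, rfl⟩ : ∃ j, k = j + 1 := ⟨k - 1, by omega⟩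
        obtain ⟨hflip, hne'⟩ := terminal_flip hT hk1 (by omega) hk
        have hjz : dirZ m X j ≠ 0 := by
          simp only [Nat.add_sub_cancel] at hflip
          omega
        have ihj := ih j (by omega) (by omega) hjz
        simp only [Nat.add_sub_cancel] at hflip
        have hz1 : zcnt m X (j + 1) = zcnt m X j := by
          rw [zcnt_succ, if_neg hjz]; omega
        have hz2 : zcnt m X (j + 1 + 1) = zcnt m X (j + 1) + 1 := by
          rw [zcnt_succ, if_pos hk]
        rw [hz2, hz1, pow_succ]
        rw [ihj] at hflip
        linear_combination hflip
      · -- both k and k+1 marked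
        have heq := state_adj_eq hT.1 (by omega) hk hne
        have ihk := ih k (by omega) (by omega) hk
        have hz : zcnt m X (k + 1) = zcnt m X k := by
          rw [zcnt_succ, if_neg hk]; omega
        rw [hz, ← heq, ihk]

lemma terminal_count {m : ℕ} (hm : 3 ≤ m) {X : Finset (Fin m × Fin m)}
    (hT : Terminal (PathG m) X) (h0 : dirZ m X 0 ≠ 0) (hl : dirZ m X (m - 2) ≠ 0) :
    X.card + zcnt m X (m - 1) = m - 1 ∧
    dirZ m X (m - 2) = dirZ m X 0 * (-1) ^ (zcnt m X (m - 1)) := by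
  constructor
  · have hcard := card_eq hT.1.1
    have hsplit := Finset.card_filter_add_card_filter_not
      (s := Finset.range (m - 1)) (p := fun i => dirZ m X i = 0)
    unfold zcnt
    rw [Finset.card_range] at hsplit
    have : ((Finset.range (m - 1)).filter fun i => ¬ dirZ m X i = 0).card
        = ((Finset.range (m - 1)).filter fun i => dirZ m X i ≠ 0).card := rfl
    omega
  · have hz : zcnt m X (m - 1) = zcnt m X (m - 2) := by
      have he : m - 1 = (m - 2) + 1 := by omega
      rw [he, zcnt_succ, if_neg hl]; omega
    rw [hz]
    exact dir_prop (by omega) hT h0 (m - 2) (by omega) hl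

end FlowCrashAux
namespace FlowCrashAux

lemma follower_subset {V : Type*} [DecidableEq V] {G : SimpleGraph V}
    {X X' : Finset (V × V)} (h : Follower G X X') : X ⊆ X' := by
  obtain ⟨-, -, p, -, rfl⟩ := h
  exact Finset.subset_insert _ _

lemma transGen_subset {V : Type*} [DecidableEq V] {G : SimpleGraph V}
    {X X' : Finset (V × V)} (h : Relation.TransGen (Follower G) X X') : X ⊆ X' := by
  induction h with
  | single h => exact follower_subset h
  | tail _ h2 ih => exact ih.trans (follower_subset h2)

lemma isState_flow (n : ℕ) : IsState (PathG (n + 3)) (flowState n) := by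
  refine ⟨⟨?_, ?_⟩, ?_⟩
  · intro p hp
    simp only [flowState, Finset.mem_insert, Finset.mem_singleton] at hp
    rcases hp with rfl | rfl
    · rw [pathG_adj]; left; simp
    · rw [pathG_adj]; left; simp
  · intro p hp
    simp only [flowState, Finset.mem_insert, Finset.mem_singleton] at hp
    rcases hp with rfl | rfl <;>
      · intro hsw
        simp only [Prod.swap_prod_mk, flowState, Finset.mem_insert, Finset.mem_singleton,
          Prod.mk.injEq, Fin.mk.injEq] at hsw
        omega
  · intro v hnl
    obtain ⟨h1, h2⟩ := internal_of_not_leaf (by omega) hnl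
    constructor
    · intro hsink
      have ha := hsink ⟨v.val - 1, by omega⟩
        (by rw [pathG_adj]; left; simp only [Fin.val_mk]; try omega)
      have hb := hsink ⟨v.val + 1, by omega⟩
        (by rw [pathG_adj]; right; simp only [Fin.val_mk]; try omega)
      simp only [flowState, Finset.mem_insert, Finset.mem_singleton, Prod.mk.injEq,
        Fin.ext_iff, Fin.val_mk] at ha hb
      omega
    · intro hsource
      have ha := hsource ⟨v.val - 1, by omega⟩
        (by rw [pathG_adj]; right; simp only [Fin.val_mk]; try omega)
      have hb := hsource ⟨v.val + 1, by omega⟩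
        (by rw [pathG_adj]; left; simp only [Fin.val_mk]; try omega)
      simp only [flowState, Finset.mem_insert, Finset.mem_singleton, Prod.mk.injEq,
        Fin.ext_iff, Fin.val_mk] at ha hb
      omega

lemma isState_crash (n : ℕ) : IsState (PathG (n + 4)) (crashState (n + 1)) := by
  refine ⟨⟨?_, ?_⟩, ?_⟩
  · intro p hp
    simp only [crashState, Finset.mem_insert, Finset.mem_singleton] at hp
    rcases hp with rfl | rfl
    · rw [pathG_adj]; left; simp
    · rw [pathG_adj]; right; simp
  · intro p hp
    simp only [crashState, Finset.mem_insert, Finset.mem_singleton] at hp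
    rcases hp with rfl | rfl <;>
      · intro hsw
        simp only [Prod.swap_prod_mk, crashState, Finset.mem_insert, Finset.mem_singleton,
          Prod.mk.injEq, Fin.mk.injEq] at hsw
        omega
  · intro v hnl
    obtain ⟨h1, h2⟩ := internal_of_not_leaf (by omega) hnl
    constructor
    · intro hsink
      have ha := hsink ⟨v.val - 1, by omega⟩
        (by rw [pathG_adj]; left; simp only [Fin.val_mk]; try omega)
      have hb := hsink ⟨v.val + 1, by omega⟩
        (by rw [pathG_adj]; right; simp only [Fin.val_mk]; try omega)
      simp only [crashState, Finset.mem_insert, Finset.mem_singleton, Prod.mk.injEq,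
        Fin.ext_iff, Fin.val_mk] at ha hb
      omega
    · intro hsource
      have ha := hsource ⟨v.val - 1, by omega⟩
        (by rw [pathG_adj]; right; simp only [Fin.val_mk]; try omega)
      have hb := hsource ⟨v.val + 1, by omega⟩
        (by rw [pathG_adj]; left; simp only [Fin.val_mk]; try omega)
      simp only [crashState, Finset.mem_insert, Finset.mem_singleton, Prod.mk.injEq,
        Fin.ext_iff, Fin.val_mk] at ha hb
      omega

lemma card_flow (n : ℕ) : (flowState n).card = 2 := by
  rw [flowState]
  rw [Finset.card_insert_of_notMem]
  · simp
  · simp only [Finset.mem_singleton, Prod.mk.injEq, Fin.mk.injEq]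
    omega

lemma card_crash (n : ℕ) : (crashState (n + 1)).card = 2 := by
  rw [crashState]
  rw [Finset.card_insert_of_notMem]
  · simp
  · simp only [Finset.mem_singleton, Prod.mk.injEq, Fin.mk.injEq]
    omega

end FlowCrashAux
open FlowCrashAux in
/-- For every `n ≥ 0`, the `n`-flow `F_n` and the `(n+1)`-crash `C_{n+1}` are
`p(n)`-moves states. -/
theorem flow_crash_pMoves (n : ℕ) :
    PMovesState (PathG (n + 3)) (flowState n) n ∧
    PMovesState (PathG (n + 4)) (crashState (n + 1)) n := by
  constructor
  · refine ⟨isState_flow n, ?_⟩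
    intro X' htg hterm
    have hsub : flowState n ⊆ X' := transGen_subset htg
    have hdec := hterm.1.1
    have hmem1 : ((⟨0, by omega⟩ : Fin (n + 3)), (⟨1, by omega⟩ : Fin (n + 3))) ∈ X' :=
      hsub (Finset.mem_insert_self _ _)
    have hmem2 : ((⟨n + 1, by omega⟩ : Fin (n + 3)), (⟨n + 2, by omega⟩ : Fin (n + 3))) ∈ X' :=
      hsub (Finset.mem_insert_of_mem (Finset.mem_singleton_self _))
    have hd0 : dirZ (n + 3) X' 0 = 1 := (dirZ_eq_one_iff X' (by omega)).mpr hmem1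
    have hdl : dirZ (n + 3) X' (n + 1) = 1 := (dirZ_eq_one_iff X' (by omega)).mpr hmem2
    have e2 : n + 3 - 2 = n + 1 := by omega
    obtain ⟨hcard, hpar⟩ := terminal_count (by omega) hterm (by omega)
      (by rw [e2]; omega)
    rw [e2, hd0, hdl, one_mul] at hpar
    have heven : Even (zcnt (n + 3) X' (n + 3 - 1)) := by
      rcases Nat.even_or_odd (zcnt (n + 3) X' (n + 3 - 1)) with h | h
      · exact h
      · rw [h.neg_one_pow] at hpar; norm_num at hpar
    obtain ⟨k, hk⟩ := heven
    have hcard2 : 2 ≤ X'.card := by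
      have := Finset.card_le_card hsub
      rwa [card_flow] at this
    have hsd : (X' \ flowState n).card = X'.card - (flowState n).card :=
      Finset.card_sdiff_of_subset hsub
    rw [card_flow] at hsd
    omega
  · refine ⟨isState_crash n, ?_⟩
    intro X' htg hterm
    have hsub : crashState (n + 1) ⊆ X' := transGen_subset htg
    have hdec := hterm.1.1
    have hmem1 : ((⟨0, by omega⟩ : Fin (n + 4)), (⟨1, by omega⟩ : Fin (n + 4))) ∈ X' :=
      hsub (Finset.mem_insert_self _ _)
    have hmem2 : ((⟨n + 3, by omega⟩ : Fin (n + 4)), (⟨n + 2, by omega⟩ : Fin (n + 4))) ∈ X' :=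
      hsub (Finset.mem_insert_of_mem (Finset.mem_singleton_self _))
    have hd0 : dirZ (n + 4) X' 0 = 1 := (dirZ_eq_one_iff X' (by omega)).mpr hmem1
    have hdl : dirZ (n + 4) X' (n + 2) = -1 := (dirZ_eq_neg_one_iff hdec (by omega)).mpr hmem2
    have e2 : n + 4 - 2 = n + 2 := by omega
    obtain ⟨hcard, hpar⟩ := terminal_count (by omega) hterm (by omega)
      (by rw [e2]; omega)
    rw [e2, hd0, hdl, one_mul] at hpar
    have hodd : Odd (zcnt (n + 4) X' (n + 4 - 1)) := by
      rcases Nat.even_or_odd (zcnt (n + 4) X' (n + 4 - 1)) with h | h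
      · rw [h.neg_one_pow] at hpar; norm_num at hpar
      · exact h
    obtain ⟨k, hk⟩ := hodd
    have hcard2 : 2 ≤ X'.card := by
      have := Finset.card_le_card hsub
      rwa [card_crash] at this
    have hsd : (X' \ crashState (n + 1)).card = X'.card - (crashState (n + 1)).card :=
      Finset.card_sdiff_of_subset hsub
    rw [card_crash] at hsd
    omega
end
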